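/- arXiv:2304.02807 — 6 statements merged into one kernel-verified Lean document; each statement's English description precedes it below -/
import Mathlib

section
/- Let m ≥ 2, let p₀ ∈ Sᵐ, and let H : Sᵐ → ℝ be a twice continuously differentiable Morse function (i.e. at every critical point of H the Hessian of H computed in a chart is invertible) which attains its global minimum at p₀. Set a := H ∘ π_{p₀}⁻¹ : ℝᵐ → ℝ. Then there exists R₀ > 0 such that ∇a(x)·x < 0 for all x ∈ ℝᵐ with |x| ≥ R₀, and moreover ∫_{B_R} ∇a(x)·x dx < 0 for every R > R₀. -/
set_option maxHeartbeats 2000000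

open Metric Module MeasureTheory Asymptotics
open scoped Manifold RealInnerProductSpace

section AuxLemmas

lemma key_estimate {E : Type*} [NormedAddCommGroup E] [InnerProductSpace ℝ E]
    [FiniteDimensional ℝ E] [Nontrivial E]
    (b : E → ℝ) (hb : ContDiff ℝ 2 b) (hbmin : ∀ y, b 0 ≤ b y)
    (hbij : Function.Bijective (fderiv ℝ (fderiv ℝ b) 0)) :
    ∃ δ > (0:ℝ), ∃ c > (0:ℝ), ∀ y : E, ‖y‖ ≤ δ → c * ‖y‖ ^ 2 ≤ fderiv ℝ b y y := by
  set Q := fderiv ℝ (fderiv ℝ b) 0 with hQdef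
  have hdiff : Differentiable ℝ b := hb.differentiable (by norm_num)
  have hfd : ∀ y, HasFDerivAt b (fderiv ℝ b y) y := fun y => (hdiff y).hasFDerivAt
  have hd1 : ContDiff ℝ 1 (fderiv ℝ b) := hb.fderiv_right (by norm_num)
  have hQ : HasFDerivAt (fderiv ℝ b) Q 0 := ((hd1.differentiable one_ne_zero) 0).hasFDerivAt
  have hsymm : ∀ v w, Q v w = Q w v := second_derivative_symmetric hfd hQ
  have hf0 : fderiv ℝ b 0 = 0 := IsLocalMin.fderiv_eq_zero (Filter.Eventually.of_forall hbmin)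
  have hlo : (fun y => fderiv ℝ b y - Q y) =o[nhds (0:E)] fun y => y := by
    have := hQ.isLittleO
    simpa [hf0] using this
  have hsmall : ∀ ε : ℝ, 0 < ε → ∃ δ > (0:ℝ), ∀ y : E, ‖y‖ ≤ δ →
      ‖fderiv ℝ b y - Q y‖ ≤ ε * ‖y‖ := by
    intro ε hε
    have h2 := (isLittleO_iff.mp hlo) hε
    rcases Metric.eventually_nhds_iff.mp h2 with ⟨δ, hδ, hball⟩
    exact ⟨δ/2, by linarith, fun y hy => hball (by rw [dist_zero_right]; linarith)⟩
  have hPSD : ∀ v : E, 0 ≤ Q v v := by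
    intro v
    rcases eq_or_ne v 0 with rfl | hv
    · simp
    by_contra hneg
    push_neg at hneg
    set μ : ℝ := -(Q v v) with hμ
    have hμpos : 0 < μ := by simp only [hμ]; linarith
    have hvpos : (0:ℝ) < ‖v‖ := norm_pos_iff.mpr hv
    obtain ⟨δ, hδ, hsm⟩ := hsmall (μ / (2 * ‖v‖ ^ 2)) (by positivity)
    set φ : ℝ → ℝ := fun t => b (t • v) with hφ
    have hφd : ∀ t : ℝ, HasDerivAt φ (fderiv ℝ b (t • v) v) t := by
      intro t
      have h1 : HasDerivAt (fun t : ℝ => t • v) v t := by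
        simpa using (hasDerivAt_id t).smul_const v
      exact (hfd (t • v)).comp_hasDerivAt t h1
    set T : ℝ := δ / ‖v‖ with hT
    have hTpos : 0 < T := by positivity
    have hanti : StrictAntiOn φ (Set.Icc 0 T) := by
      apply strictAntiOn_of_deriv_neg (convex_Icc 0 T)
      · exact (hb.continuous.comp (by fun_prop)).continuousOn
      · intro t ht
        rw [interior_Icc] at ht
        rw [(hφd t).deriv]
        have htv : ‖t • v‖ ≤ δ := by
          rw [norm_smul, Real.norm_eq_abs, abs_of_pos ht.1]
          have : t * ‖v‖ ≤ T * ‖v‖ := by nlinarith [ht.2.le]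
          calc t * ‖v‖ ≤ T * ‖v‖ := this
            _ = δ := by rw [hT]; field_simp
        have h1 := hsm (t • v) htv
        have h2 : |(fderiv ℝ b (t • v) - Q (t • v)) v| ≤ (μ / (2 * ‖v‖ ^ 2)) * ‖t • v‖ * ‖v‖ := by
          calc |(fderiv ℝ b (t • v) - Q (t • v)) v| ≤ ‖fderiv ℝ b (t • v) - Q (t • v)‖ * ‖v‖ := by
                simpa [Real.norm_eq_abs] using (fderiv ℝ b (t • v) - Q (t • v)).le_opNorm v
            _ ≤ (μ / (2 * ‖v‖ ^ 2)) * ‖t • v‖ * ‖v‖ := by nlinarith [norm_nonneg v]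
        have hQt : Q (t • v) v = t * (Q v v) := by
          rw [ContinuousLinearMap.map_smul]; simp
        have hsplit : fderiv ℝ b (t • v) v = Q (t • v) v + (fderiv ℝ b (t • v) - Q (t • v)) v := by
          simp
        have hnorm_tv : ‖t • v‖ = t * ‖v‖ := by
          rw [norm_smul, Real.norm_eq_abs, abs_of_pos ht.1]
        rw [hsplit, hQt]
        rw [hnorm_tv] at h2
        rcases abs_le.mp h2 with ⟨_, h2b⟩
        have hQvv : Q v v = -μ := by simp [hμ]
        rw [hQvv]
        have hv2 : (μ / (2 * ‖v‖ ^ 2)) * (t * ‖v‖) * ‖v‖ = t * μ / 2 := by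
          field_simp
        rw [hv2] at h2b
        nlinarith [ht.1]
    have hmem0 : (0:ℝ) ∈ Set.Icc (0:ℝ) T := by constructor <;> [rfl; exact hTpos.le]
    have hmemT : T ∈ Set.Icc (0:ℝ) T := by constructor <;> [exact hTpos.le; rfl]
    have := hanti hmem0 hmemT hTpos
    have hφ0 : φ 0 = b 0 := by simp [hφ]
    rw [hφ0] at this
    exact absurd (hbmin (T • v)) (by simpa [hφ] using this.not_ge)
  have hPD : ∀ v : E, v ≠ 0 → 0 < Q v v := by
    intro v hv
    rcases (hPSD v).lt_or_eq with h | h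
    · exact h
    exfalso
    have hQv : Q v = 0 := by
      ext z
      have key : ∀ t : ℝ, 0 ≤ 2*t*(Q v z) + t^2 * (Q z z) := by
        intro t
        have h0 := hPSD (v + t • z)
        have hexp : Q (v + t • z) (v + t • z) = Q v v + 2*t*(Q v z) + t^2*(Q z z) := by
          have e1 : Q (v + t • z) = Q v + t • Q z := by
            rw [map_add, ContinuousLinearMap.map_smul]
          rw [e1]
          simp only [ContinuousLinearMap.add_apply, ContinuousLinearMap.smul_apply,
            map_add, ContinuousLinearMap.map_smul, ContinuousLinearMap.smul_apply,
            smul_eq_mul]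
          rw [hsymm z v]; ring
        rw [hexp, ← h] at h0
        linarith
      have hA : Q v z = 0 := by
        by_contra hA
        have hB : 0 ≤ Q z z := hPSD z
        have hBne : Q z z + 1 ≠ 0 := by positivity
        have hk := key (-(Q v z) / (Q z z + 1))
        have hA2 : 0 < (Q v z)^2 := by positivity
        have hk' : 0 ≤ (2 * (-(Q v z) / (Q z z + 1)) * (Q v z)
            + (-(Q v z) / (Q z z + 1))^2 * (Q z z)) * (Q z z + 1)^2 :=
          mul_nonneg hk (by positivity)
        have heq : (2 * (-(Q v z) / (Q z z + 1)) * (Q v z)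
            + (-(Q v z) / (Q z z + 1))^2 * (Q z z)) * (Q z z + 1)^2
            = -((Q v z)^2 * (Q z z + 2)) := by
          field_simp
          ring
        rw [heq] at hk'
        nlinarith [hA2, hB]
      simpa using hA
    exact hv (hbij.injective (by simpa using hQv))
  have hcont : Continuous fun y : E => Q y y := Q.continuous.clm_apply continuous_id
  obtain ⟨y₀, hy₀mem, hy₀min⟩ := (isCompact_sphere (0:E) 1).exists_isMinOn
    (NormedSpace.sphere_nonempty.mpr zero_le_one) hcont.continuousOn
  have hy₀ : y₀ ≠ 0 := by
    intro h0
    rw [mem_sphere_iff_norm, h0] at hy₀mem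
    simp at hy₀mem
  set c₀ : ℝ := Q y₀ y₀ with hc₀def
  have hc₀ : 0 < c₀ := hPD y₀ hy₀
  have hlower : ∀ y : E, c₀ * ‖y‖^2 ≤ Q y y := by
    intro y
    rcases eq_or_ne y 0 with rfl | hy
    · simp
    have hyn : (0:ℝ) < ‖y‖ := norm_pos_iff.mpr hy
    have hu : (‖y‖⁻¹ • y) ∈ sphere (0:E) 1 := by
      simp [norm_smul, abs_of_pos (inv_pos.mpr hyn), inv_mul_cancel₀ hyn.ne']
    have hmin' := hy₀min hu
    have hQu : Q (‖y‖⁻¹ • y) (‖y‖⁻¹ • y) = ‖y‖⁻¹ * ‖y‖⁻¹ * (Q y y) := by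
      rw [ContinuousLinearMap.map_smul]
      simp [mul_assoc]
    simp only [Set.mem_setOf_eq] at hmin'
    rw [hQu] at hmin'
    have h2 : c₀ * ‖y‖^2 ≤ (‖y‖⁻¹ * ‖y‖⁻¹ * Q y y) * ‖y‖^2 := by nlinarith [sq_nonneg ‖y‖]
    calc c₀ * ‖y‖^2 ≤ (‖y‖⁻¹ * ‖y‖⁻¹ * Q y y) * ‖y‖^2 := h2
      _ = Q y y := by rw [pow_two]; field_simp
  obtain ⟨δ, hδ, hsm⟩ := hsmall (c₀/2) (by positivity)
  refine ⟨δ, hδ, c₀/2, by positivity, fun y hy => ?_⟩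
  have h1 := hsm y hy
  have h2 : |(fderiv ℝ b y - Q y) y| ≤ (c₀/2) * ‖y‖^2 := by
    calc |(fderiv ℝ b y - Q y) y| ≤ ‖fderiv ℝ b y - Q y‖ * ‖y‖ := by
          simpa [Real.norm_eq_abs] using (fderiv ℝ b y - Q y).le_opNorm y
      _ ≤ (c₀/2) * ‖y‖^2 := by nlinarith [norm_nonneg y]
  have h3 : fderiv ℝ b y y = Q y y + (fderiv ℝ b y - Q y) y := by simp
  rcases abs_le.mp h2 with ⟨h2a, _⟩
  have := hlower y
  rw [h3]
  linarith

section Sphere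
variable {m : ℕ} [Fact (finrank ℝ (EuclideanSpace ℝ (Fin (m + 1))) = m + 1)]

noncomputable def sphJ (p₀ : sphere (0 : EuclideanSpace ℝ (Fin (m+1))) 1) :
    EuclideanSpace ℝ (Fin m) ≃ₗᵢ[ℝ] EuclideanSpace ℝ (Fin m) :=
  ((OrthonormalBasis.fromOrthogonalSpanSingleton m
      (ne_zero_of_mem_unit_sphere p₀)).repr.symm.trans
    (LinearIsometryEquiv.ofEq _ _ (by
      rw [coe_neg_sphere]
      congr 1
      rw [show ({-(p₀ : EuclideanSpace ℝ (Fin (m+1)))} : Set _) = -{(p₀ : EuclideanSpace ℝ (Fin (m+1)))} from (Set.neg_singleton _).symm, Submodule.span_neg]))).trans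
    (OrthonormalBasis.fromOrthogonalSpanSingleton m (ne_zero_of_mem_unit_sphere (-p₀))).repr

lemma sphJ_coe (p₀ : sphere (0 : EuclideanSpace ℝ (Fin (m+1))) 1)
    (x : EuclideanSpace ℝ (Fin m)) :
    (((OrthonormalBasis.fromOrthogonalSpanSingleton m
        (ne_zero_of_mem_unit_sphere (-p₀))).repr.symm (sphJ p₀ x) :
        EuclideanSpace ℝ (Fin (m+1)))) =
      (((OrthonormalBasis.fromOrthogonalSpanSingleton m
        (ne_zero_of_mem_unit_sphere p₀)).repr.symm x : EuclideanSpace ℝ (Fin (m+1)))) := by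
  simp [sphJ, LinearIsometryEquiv.trans_apply]
  exact congrArg Subtype.val ((OrthonormalBasis.fromOrthogonalSpanSingleton m
    (ne_zero_of_mem_unit_sphere (-p₀))).repr.symm_apply_apply _)

lemma trans_symm_eq (p₀ : sphere (0 : EuclideanSpace ℝ (Fin (m+1))) 1)
    {x : EuclideanSpace ℝ (Fin m)} (hx : x ≠ 0) :
    (stereographic' m (-p₀)).symm ((4 / ‖x‖^2) • (sphJ p₀ x)) =
      (stereographic' m p₀).symm x := by
  have hr : (0:ℝ) < ‖x‖ := norm_pos_iff.mpr hx
  apply Subtype.ext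
  rw [stereographic'_symm_apply, stereographic'_symm_apply]
  dsimp only
  set U : (ℝ ∙ (p₀ : EuclideanSpace ℝ (Fin (m+1))))ᗮ ≃ₗᵢ[ℝ] EuclideanSpace ℝ (Fin m) :=
    (OrthonormalBasis.fromOrthogonalSpanSingleton m
      (ne_zero_of_mem_unit_sphere p₀)).repr with hU
  set V : (ℝ ∙ ((-p₀ : sphere (0 : EuclideanSpace ℝ (Fin (m+1))) 1) : EuclideanSpace ℝ (Fin (m+1))))ᗮ ≃ₗᵢ[ℝ] EuclideanSpace ℝ (Fin m) :=
    (OrthonormalBasis.fromOrthogonalSpanSingleton m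
      (ne_zero_of_mem_unit_sphere (-p₀))).repr with hV
  have hVsymm : (V.symm ((4 / ‖x‖^2) • (sphJ p₀ x)) : EuclideanSpace ℝ (Fin (m+1)))
      = (4 / ‖x‖^2) • (U.symm x : EuclideanSpace ℝ (Fin (m+1))) := by
    rw [LinearIsometryEquiv.map_smul]
    rw [Submodule.coe_smul]
    rw [sphJ_coe]
  have hnW : ‖(U.symm x : EuclideanSpace ℝ (Fin (m+1)))‖ = ‖x‖ := by
    rw [Submodule.norm_coe, LinearIsometryEquiv.norm_map]
  rw [hVsymm, coe_neg_sphere, hnW]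
  set W : EuclideanSpace ℝ (Fin (m+1)) := (U.symm x : EuclideanSpace ℝ (Fin (m+1)))
  have hsm : ‖(4 / ‖x‖^2) • W‖ = 4 / ‖x‖ := by
    rw [norm_smul, Real.norm_eq_abs, abs_of_pos (by positivity), hnW]
    field_simp
  rw [hsm]
  match_scalars
  · field_simp
    ring
  · field_simp
    ring

lemma trans_apply (p₀ : sphere (0 : EuclideanSpace ℝ (Fin (m+1))) 1)
    {x : EuclideanSpace ℝ (Fin m)} (hx : x ≠ 0) :
    (stereographic' m (-p₀)) ((stereographic' m p₀).symm x) = (4 / ‖x‖^2) • (sphJ p₀ x) := by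
  rw [← trans_symm_eq p₀ hx]
  exact (stereographic' m (-p₀)).right_inv (by simp)

end Sphere
end AuxLemmas

/-- If `H : Sᵐ → ℝ` is a `C²` Morse function (invertible chart Hessian at
every critical point) attaining its global minimum at `p₀`, and `a := H ∘ π_{p₀}⁻¹`, then
there is `R₀ > 0` with `∇a(x)·x < 0` for `|x| ≥ R₀` and `∫_{B_R} ∇a(x)·x dx < 0` for all
`R > R₀`. -/
theorem stmt1 (m : ℕ) (hm : 2 ≤ m)
    [Fact (finrank ℝ (EuclideanSpace ℝ (Fin (m + 1))) = m + 1)]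
    (p₀ : sphere (0 : EuclideanSpace ℝ (Fin (m + 1))) 1)
    (H : sphere (0 : EuclideanSpace ℝ (Fin (m + 1))) 1 → ℝ)
    (hH : ContMDiff (𝓡 m) 𝓘(ℝ) 2 H)
    (hMorse : ∀ p : sphere (0 : EuclideanSpace ℝ (Fin (m + 1))) 1,
      mfderiv (𝓡 m) 𝓘(ℝ) H p = 0 →
        Function.Bijective
          (fderiv ℝ (fderiv ℝ (H ∘ (chartAt (EuclideanSpace ℝ (Fin m)) p).symm))
            (chartAt (EuclideanSpace ℝ (Fin m)) p p)))
    (hmin : ∀ q, H p₀ ≤ H q)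
    (a : EuclideanSpace ℝ (Fin m) → ℝ)
    (ha : a = fun x => H ((stereographic' m p₀).symm x)) :
    ∃ R₀ > (0 : ℝ),
      (∀ x : EuclideanSpace ℝ (Fin m), R₀ ≤ ‖x‖ → ⟪gradient a x, x⟫ < 0) ∧
      ∀ R > R₀,
        (∫ x in Metric.ball (0 : EuclideanSpace ℝ (Fin m)) R, ⟪gradient a x, x⟫) < 0 := by
  subst ha
  set E := EuclideanSpace ℝ (Fin m) with hE
  haveI : Nontrivial E := nontrivial_of_finrank_pos (R := ℝ)
    (by rw [finrank_euclideanSpace_fin]; omega)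
  set ψ := stereographic' m (-p₀) with hψ
  set b : E → ℝ := fun y => H (ψ.symm y) with hb
  set a : E → ℝ := fun x => H ((stereographic' m p₀).symm x) with ha
  have hchart : chartAt (EuclideanSpace ℝ (Fin m)) p₀ = ψ := rfl
  have hψp₀ : ψ p₀ = 0 := by
    simp only [hψ, stereographic', OpenPartialHomeomorph.trans_apply,
      Homeomorph.toOpenPartialHomeomorph_apply, LinearIsometryEquiv.coe_toHomeomorph]
    rw [show (stereographic (norm_eq_of_mem_sphere (-p₀))) p₀ = 0 from stereographic_neg_apply p₀]
    simp
    exact (OrthonormalBasis.fromOrthogonalSpanSingleton m (ne_zero_of_mem_unit_sphere (-p₀))).repr.map_zero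
  have hsrc : p₀ ∈ ψ.source := by
    rw [hψ, stereographic'_source]
    simpa using ne_neg_of_mem_unit_sphere ℝ p₀
  have hψsymm0 : ψ.symm 0 = p₀ := by rw [← hψp₀]; exact ψ.left_inv hsrc
  -- smoothness of b and a
  have hbC : ContDiff ℝ 2 b := by
    have h1 : ContMDiffOn (𝓡 m) 𝓘(ℝ) 2 (H ∘ (chartAt (EuclideanSpace ℝ (Fin m)) p₀).symm)
        (chartAt (EuclideanSpace ℝ (Fin m)) p₀).target :=
      hH.comp_contMDiffOn contMDiffOn_chart_symm
    rw [hchart] at h1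
    rw [hψ, stereographic'_target] at h1
    rw [← contDiffOn_univ]
    exact contMDiffOn_iff_contDiffOn.mp h1
  have hneg2 : -(-p₀) = p₀ := neg_neg p₀
  have haC : ContDiff ℝ 2 a := by
    have hchart2 : chartAt (EuclideanSpace ℝ (Fin m)) (-p₀) = stereographic' m p₀ := by
      show stereographic' m (-(-p₀)) = stereographic' m p₀
      rw [hneg2]
    have h1 : ContMDiffOn (𝓡 m) 𝓘(ℝ) 2 (H ∘ (chartAt (EuclideanSpace ℝ (Fin m)) (-p₀)).symm)
        (chartAt (EuclideanSpace ℝ (Fin m)) (-p₀)).target :=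
      hH.comp_contMDiffOn contMDiffOn_chart_symm
    rw [hchart2, stereographic'_target] at h1
    rw [← contDiffOn_univ]
    exact contMDiffOn_iff_contDiffOn.mp h1
  -- minimum of b at 0
  have hbmin : ∀ y, b 0 ≤ b y := by
    intro y
    have : b 0 = H p₀ := by rw [hb]; simp only; rw [hψsymm0]
    rw [this]
    exact hmin _
  -- mfderiv H p₀ = 0
  have hHeq : H =ᶠ[nhds p₀] (b ∘ (chartAt (EuclideanSpace ℝ (Fin m)) p₀)) := by
    filter_upwards [(chartAt (EuclideanSpace ℝ (Fin m)) p₀).open_source.mem_nhds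
      (mem_chart_source _ p₀)] with q hq
    have : ψ.symm (ψ q) = q := ψ.left_inv (by rw [← hchart]; exact hq)
    simp only [Function.comp_apply, hchart, hb]
    rw [this]
  have hmf : mfderiv (𝓡 m) 𝓘(ℝ) H p₀ = 0 := by
    rw [hHeq.mfderiv_eq]
    have h1 : MDifferentiableAt (𝓡 m) (𝓡 m) (chartAt (EuclideanSpace ℝ (Fin m)) p₀) p₀ :=
      ((contMDiffOn_chart (n := 1)).contMDiffAt
        ((chartAt (EuclideanSpace ℝ (Fin m)) p₀).open_source.mem_nhds
          (mem_chart_source _ p₀))).mdifferentiableAt one_ne_zero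
    have h2 : MDifferentiableAt 𝓘(ℝ, EuclideanSpace ℝ (Fin m)) 𝓘(ℝ) b
        ((chartAt (EuclideanSpace ℝ (Fin m)) p₀) p₀) :=
      (hbC.contMDiff.mdifferentiableAt two_ne_zero)
    rw [mfderiv_comp p₀ h2 h1]
    have h3 : mfderiv 𝓘(ℝ, EuclideanSpace ℝ (Fin m)) 𝓘(ℝ) b
        ((chartAt (EuclideanSpace ℝ (Fin m)) p₀) p₀) = 0 := by
      rw [mfderiv_eq_fderiv]
      have : (chartAt (EuclideanSpace ℝ (Fin m)) p₀) p₀ = 0 := by rw [hchart, hψp₀]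
      rw [this]
      exact IsLocalMin.fderiv_eq_zero (Filter.Eventually.of_forall hbmin)
    rw [h3, ContinuousLinearMap.zero_comp]; rfl
  -- bijectivity of Hessian of b at 0
  have hQbij : Function.Bijective (fderiv ℝ (fderiv ℝ b) 0) := by
    have h := hMorse p₀ hmf
    have e : (H ∘ (chartAt (EuclideanSpace ℝ (Fin m)) p₀).symm) = b := rfl
    have e2 : (chartAt (EuclideanSpace ℝ (Fin m)) p₀) p₀ = 0 := by rw [hchart, hψp₀]
    rw [e, e2] at h
    exact h
  -- key estimate
  obtain ⟨δ, hδ, c, hc, hest⟩ := key_estimate b hbC hbmin hQbij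
  -- the transition map
  set T : E → E := fun x => (4 / ‖x‖^2) • (sphJ p₀ x) with hT
  have haT : ∀ x : E, x ≠ 0 → a x = b (T x) := by
    intro x hx
    rw [ha, hb]
    simp only
    rw [hψ, hT]
    rw [trans_symm_eq p₀ hx]
  have hTnorm : ∀ x : E, x ≠ 0 → ‖T x‖ = 4 / ‖x‖ := by
    intro x hx
    have hr : (0:ℝ) < ‖x‖ := norm_pos_iff.mpr hx
    rw [hT]
    simp only
    rw [norm_smul, Real.norm_eq_abs, abs_of_pos (by positivity),
      LinearIsometryEquiv.norm_map]
    field_simp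
  -- helper for gradient
  have hgrad : ∀ (g : E → ℝ) (x v : E), ⟪gradient g x, v⟫ = fderiv ℝ g x v := by
    intro g x v
    show ⟪(InnerProductSpace.toDual ℝ E).symm (fderiv ℝ g x), v⟫ = fderiv ℝ g x v
    exact InnerProductSpace.toDual_symm_apply
  -- derivative of T in the radial direction and the main pointwise formula
  have hmain : ∀ x : E, x ≠ 0 → ⟪gradient a x, x⟫ = -(fderiv ℝ b (T x) (T x)) := by
    intro x hx
    have hr : (0:ℝ) < ‖x‖ := norm_pos_iff.mpr hx
    set Lc : E →L[ℝ] E := ((sphJ p₀).toContinuousLinearEquiv :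
      E ≃L[ℝ] E).toContinuousLinearMap with hLc
    have hLcfun : (fun x' : E => (sphJ p₀) x') = ⇑Lc := rfl
    have hn : HasFDerivAt (fun x' : E => ‖x'‖^2) ((2:ℕ) • (innerSL ℝ x)) x := by
      simpa using (hasFDerivAt_id x).norm_sq
    have hinv : HasFDerivAt (fun x' : E => (‖x'‖^2)⁻¹)
        ((-(ContinuousLinearMap.mulLeftRight ℝ ℝ ((‖x‖^2)⁻¹) ((‖x‖^2)⁻¹))).comp ((2:ℕ) • (innerSL ℝ x))) x :=
      (hasFDerivAt_inv' (by positivity)).comp x hn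
    have hsc : HasFDerivAt (fun x' : E => 4 / ‖x'‖^2)
        ((4:ℝ) • ((-(ContinuousLinearMap.mulLeftRight ℝ ℝ ((‖x‖^2)⁻¹) ((‖x‖^2)⁻¹))).comp ((2:ℕ) • (innerSL ℝ x)))) x := by
      simpa [div_eq_mul_inv] using hinv.const_mul (4:ℝ)
    have hTd : HasFDerivAt T
        ((4 / ‖x‖^2) • Lc +
          ((4:ℝ) • ((-(ContinuousLinearMap.mulLeftRight ℝ ℝ ((‖x‖^2)⁻¹) ((‖x‖^2)⁻¹))).comp ((2:ℕ) • (innerSL ℝ x)))).smulRight (sphJ p₀ x)) x := by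
      rw [hT]
      exact hsc.smul (hLcfun ▸ Lc.hasFDerivAt)
    have hval : ((4 / ‖x‖^2) • Lc +
          ((4:ℝ) • ((-(ContinuousLinearMap.mulLeftRight ℝ ℝ ((‖x‖^2)⁻¹) ((‖x‖^2)⁻¹))).comp ((2:ℕ) • (innerSL ℝ x)))).smulRight (sphJ p₀ x)) x
        = -(T x) := by
      simp only [ContinuousLinearMap.add_apply, ContinuousLinearMap.coe_smul', Pi.smul_apply,
        ContinuousLinearMap.smulRight_apply, ContinuousLinearMap.smul_apply, innerSL_apply_apply,
        real_inner_self_eq_norm_sq, hT, nsmul_eq_mul]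
      have hLx : Lc x = (sphJ p₀) x := rfl
      rw [hLx]
      match_scalars
      field_simp
      simp [ContinuousLinearMap.mulLeftRight_apply, real_inner_self_eq_norm_sq]
      field_simp
      ring
    -- a = b ∘ T near x
    have hopen : IsOpen {x' : E | x' ≠ 0} := isOpen_ne
    have haTev : a =ᶠ[nhds x] (b ∘ T) := by
      filter_upwards [hopen.mem_nhds hx] with x' hx'
      exact haT x' hx'
    have hbd : HasFDerivAt b (fderiv ℝ b (T x)) (T x) :=
      (hbC.differentiable (by norm_num) (T x)).hasFDerivAt
    have hcomp : HasFDerivAt (b ∘ T) ((fderiv ℝ b (T x)).comp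
        ((4 / ‖x‖^2) • Lc +
          ((4:ℝ) • ((-(ContinuousLinearMap.mulLeftRight ℝ ℝ ((‖x‖^2)⁻¹) ((‖x‖^2)⁻¹))).comp ((2:ℕ) • (innerSL ℝ x)))).smulRight (sphJ p₀ x))) x :=
      hbd.comp x hTd
    have hfa : HasFDerivAt a ((fderiv ℝ b (T x)).comp
        ((4 / ‖x‖^2) • Lc +
          ((4:ℝ) • ((-(ContinuousLinearMap.mulLeftRight ℝ ℝ ((‖x‖^2)⁻¹) ((‖x‖^2)⁻¹))).comp ((2:ℕ) • (innerSL ℝ x)))).smulRight (sphJ p₀ x))) x :=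
      hcomp.congr_of_eventuallyEq haTev
    rw [hgrad a x x, hfa.fderiv]
    rw [ContinuousLinearMap.comp_apply, hval]
    rw [map_neg]
  -- the radius R₁ and pointwise estimate
  set R₁ : ℝ := max 1 (4/δ) with hR₁
  have hR₁pos : (0:ℝ) < R₁ := lt_of_lt_of_le one_pos (le_max_left _ _)
  have hR₁1 : (1:ℝ) ≤ R₁ := le_max_left _ _
  have hpt : ∀ x : E, R₁ ≤ ‖x‖ → ⟪gradient a x, x⟫ ≤ -(16*c)/‖x‖^2 := by
    intro x hxR
    have hr : (0:ℝ) < ‖x‖ := lt_of_lt_of_le hR₁pos hxR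
    have hx : x ≠ 0 := norm_pos_iff.mp hr
    have hTn : ‖T x‖ = 4 / ‖x‖ := hTnorm x hx
    have hTδ : ‖T x‖ ≤ δ := by
      rw [hTn]
      rw [div_le_iff₀ hr]
      have h4δ : 4/δ ≤ ‖x‖ := le_trans (le_max_right _ _) hxR
      rw [div_le_iff₀ hδ] at h4δ
      linarith
    have h1 := hest (T x) hTδ
    rw [hmain x hx]
    have h2 : c * ‖T x‖^2 = 16*c/‖x‖^2 := by
      rw [hTn]
      field_simp
      ring
    rw [h2] at h1
    rw [neg_div]
    linarith
  -- the integrand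
  set f : E → ℝ := fun x => ⟪gradient a x, x⟫ with hf
  have hptf : ∀ x : E, R₁ ≤ ‖x‖ → f x ≤ -(16*c)/‖x‖^2 := hpt
  -- continuity & integrability
  have hgradcont : Continuous (gradient a) := by
    have h1' : ContDiff ℝ 1 (fderiv ℝ a) := haC.fderiv_right (m := 1) (by norm_num)
    have h1 : Continuous (fderiv ℝ a) := h1'.continuous
    have h2 : gradient a = fun x => (InnerProductSpace.toDual ℝ E).symm (fderiv ℝ a x) := rfl
    rw [h2]
    exact (InnerProductSpace.toDual ℝ E).symm.continuous.comp h1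
  have hfcont : Continuous f := hgradcont.inner continuous_id
  have hint : ∀ s : Set E, Bornology.IsBounded s → IntegrableOn f s := by
    intro s hs
    obtain ⟨r', hr'⟩ := hs.subset_closedBall 0
    exact ((hfcont.continuousOn).integrableOn_compact (isCompact_closedBall 0 r')).mono_set hr'
  -- volume facts
  set ι : ℝ := (volume (ball (0:E) 1)).toReal with hι
  have hιpos : 0 < ι :=
    ENNReal.toReal_pos (measure_ball_pos volume 0 one_pos).ne' measure_ball_lt_top.ne
  have hfinrank : finrank ℝ E = m := finrank_euclideanSpace_fin
  have hvol : ∀ S : ℝ, 0 ≤ S → (volume (ball (0:E) S)).toReal = S^m * ι := by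
    intro S hS
    rw [Measure.addHaar_ball volume 0 hS, hfinrank, ENNReal.toReal_mul,
      ENNReal.toReal_ofReal (by positivity)]
  have h2m : (4:ℝ) ≤ 2^m := by
    calc (4:ℝ) = 2^2 := by norm_num
      _ ≤ 2^m := pow_le_pow_right₀ (by norm_num) hm
  set C : ℝ := 4*c*(2^m - 1)*ι with hC
  have hCpos : 0 < C := by
    have : (0:ℝ) < 2^m - 1 := by linarith
    rw [hC]; positivity
  -- annulus estimate
  have hann : ∀ S : ℝ, R₁ ≤ S → ∫ x in ball (0:E) (2*S) \ ball (0:E) S, f x ≤ -C := by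
    intro S hS
    have hS1 : (1:ℝ) ≤ S := le_trans hR₁1 hS
    have hSpos : (0:ℝ) < S := by linarith
    set A := ball (0:E) (2*S) \ ball (0:E) S with hA
    have hAmeas : MeasurableSet A := measurableSet_ball.diff measurableSet_ball
    have hAbd : Bornology.IsBounded A := Metric.isBounded_ball.subset Set.diff_subset
    have hAvollt : volume A < ⊤ :=
      lt_of_le_of_lt (measure_mono Set.diff_subset) measure_ball_lt_top
    have hptA : ∀ x ∈ A, f x ≤ -(4*c/S^2) := by
      intro x hx
      have hxu : ‖x‖ < 2*S := by
        have := hx.1; rwa [mem_ball_zero_iff] at this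
      have hxl : S ≤ ‖x‖ := by
        have := hx.2
        simp only [mem_ball_zero_iff, not_lt] at this
        exact this
      have hxR : R₁ ≤ ‖x‖ := le_trans hS hxl
      have hr : (0:ℝ) < ‖x‖ := lt_of_lt_of_le hSpos hxl
      have h1 := hptf x hxR
      have h2 : -(16*c)/‖x‖^2 ≤ -(4*c/S^2) := by
        rw [neg_div, neg_le_neg_iff, div_le_div_iff₀ (by positivity) (by positivity)]
        have h9 : ‖x‖^2 ≤ 4*S^2 := by nlinarith [hr.le, hxu, hSpos]
        have h10 := mul_le_mul_of_nonneg_left h9 (le_of_lt hc)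
        linarith
      linarith
    have h1 : ∫ x in A, f x ≤ ∫ _x in A, (-(4*c/S^2)) :=
      setIntegral_mono_on (hint A hAbd) (integrableOn_const hAvollt.ne) hAmeas hptA
    have h2 : ∫ _x in A, (-(4*c/S^2)) = -(4*c/S^2) * (volume A).toReal := by
      rw [setIntegral_const, smul_eq_mul, mul_comm]; rfl
    have hsub : ball (0:E) S ⊆ ball (0:E) (2*S) := ball_subset_ball (by linarith)
    have hvolA : (volume A).toReal = (2^m - 1) * S^m * ι := by
      have h3 : volume A = volume (ball (0:E) (2*S)) - volume (ball (0:E) S) :=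
        measure_diff hsub measurableSet_ball.nullMeasurableSet measure_ball_lt_top.ne
      rw [hA] at h3 ⊢
      rw [h3, ENNReal.toReal_sub_of_le (measure_mono hsub) measure_ball_lt_top.ne,
        hvol _ (by linarith), hvol _ hSpos.le, mul_pow]
      ring
    have hSm : S^2 ≤ S^m := pow_le_pow_right₀ hS1 hm
    have hq : (1:ℝ) ≤ S^m / S^2 := (one_le_div (by positivity)).mpr hSm
    have h4 : -(4*c/S^2) * ((2^m - 1) * S^m * ι) = -(C * (S^m / S^2)) := by
      rw [hC]; field_simp
    have h5 : -(C * (S^m / S^2)) ≤ -C := by nlinarith [hCpos, hq]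
    calc ∫ x in A, f x ≤ -(4*c/S^2) * (volume A).toReal := by rw [← h2]; exact h1
      _ = -(C * (S^m / S^2)) := by rw [hvolA, h4]
      _ ≤ -C := h5
  -- iterate over dyadic balls
  set g : ℕ → ℝ := fun k => ∫ x in ball (0:E) (2^k * R₁), f x with hg
  have hstep : ∀ k : ℕ, g (k+1) ≤ g k - C := by
    intro k
    set S : ℝ := 2^k * R₁ with hSdef
    have h2k : (1:ℝ) ≤ 2^k := one_le_pow₀ (by norm_num)
    have hSR₁ : R₁ ≤ S := by rw [hSdef]; nlinarith
    have hSpos : (0:ℝ) < S := lt_of_lt_of_le hR₁pos hSR₁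
    have h2S : (2:ℝ)^(k+1) * R₁ = 2*S := by rw [hSdef, pow_succ]; ring
    have hsub : ball (0:E) S ⊆ ball (0:E) (2*S) := ball_subset_ball (by linarith)
    have hdiff : ∫ x in ball (0:E) (2*S) \ ball (0:E) S, f x
        = (∫ x in ball (0:E) (2*S), f x) - ∫ x in ball (0:E) S, f x :=
      integral_diff measurableSet_ball (hint _ Metric.isBounded_ball) hsub
    have h3 := hann S hSR₁
    rw [hdiff] at h3
    have hgs : g (k+1) = ∫ x in ball (0:E) (2*S), f x := by rw [hg]; simp only; rw [h2S]
    have hgk : g k = ∫ x in ball (0:E) S, f x := rfl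
    rw [hgs, hgk]
    linarith
  have hiter : ∀ k : ℕ, g k ≤ g 0 - k * C := by
    intro k
    induction k with
    | zero => simp
    | succ n ih =>
      have := hstep n
      push_cast
      push_cast at ih
      linarith
  obtain ⟨K, hK⟩ := exists_nat_gt (g 0 / C)
  have hgK : g K < 0 := by
    have h1 := hiter K
    rw [div_lt_iff₀ hCpos] at hK
    linarith
  set R₀ : ℝ := 2^K * R₁ with hR₀def
  have h2K : (1:ℝ) ≤ 2^K := one_le_pow₀ (by norm_num)
  have hR₀R₁ : R₁ ≤ R₀ := by rw [hR₀def]; nlinarith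
  have hR₀pos : (0:ℝ) < R₀ := lt_of_lt_of_le hR₁pos hR₀R₁
  refine ⟨R₀, hR₀pos, ?_, ?_⟩
  · intro x hx
    have h1 := hptf x (le_trans hR₀R₁ hx)
    have hr : (0:ℝ) < ‖x‖ := lt_of_lt_of_le hR₀pos hx
    have h2 : (0:ℝ) < (16*c)/‖x‖^2 := by positivity
    show f x < 0
    rw [neg_div] at h1
    linarith
  · intro R hRR₀
    have hsub : ball (0:E) R₀ ⊆ ball (0:E) R := ball_subset_ball hRR₀.le
    have hdiff : ∫ x in ball (0:E) R \ ball (0:E) R₀, f x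
        = (∫ x in ball (0:E) R, f x) - ∫ x in ball (0:E) R₀, f x :=
      integral_diff measurableSet_ball (hint _ Metric.isBounded_ball) hsub
    have hneg : ∫ x in ball (0:E) R \ ball (0:E) R₀, f x ≤ 0 := by
      apply setIntegral_nonpos (measurableSet_ball.diff measurableSet_ball)
      intro x hx
      have hx0 : R₀ ≤ ‖x‖ := by
        have := hx.2
        simp only [mem_ball_zero_iff, not_lt] at this
        exact this
      have hr : (0:ℝ) < ‖x‖ := lt_of_lt_of_le hR₀pos hx0
      have hfx := hptf x (le_trans hR₀R₁ hx0)
      have h2 : (0:ℝ) < (16*c)/‖x‖^2 := by positivity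
      rw [neg_div] at hfx
      linarith
    have hgKeq : g K = ∫ x in ball (0:E) R₀, f x := rfl
    show (∫ x in ball (0:E) R, f x) < 0
    rw [hgKeq] at hgK
    linarith
end

section
/- Let m ≥ 2 and let a : ℝᵐ → ℝ be bounded and continuously differentiable with |∇a(x)| ≤ C (1+|x|²)⁻¹ for some C > 0 and all x. Set C₁ := mᵐ ∫_{ℝᵐ} (1+|x|²)⁻ᵐ dx. Then for every ξ ∈ ℝᵐ: lim_{λ→0⁺} Ψ(λ,ξ) = C₁ a(ξ), lim_{λ→0⁺} ∂_λΨ(λ,ξ) = 0, and lim_{λ→0⁺} ∂_{ξᵢ}Ψ(λ,ξ) = C₁ ∂ᵢa(ξ) for each i. Consequently, the extension Ψ̃ of Ψ to ℝ × ℝᵐ defined by Ψ̃(λ,ξ) := Ψ(|λ|,ξ) for λ ≠ 0 and Ψ̃(0,ξ) := C₁ a(ξ) is continuously differentiable on ℝ × ℝᵐ, with ∂_λΨ̃(0,ξ) = 0 and ∂_{ξᵢ}Ψ̃(0,ξ) = C₁ ∂ᵢa(ξ). -/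
open MeasureTheory
open scoped RealInnerProductSpace Topology

/-- The function `Ψ(λ,ξ) := mᵐ ∫_{ℝᵐ} a(λx+ξ)/(1+|x|²)ᵐ dx`. -/
noncomputable def PsiFun (m : ℕ) (a : EuclideanSpace ℝ (Fin m) → ℝ)
    (l : ℝ) (ξ : EuclideanSpace ℝ (Fin m)) : ℝ :=
  (m : ℝ) ^ m * ∫ x : EuclideanSpace ℝ (Fin m), a (l • x + ξ) / (1 + ‖x‖ ^ 2) ^ m

/-- The extension `Ψ̃` of `Ψ` to `ℝ × ℝᵐ`, with `Ψ̃(0,ξ) = C₁ a(ξ)` and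
`Ψ̃(λ,ξ) = Ψ(|λ|,ξ)` for `λ ≠ 0`. -/
noncomputable def PsiTilde (m : ℕ) (a : EuclideanSpace ℝ (Fin m) → ℝ)
    (l : ℝ) (ξ : EuclideanSpace ℝ (Fin m)) : ℝ :=
  if l = 0 then
    ((m : ℝ) ^ m * ∫ x : EuclideanSpace ℝ (Fin m), (1 + ‖x‖ ^ 2)⁻¹ ^ m) * a ξ
  else PsiFun m a |l| ξ

open MeasureTheory Filter Metric
open scoped Topology

namespace Stmt3Aux

variable {m : ℕ}

local notation "E" => EuclideanSpace ℝ (Fin m)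

noncomputable def kf (m : ℕ) (x : EuclideanSpace ℝ (Fin m)) : ℝ := ((1:ℝ) + ‖x‖ ^ 2)⁻¹ ^ m

lemma kf_nonneg (x : E) : 0 ≤ kf m x := by unfold kf; positivity

lemma kf_neg (x : E) : kf m (-x) = kf m x := by simp [kf]

lemma kf_cont : Continuous (kf m) := by
  have h : Continuous fun x : E => (1:ℝ) + ‖x‖ ^ 2 := by continuity
  exact (h.inv₀ fun x => by positivity).pow m

lemma kf_eq_rpow (hm : 1 ≤ m) (x : E) : kf m x = ((1:ℝ) + ‖x‖ ^ 2) ^ (-(m:ℝ)) := by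
  have h : (0:ℝ) < 1 + ‖x‖ ^ 2 := by positivity
  rw [kf, Real.rpow_neg h.le, Real.rpow_natCast, inv_pow]

lemma kf_integrable (hm : 2 ≤ m) : Integrable (kf m) := by
  have h : Integrable (fun x : E => ((1:ℝ) + ‖x‖ ^ 2) ^ (-(2*m:ℝ)/2)) := by
    apply integrable_rpow_neg_one_add_norm_sq
    have : (2:ℝ) ≤ (m:ℝ) := by exact_mod_cast hm
    simp only [finrank_euclideanSpace, Fintype.card_fin]
    linarith
  refine h.congr (Eventually.of_forall fun x => ?_)
  rw [kf_eq_rpow (by omega)]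
  congr 1
  ring

lemma kf_bound (x : E) : (1 + ‖x‖) * kf m x ≤ 2 * ((1:ℝ) + ‖x‖ ^ 2) ^ (-(2*(m:ℝ)-1)/2) := by
  set s : ℝ := 1 + ‖x‖ ^ 2 with hs
  have hs0 : (0:ℝ) < s := by positivity
  have hs1 : (1:ℝ) ≤ s := by nlinarith [sq_nonneg ‖x‖]
  have h1 : kf m x = s ^ (-(m:ℝ)) := by
    rw [kf, Real.rpow_neg hs0.le, Real.rpow_natCast, inv_pow]
  have ha : (1:ℝ) ≤ s ^ ((1:ℝ)/2) := Real.one_le_rpow hs1 (by norm_num)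
  have hb : ‖x‖ ≤ s ^ ((1:ℝ)/2) := by
    rw [← Real.sqrt_eq_rpow]
    rw [show ‖x‖ = Real.sqrt (‖x‖ ^ 2) from (Real.sqrt_sq (norm_nonneg x)).symm]
    exact Real.sqrt_le_sqrt (by nlinarith)
  calc (1 + ‖x‖) * kf m x ≤ (2 * s ^ ((1:ℝ)/2)) * s ^ (-(m:ℝ)) := by
        rw [h1]
        exact mul_le_mul_of_nonneg_right (by linarith) (Real.rpow_nonneg hs0.le _)
    _ = 2 * s ^ ((1:ℝ)/2 + -(m:ℝ)) := by rw [mul_assoc, ← Real.rpow_add hs0]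
    _ = 2 * s ^ (-(2*(m:ℝ)-1)/2) := by ring_nf

lemma bound_integrable (hm : 2 ≤ m) (C : ℝ) (hC0 : 0 ≤ C) :
    Integrable (fun x : E => C * ((1 + ‖x‖) * kf m x)) := by
  have h : Integrable (fun x : E => ((1:ℝ) + ‖x‖ ^ 2) ^ (-(2*(m:ℝ)-1)/2)) := by
    apply integrable_rpow_neg_one_add_norm_sq
    have : (2:ℝ) ≤ (m:ℝ) := by exact_mod_cast hm
    simp only [finrank_euclideanSpace, Fintype.card_fin]
    linarith
  refine ((h.const_mul 2).const_mul C).mono' ?_ (Eventually.of_forall fun x => ?_)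
  · exact (Continuous.mul continuous_const ((continuous_const.add continuous_norm).mul
      kf_cont)).aestronglyMeasurable
  · have h1 : (0:ℝ) ≤ (1 + ‖x‖) * kf m x := by
      have := kf_nonneg (m := m) x
      have := norm_nonneg x
      positivity
    rw [Real.norm_eq_abs, abs_mul, abs_of_nonneg hC0, abs_of_nonneg h1]
    exact mul_le_mul_of_nonneg_left (kf_bound x) hC0



noncomputable def linX (m : ℕ) (x : EuclideanSpace ℝ (Fin m)) :
    (ℝ × EuclideanSpace ℝ (Fin m)) →L[ℝ] EuclideanSpace ℝ (Fin m) :=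
  (ContinuousLinearMap.fst ℝ ℝ (EuclideanSpace ℝ (Fin m))).smulRight x
    + ContinuousLinearMap.snd ℝ ℝ (EuclideanSpace ℝ (Fin m))

lemma linX_apply (x : E) (p : ℝ × E) : linX m x p = p.1 • x + p.2 := rfl

lemma norm_linX_le (x : E) : ‖linX m x‖ ≤ 1 + ‖x‖ := by
  refine ContinuousLinearMap.opNorm_le_bound _ (by positivity) fun p => ?_
  rw [linX_apply]
  calc ‖p.1 • x + p.2‖ ≤ ‖p.1 • x‖ + ‖p.2‖ := norm_add_le _ _
    _ = |p.1| * ‖x‖ + ‖p.2‖ := by rw [norm_smul, Real.norm_eq_abs]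
    _ ≤ ‖p‖ * ‖x‖ + ‖p‖ := by
        have h1 : |p.1| ≤ ‖p‖ := by rw [← Real.norm_eq_abs]; exact norm_fst_le p
        have h2 : ‖p.2‖ ≤ ‖p‖ := norm_snd_le p
        have h3 : (0:ℝ) ≤ ‖x‖ := norm_nonneg x
        nlinarith
    _ = (1 + ‖x‖) * ‖p‖ := by ring

lemma linX_cont : Continuous (fun x : E => linX m x) := by
  have h : Continuous fun x : E =>
      (ContinuousLinearMap.fst ℝ ℝ (EuclideanSpace ℝ (Fin m))).smulRight x := by
    exact (ContinuousLinearMap.smulRightL ℝ (ℝ × EuclideanSpace ℝ (Fin m))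
      (EuclideanSpace ℝ (Fin m)) (ContinuousLinearMap.fst ℝ ℝ _)).continuous
  exact h.add continuous_const

noncomputable def Lmap (m : ℕ) (a : EuclideanSpace ℝ (Fin m) → ℝ)
    (p : ℝ × EuclideanSpace ℝ (Fin m)) (x : EuclideanSpace ℝ (Fin m)) :
    (ℝ × EuclideanSpace ℝ (Fin m)) →L[ℝ] ℝ :=
  kf m x • ((fderiv ℝ a (p.1 • x + p.2)).comp (linX m x))

lemma Lmap_apply (a : E → ℝ) (p : ℝ × E) (x : E) (v : ℝ × E) :
    Lmap m a p x v = kf m x * fderiv ℝ a (p.1 • x + p.2) (v.1 • x + v.2) := rfl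

section main
variable {a : EuclideanSpace ℝ (Fin m) → ℝ} {C : ℝ}

lemma fderiv_norm_le (hgrad : ∀ x : E, ‖gradient a x‖ ≤ C * (1 + ‖x‖ ^ 2)⁻¹)
    (hC : 0 ≤ C) (y : E) : ‖fderiv ℝ a y‖ ≤ C := by
  have h : ‖fderiv ℝ a y‖ = ‖gradient a y‖ := by
    rw [gradient]
    exact (LinearIsometryEquiv.norm_map _ _).symm
  rw [h]
  refine (hgrad y).trans ?_
  have h1 : ((1:ℝ) + ‖y‖ ^ 2)⁻¹ ≤ 1 := by
    rw [inv_le_one_iff₀]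
    right
    nlinarith [sq_nonneg ‖y‖]
  calc C * (1 + ‖y‖ ^ 2)⁻¹ ≤ C * 1 := mul_le_mul_of_nonneg_left h1 hC
    _ = C := mul_one C

lemma norm_Lmap_le (hgrad : ∀ x : E, ‖gradient a x‖ ≤ C * (1 + ‖x‖ ^ 2)⁻¹)
    (hC : 0 ≤ C) (p : ℝ × E) (x : E) :
    ‖Lmap m a p x‖ ≤ C * ((1 + ‖x‖) * kf m x) := by
  rw [Lmap, norm_smul (kf m x) ((fderiv ℝ a (p.1 • x + p.2)).comp (linX m x)),
    Real.norm_eq_abs, abs_of_nonneg (kf_nonneg x)]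
  calc kf m x * ‖(fderiv ℝ a (p.1 • x + p.2)).comp (linX m x)‖
      ≤ kf m x * (‖fderiv ℝ a (p.1 • x + p.2)‖ * ‖linX m x‖) :=
        mul_le_mul_of_nonneg_left (ContinuousLinearMap.opNorm_comp_le _ _) (kf_nonneg x)
    _ ≤ kf m x * (C * (1 + ‖x‖)) := by
        refine mul_le_mul_of_nonneg_left ?_ (kf_nonneg x)
        exact mul_le_mul (fderiv_norm_le hgrad hC _) (norm_linX_le x)
          (norm_nonneg _) hC
    _ = C * ((1 + ‖x‖) * kf m x) := by ring

lemma hasFDerivAt_F (hC1 : ContDiff ℝ 1 a) (x : E) (p : ℝ × E) :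
    HasFDerivAt (fun q : ℝ × E => a (q.1 • x + q.2) * kf m x) (Lmap m a p x) p := by
  have h1 : HasFDerivAt (fun q : ℝ × E => q.1 • x + q.2) (linX m x) p := by
    exact (linX m x).hasFDerivAt
  have h2 : HasFDerivAt a (fderiv ℝ a (p.1 • x + p.2)) (p.1 • x + p.2) :=
    ((hC1.differentiable one_ne_zero) _).hasFDerivAt
  have h3 := (h2.comp p h1).mul_const (kf m x)
  exact h3

lemma Lmap_cont_x (hC1 : ContDiff ℝ 1 a) (p : ℝ × E) :
    Continuous (fun x : E => Lmap m a p x) := by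
  apply Continuous.smul kf_cont
  apply Continuous.clm_comp _ linX_cont
  exact (hC1.continuous_fderiv one_ne_zero).comp
    ((continuous_id.const_smul p.1).add continuous_const)

lemma Lmap_cont_p (hC1 : ContDiff ℝ 1 a) (x : E) :
    Continuous (fun p : ℝ × E => Lmap m a p x) := by
  apply Continuous.fun_const_smul
  apply Continuous.clm_comp _ continuous_const
  exact (hC1.continuous_fderiv one_ne_zero).comp ((linX m x).continuous)


noncomputable def Ifun (m : ℕ) (a : EuclideanSpace ℝ (Fin m) → ℝ)
    (p : ℝ × EuclideanSpace ℝ (Fin m)) : ℝ :=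
  ∫ x : EuclideanSpace ℝ (Fin m), a (p.1 • x + p.2) * kf m x

noncomputable def Ider (m : ℕ) (a : EuclideanSpace ℝ (Fin m) → ℝ)
    (p : ℝ × EuclideanSpace ℝ (Fin m)) : (ℝ × EuclideanSpace ℝ (Fin m)) →L[ℝ] ℝ :=
  ∫ x : EuclideanSpace ℝ (Fin m), Lmap m a p x

variable {M : ℝ}

lemma F_integrable (hm : 2 ≤ m) (hC1 : ContDiff ℝ 1 a) (hM : ∀ x, |a x| ≤ M) (p : ℝ × E) :
    Integrable (fun x : E => a (p.1 • x + p.2) * kf m x) := by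
  refine ((kf_integrable hm).const_mul M).mono' ?_ (Eventually.of_forall fun x => ?_)
  · exact ((hC1.continuous.comp ((continuous_id.const_smul p.1).add
      continuous_const)).mul kf_cont).aestronglyMeasurable
  · rw [Real.norm_eq_abs, abs_mul, abs_of_nonneg (kf_nonneg x)]
    exact mul_le_mul_of_nonneg_right (hM _) (kf_nonneg x)

lemma Lmap_integrable (hm : 2 ≤ m) (hC1 : ContDiff ℝ 1 a)
    (hgrad : ∀ x : E, ‖gradient a x‖ ≤ C * (1 + ‖x‖ ^ 2)⁻¹) (hC : 0 ≤ C) (p : ℝ × E) :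
    Integrable (fun x : E => Lmap m a p x) :=
  (bound_integrable hm C hC).mono' (Lmap_cont_x hC1 p).aestronglyMeasurable
    (Eventually.of_forall fun x => norm_Lmap_le hgrad hC p x)

lemma hasFDerivAt_Ifun (hm : 2 ≤ m) (hC1 : ContDiff ℝ 1 a)
    (hgrad : ∀ x : E, ‖gradient a x‖ ≤ C * (1 + ‖x‖ ^ 2)⁻¹) (hC : 0 ≤ C)
    (hM : ∀ x, |a x| ≤ M) (p : ℝ × E) :
    HasFDerivAt (Ifun m a) (Ider m a p) p := by
  apply hasFDerivAt_integral_of_dominated_of_fderiv_le (s := Metric.ball p 1) (Metric.ball_mem_nhds p one_pos)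
    (bound := fun x : E => C * ((1 + ‖x‖) * kf m x))
  · exact Eventually.of_forall fun q => ((hC1.continuous.comp ((continuous_id.const_smul q.1).add
      continuous_const)).mul kf_cont).aestronglyMeasurable
  · exact F_integrable hm hC1 hM p
  · exact (Lmap_cont_x hC1 p).aestronglyMeasurable
  · exact Eventually.of_forall fun x q _ => norm_Lmap_le hgrad hC q x
  · exact bound_integrable hm C hC
  · exact Eventually.of_forall fun x q _ => hasFDerivAt_F hC1 x q

lemma Ider_cont (hm : 2 ≤ m) (hC1 : ContDiff ℝ 1 a)
    (hgrad : ∀ x : E, ‖gradient a x‖ ≤ C * (1 + ‖x‖ ^ 2)⁻¹) (hC : 0 ≤ C) :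
    Continuous (Ider m a) :=
  continuous_of_dominated (fun p => (Lmap_cont_x hC1 p).aestronglyMeasurable)
    (fun p => Eventually.of_forall fun x => norm_Lmap_le hgrad hC p x)
    (bound_integrable hm C hC) (Eventually.of_forall fun x => Lmap_cont_p hC1 x)

lemma Ider_apply (hm : 2 ≤ m) (hC1 : ContDiff ℝ 1 a)
    (hgrad : ∀ x : E, ‖gradient a x‖ ≤ C * (1 + ‖x‖ ^ 2)⁻¹) (hC : 0 ≤ C)
    (p : ℝ × E) (v : ℝ × E) :
    Ider m a p v = ∫ x : E, kf m x * fderiv ℝ a (p.1 • x + p.2) (v.1 • x + v.2) := by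
  rw [Ider, ContinuousLinearMap.integral_apply (Lmap_integrable hm hC1 hgrad hC p) v]
  simp_rw [Lmap_apply]

lemma odd_zero (hC1 : ContDiff ℝ 1 a) (ξ : E) :
    ∫ x : E, kf m x * fderiv ℝ a ξ x = 0 := by
  have h := integral_neg_eq_self (fun x : E => kf m x * fderiv ℝ a ξ x) volume
  have h2 : ∀ x : E, kf m (-x) * fderiv ℝ a ξ (-x) = -(kf m x * fderiv ℝ a ξ x) := by
    intro x; rw [kf_neg, map_neg]; ring
  simp_rw [h2, integral_neg] at h
  linarith

lemma Ider_fst (hm : 2 ≤ m) (hC1 : ContDiff ℝ 1 a)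
    (hgrad : ∀ x : E, ‖gradient a x‖ ≤ C * (1 + ‖x‖ ^ 2)⁻¹) (hC : 0 ≤ C) (ξ : E) :
    Ider m a (0, ξ) ((1:ℝ), (0:E)) = 0 := by
  rw [Ider_apply hm hC1 hgrad hC]
  simp only [zero_smul, zero_add, one_smul, add_zero]
  exact odd_zero hC1 ξ

lemma Ider_snd (hm : 2 ≤ m) (hC1 : ContDiff ℝ 1 a)
    (hgrad : ∀ x : E, ‖gradient a x‖ ≤ C * (1 + ‖x‖ ^ 2)⁻¹) (hC : 0 ≤ C) (ξ : E) (w : E) :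
    Ider m a (0, ξ) ((0:ℝ), w) = (∫ x : E, kf m x) * fderiv ℝ a ξ w := by
  rw [Ider_apply hm hC1 hgrad hC]
  simp only [zero_smul, zero_add]
  exact integral_mul_const (fderiv ℝ a ξ w) (kf m)

lemma Ifun_zero (hm : 2 ≤ m) (ξ : E) :
    Ifun m a (0, ξ) = (∫ x : E, kf m x) * a ξ := by
  rw [Ifun]
  simp only [zero_smul, zero_add]
  rw [integral_const_mul (a ξ) (kf m)]; ring

lemma Ifun_even (l : ℝ) (ξ : E) : Ifun m a (-l, ξ) = Ifun m a (l, ξ) := by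
  rw [Ifun, Ifun]
  have h := integral_neg_eq_self (fun x : E => a (l • x + ξ) * kf m x) volume
  rw [← h]
  congr 1
  funext x
  rw [kf_neg]
  congr 2
  simp

end main

lemma psiFun_eq (a : E → ℝ) (l : ℝ) (ξ : E) :
    PsiFun m a l ξ = (m : ℝ) ^ m * Ifun m a (l, ξ) := by
  rw [PsiFun, Ifun]
  congr 1
  apply integral_congr_ae
  filter_upwards with x
  rw [kf, div_eq_mul_inv, inv_pow]

lemma psiTilde_eq (hm : 2 ≤ m) (a : E → ℝ) (l : ℝ) (ξ : E) :
    PsiTilde m a l ξ = (m : ℝ) ^ m * Ifun m a (l, ξ) := by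
  rw [PsiTilde]
  split_ifs with h
  · subst h
    rw [Ifun_zero hm]
    have h2 : (∫ x : E, ((1:ℝ) + ‖x‖ ^ 2)⁻¹ ^ m) = ∫ x : E, kf m x := rfl
    rw [h2]
    ring
  · rw [psiFun_eq]
    rcases le_or_gt 0 l with h1 | h1
    · rw [abs_of_nonneg h1]
    · rw [abs_of_neg h1, Ifun_even]

end Stmt3Aux

/-- Limits of `Ψ` and its partial derivatives as `λ → 0⁺`, and continuous
differentiability of the extension `Ψ̃` on `ℝ × ℝᵐ`. -/
theorem stmt3 (m : ℕ) (hm : 2 ≤ m) (a : EuclideanSpace ℝ (Fin m) → ℝ)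
    (hbd : ∃ M : ℝ, ∀ x, |a x| ≤ M) (hC1 : ContDiff ℝ 1 a)
    (C : ℝ) (hC : 0 < C)
    (hgrad : ∀ x, ‖gradient a x‖ ≤ C * (1 + ‖x‖ ^ 2)⁻¹)
    (C₁ : ℝ)
    (hC₁ : C₁ = (m : ℝ) ^ m * ∫ x : EuclideanSpace ℝ (Fin m), (1 + ‖x‖ ^ 2)⁻¹ ^ m) :
    (∀ ξ : EuclideanSpace ℝ (Fin m),
      Filter.Tendsto (fun l : ℝ => PsiFun m a l ξ) (𝓝[>] 0) (𝓝 (C₁ * a ξ)) ∧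
      Filter.Tendsto (fun l : ℝ => deriv (fun t : ℝ => PsiFun m a t ξ) l) (𝓝[>] 0) (𝓝 0) ∧
      ∀ i : Fin m,
        Filter.Tendsto
          (fun l : ℝ =>
            deriv (fun t : ℝ => PsiFun m a l (ξ + t • EuclideanSpace.single i 1)) 0)
          (𝓝[>] 0) (𝓝 (C₁ * fderiv ℝ a ξ (EuclideanSpace.single i 1)))) ∧
    ContDiff ℝ 1 (fun p : ℝ × EuclideanSpace ℝ (Fin m) => PsiTilde m a p.1 p.2) ∧
    ∀ ξ : EuclideanSpace ℝ (Fin m),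
      HasDerivAt (fun l : ℝ => PsiTilde m a l ξ) 0 0 ∧
      ∀ i : Fin m,
        HasDerivAt (fun t : ℝ => PsiTilde m a 0 (ξ + t • EuclideanSpace.single i 1))
          (C₁ * fderiv ℝ a ξ (EuclideanSpace.single i 1)) 0 := by
  classical
  obtain ⟨M, hM⟩ := hbd
  have hC0 : (0:ℝ) ≤ C := hC.le
  -- abbreviations
  have hPsi : ∀ p : ℝ × EuclideanSpace ℝ (Fin m), HasFDerivAt (fun q : ℝ × EuclideanSpace ℝ (Fin m) => (m:ℝ) ^ m * Stmt3Aux.Ifun m a q)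
      (((m:ℝ) ^ m) • Stmt3Aux.Ider m a p) p :=
    fun p => (Stmt3Aux.hasFDerivAt_Ifun hm hC1 hgrad hC0 hM p).const_mul ((m:ℝ) ^ m)
  have hC₁' : C₁ = (m:ℝ) ^ m * ∫ x : EuclideanSpace ℝ (Fin m), Stmt3Aux.kf m x := hC₁
  have hIderc : Continuous (Stmt3Aux.Ider m a) := Stmt3Aux.Ider_cont hm hC1 hgrad hC0
  have hcontI : Continuous (Stmt3Aux.Ifun m a) := continuous_iff_continuousAt.2
    fun p => (Stmt3Aux.hasFDerivAt_Ifun hm hC1 hgrad hC0 hM p).continuousAt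
  have hval2 : ∀ ξ : EuclideanSpace ℝ (Fin m), ((m:ℝ) ^ m • Stmt3Aux.Ider m a ((0:ℝ), ξ)) ((1:ℝ), (0:EuclideanSpace ℝ (Fin m))) = 0 := by
    intro ξ
    rw [ContinuousLinearMap.smul_apply, Stmt3Aux.Ider_fst hm hC1 hgrad hC0, smul_zero]
  have hval3 : ∀ (ξ : EuclideanSpace ℝ (Fin m)) (w : EuclideanSpace ℝ (Fin m)), ((m:ℝ) ^ m • Stmt3Aux.Ider m a ((0:ℝ), ξ)) ((0:ℝ), w) =
      C₁ * fderiv ℝ a ξ w := by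
    intro ξ w
    rw [ContinuousLinearMap.smul_apply, Stmt3Aux.Ider_snd hm hC1 hgrad hC0, hC₁',
      smul_eq_mul]
    ring
  have hc2 : ∀ (l : ℝ) (ξ w : EuclideanSpace ℝ (Fin m)),
      HasDerivAt (fun t : ℝ => ((l, ξ + t • w) : ℝ × EuclideanSpace ℝ (Fin m))) ((0:ℝ), w) 0 :=
    fun l ξ w => (hasDerivAt_const 0 l).prodMk
      (by simpa using ((hasDerivAt_id (0:ℝ)).smul_const w).const_add ξ)
  have hd2 : ∀ (l : ℝ) (ξ w : EuclideanSpace ℝ (Fin m)),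
      HasDerivAt (fun t : ℝ => (m:ℝ) ^ m * Stmt3Aux.Ifun m a (l, ξ + t • w))
        (((m:ℝ) ^ m • Stmt3Aux.Ider m a (l, ξ)) ((0:ℝ), w)) 0 :=
    fun l ξ w => (hPsi (l, ξ)).comp_hasDerivAt_of_eq 0 (hc2 l ξ w) (by simp)
  refine ⟨fun ξ => ⟨?_, ?_, ?_⟩, ?_, fun ξ => ⟨?_, ?_⟩⟩
  · -- limit of Ψ
    have hfe : (fun l : ℝ => PsiFun m a l ξ)
        = fun l : ℝ => (m:ℝ) ^ m * Stmt3Aux.Ifun m a (l, ξ) :=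
      funext fun l => Stmt3Aux.psiFun_eq a l ξ
    rw [hfe]
    have hval : (m:ℝ) ^ m * Stmt3Aux.Ifun m a ((0:ℝ), ξ) = C₁ * a ξ := by
      rw [Stmt3Aux.Ifun_zero hm, hC₁']; ring
    rw [← hval]
    exact ((continuous_const.mul (hcontI.comp
      (continuous_id.prodMk continuous_const))).tendsto 0).mono_left nhdsWithin_le_nhds
  · -- limit of ∂λΨ
    have hd : ∀ l : ℝ, HasDerivAt (fun t : ℝ => PsiFun m a t ξ)
        (((m:ℝ) ^ m • Stmt3Aux.Ider m a (l, ξ)) ((1:ℝ), (0:EuclideanSpace ℝ (Fin m)))) l := by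
      intro l
      have hfe : (fun t : ℝ => PsiFun m a t ξ)
          = fun t : ℝ => (m:ℝ) ^ m * Stmt3Aux.Ifun m a (t, ξ) :=
        funext fun t => Stmt3Aux.psiFun_eq a t ξ
      rw [hfe]
      exact (hPsi (l, ξ)).comp_hasDerivAt l ((hasDerivAt_id l).prodMk (hasDerivAt_const l ξ))
    have hde : ∀ l : ℝ, deriv (fun t : ℝ => PsiFun m a t ξ) l
        = ((m:ℝ) ^ m • Stmt3Aux.Ider m a (l, ξ)) ((1:ℝ), (0:EuclideanSpace ℝ (Fin m))) := fun l => (hd l).deriv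
    simp only [hde]
    have hcont : Continuous fun l : ℝ =>
        ((m:ℝ) ^ m • Stmt3Aux.Ider m a (l, ξ)) ((1:ℝ), (0:EuclideanSpace ℝ (Fin m))) :=
      Continuous.clm_apply (((hIderc.comp
        (continuous_id.prodMk continuous_const))).fun_const_smul _) continuous_const
    have htt := (hcont.tendsto 0).mono_left (nhdsWithin_le_nhds (s := Set.Ioi (0:ℝ)))
    rw [hval2 ξ] at htt
    exact htt
  · -- limit of ∂ξᵢΨ
    intro i
    set w : EuclideanSpace ℝ (Fin m) := EuclideanSpace.single i 1 with hw
    have hde : ∀ l : ℝ, deriv (fun t : ℝ => PsiFun m a l (ξ + t • w)) 0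
        = ((m:ℝ) ^ m • Stmt3Aux.Ider m a (l, ξ)) ((0:ℝ), w) := by
      intro l
      have hfe : (fun t : ℝ => PsiFun m a l (ξ + t • w))
          = fun t : ℝ => (m:ℝ) ^ m * Stmt3Aux.Ifun m a (l, ξ + t • w) :=
        funext fun t => Stmt3Aux.psiFun_eq a l _
      rw [hfe]
      exact (hd2 l ξ w).deriv
    simp only [hde]
    rw [← hval3 ξ w]
    have hcont : Continuous fun l : ℝ =>
        ((m:ℝ) ^ m • Stmt3Aux.Ider m a (l, ξ)) ((0:ℝ), w) :=
      Continuous.clm_apply (((hIderc.comp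
        (continuous_id.prodMk continuous_const))).fun_const_smul _) continuous_const
    exact (hcont.tendsto 0).mono_left nhdsWithin_le_nhds
  · -- ContDiff of Ψ̃
    have hfe : (fun p : ℝ × EuclideanSpace ℝ (Fin m) => PsiTilde m a p.1 p.2)
        = fun p : ℝ × EuclideanSpace ℝ (Fin m) => (m:ℝ) ^ m * Stmt3Aux.Ifun m a p :=
      funext fun p => Stmt3Aux.psiTilde_eq hm a p.1 p.2
    rw [hfe, contDiff_one_iff_fderiv]
    refine ⟨fun p => (hPsi p).differentiableAt, ?_⟩
    have h : (fderiv ℝ fun q : ℝ × EuclideanSpace ℝ (Fin m) => (m:ℝ) ^ m * Stmt3Aux.Ifun m a q)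
        = fun p => (m:ℝ) ^ m • Stmt3Aux.Ider m a p := funext fun p => (hPsi p).fderiv
    rw [h]
    exact hIderc.fun_const_smul _
  · -- ∂λΨ̃(0,ξ) = 0
    have hfe : (fun l : ℝ => PsiTilde m a l ξ)
        = fun l : ℝ => (m:ℝ) ^ m * Stmt3Aux.Ifun m a (l, ξ) :=
      funext fun l => Stmt3Aux.psiTilde_eq hm a l ξ
    rw [hfe]
    have h := (hPsi ((0:ℝ), ξ)).comp_hasDerivAt (0:ℝ)
      ((hasDerivAt_id (0:ℝ)).prodMk (hasDerivAt_const (0:ℝ) ξ))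
    rw [hval2 ξ] at h
    exact h
  · -- ∂ξᵢΨ̃(0,ξ)
    intro i
    set w : EuclideanSpace ℝ (Fin m) := EuclideanSpace.single i 1 with hw
    have hfe : (fun t : ℝ => PsiTilde m a 0 (ξ + t • w))
        = fun t : ℝ => (m:ℝ) ^ m * Stmt3Aux.Ifun m a ((0:ℝ), ξ + t • w) :=
      funext fun t => Stmt3Aux.psiTilde_eq hm a 0 _
    rw [hfe, ← hval3 ξ w]
    exact hd2 0 ξ w
end

section
/- Let m ≥ 3 and let a : ℝᵐ → ℝ be bounded and twice continuously differentiable with |∂ᵢa(x)| ≤ C (1+|x|²)⁻¹ and |∂ᵢ∂ⱼa(x)| ≤ C (1+|x|²)^{-3/2} for some C > 0 and all x, i, j. Set C₁ := mᵐ ∫_{ℝᵐ} (1+|x|²)⁻ᵐ dx and C₂ := m^{m-1} ∫_{ℝᵐ} |x|²/(1+|x|²)ᵐ dx. Then for every ξ ∈ ℝᵐ: lim_{λ→0⁺} ∂²_λΨ(λ,ξ) = C₂ Δa(ξ), lim_{λ→0⁺} ∂_{ξᵢ}∂_{ξⱼ}Ψ(λ,ξ) = C₁ ∂ᵢ∂ⱼa(ξ)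 for all i, j, and lim_{λ→0⁺} ∂_{ξᵢ}∂_λΨ(λ,ξ) = 0 for all i, where Δa denotes the Euclidean Laplacian of a. -/
open MeasureTheory
open scoped RealInnerProductSpace Topology

namespace Stmt4Aux

variable {m : ℕ}

lemma decomp (v : EuclideanSpace ℝ (Fin m)) :
    ∑ i, v i • EuclideanSpace.single i (1:ℝ) = v := by
  have h := (EuclideanSpace.basisFun (Fin m) ℝ).toBasis.sum_repr v
  simpa [EuclideanSpace.basisFun_apply] using h

lemma clm_expand {F : Type*} [NormedAddCommGroup F] [NormedSpace ℝ F]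
    (f : EuclideanSpace ℝ (Fin m) →L[ℝ] F) (v : EuclideanSpace ℝ (Fin m)) :
    f v = ∑ i, v i • f (EuclideanSpace.single i 1) := by
  conv_lhs => rw [← decomp v]
  rw [map_sum]
  simp

lemma abs_coord (v : EuclideanSpace ℝ (Fin m)) (i : Fin m) : |v i| ≤ ‖v‖ := by
  rw [EuclideanSpace.norm_eq]
  rw [← Real.sqrt_sq_eq_abs]
  apply Real.sqrt_le_sqrt
  have : |v i| ^ 2 ≤ ∑ j, ‖v j‖ ^ 2 := by
    rw [sq_abs]
    refine Finset.single_le_sum (f := fun j => ‖v j‖ ^ 2) (fun j _ => by positivity) (Finset.mem_univ i) |>.trans_eq' ?_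
    simp [sq_abs, Real.norm_eq_abs]
  simpa [sq_abs] using this

lemma opbound (f : EuclideanSpace ℝ (Fin m) →L[ℝ] ℝ) {c : ℝ}
    (h : ∀ i, |f (EuclideanSpace.single i 1)| ≤ c) (v : EuclideanSpace ℝ (Fin m)) :
    |f v| ≤ m * c * ‖v‖ := by
  rw [clm_expand f v]
  calc |∑ i, v i • f (EuclideanSpace.single i 1)|
      ≤ ∑ i, |v i • f (EuclideanSpace.single i 1)| := Finset.abs_sum_le_sum_abs _ _
    _ ≤ ∑ _i : Fin m, ‖v‖ * c := by
        refine Finset.sum_le_sum fun i _ => ?_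
        rw [smul_eq_mul, abs_mul]
        exact mul_le_mul (abs_coord v i) (h i) (abs_nonneg _) (norm_nonneg v)
    _ = m * c * ‖v‖ := by simp [Finset.sum_const]; ring

lemma weight_pos (x : EuclideanSpace ℝ (Fin m)) : (0:ℝ) < (1 + ‖x‖ ^ 2) ^ m := by positivity

lemma weight_cont : Continuous fun x : EuclideanSpace ℝ (Fin m) => ((1 + ‖x‖ ^ 2) ^ m)⁻¹ :=
  Continuous.inv₀ (by continuity) fun x => (weight_pos x).ne'

lemma integrable_pow_weight {p : ℕ} (hp : p < m) :
    Integrable (fun x : EuclideanSpace ℝ (Fin m) => ‖x‖ ^ p * ((1 + ‖x‖ ^ 2) ^ m)⁻¹) := by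
  have hr : (Module.finrank ℝ (EuclideanSpace ℝ (Fin m)) : ℝ) < 2 * m - p := by
    rw [finrank_euclideanSpace_fin]
    have : (p : ℝ) < m := by exact_mod_cast hp
    linarith
  refine (integrable_rpow_neg_one_add_norm_sq (μ := volume) hr).mono' ?_ ?_
  · exact ((continuous_norm.pow p).mul weight_cont).aestronglyMeasurable
  · refine Filter.Eventually.of_forall fun x => ?_
    have hs : (0:ℝ) < 1 + ‖x‖ ^ 2 := by positivity
    have hx0 : (0:ℝ) ≤ ‖x‖ := norm_nonneg x
    rw [Real.norm_eq_abs, abs_of_nonneg (by positivity)]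
    have h1 : ((1 + ‖x‖ ^ 2) ^ m : ℝ)⁻¹ = (1 + ‖x‖ ^ 2) ^ (-(m:ℝ)) := by
      rw [← Real.rpow_natCast (1 + ‖x‖ ^ 2) m, ← Real.rpow_neg hs.le]
    have h2 : ‖x‖ ^ p ≤ (1 + ‖x‖ ^ 2) ^ ((p:ℝ)/2) := by
      have hx : ‖x‖ ≤ Real.sqrt (1 + ‖x‖ ^ 2) :=
        calc ‖x‖ = Real.sqrt (‖x‖ ^ 2) := (Real.sqrt_sq hx0).symm
          _ ≤ Real.sqrt (1 + ‖x‖ ^ 2) := Real.sqrt_le_sqrt (by linarith)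
      calc ‖x‖ ^ p ≤ Real.sqrt (1 + ‖x‖ ^ 2) ^ p := pow_le_pow_left₀ hx0 hx p
        _ = (1 + ‖x‖ ^ 2) ^ ((p:ℝ)/2) := by
            rw [Real.sqrt_eq_rpow, ← Real.rpow_natCast ((1 + ‖x‖^2) ^ (1/2:ℝ)) p,
              ← Real.rpow_mul hs.le]
            congr 1
            ring
    rw [h1]
    calc ‖x‖ ^ p * (1 + ‖x‖ ^ 2) ^ (-(m:ℝ))
        ≤ (1 + ‖x‖ ^ 2) ^ ((p:ℝ)/2) * (1 + ‖x‖ ^ 2) ^ (-(m:ℝ)) :=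
          mul_le_mul_of_nonneg_right h2 (Real.rpow_nonneg hs.le _)
      _ = (1 + ‖x‖ ^ 2) ^ (-(2 * (m:ℝ) - p) / 2) := by
          rw [← Real.rpow_add hs]; ring_nf

lemma path_hasDerivAt (cx dx : EuclideanSpace ℝ (Fin m)) (t : ℝ) :
    HasDerivAt (fun t : ℝ => cx + t • dx) dx t := by
  simpa using ((hasDerivAt_id t).smul_const dx).const_add cx

lemma hasDerivAt_integral {f : EuclideanSpace ℝ (Fin m) → ℝ}
    (hf : ContDiff ℝ 1 f)
    (c d : EuclideanSpace ℝ (Fin m) → EuclideanSpace ℝ (Fin m))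
    (hc : Continuous c) (hd : Continuous d)
    {bound : EuclideanSpace ℝ (Fin m) → ℝ} (hbound : Integrable bound)
    (hb : ∀ (x : EuclideanSpace ℝ (Fin m)) (t : ℝ),
      |fderiv ℝ f (c x + t • d x) (d x)| * ((1 + ‖x‖ ^ 2) ^ m)⁻¹ ≤ bound x)
    (hint : ∀ t : ℝ, Integrable (fun x : EuclideanSpace ℝ (Fin m) =>
      f (c x + t • d x) * ((1 + ‖x‖ ^ 2) ^ m)⁻¹))
    (t₀ : ℝ) :
    HasDerivAt (fun t : ℝ => ∫ x : EuclideanSpace ℝ (Fin m),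
        f (c x + t • d x) * ((1 + ‖x‖ ^ 2) ^ m)⁻¹)
      (∫ x : EuclideanSpace ℝ (Fin m),
        fderiv ℝ f (c x + t₀ • d x) (d x) * ((1 + ‖x‖ ^ 2) ^ m)⁻¹) t₀ := by
  refine (hasDerivAt_integral_of_dominated_loc_of_deriv_le (μ := volume)
    (F := fun (t : ℝ) (x : EuclideanSpace ℝ (Fin m)) =>
      f (c x + t • d x) * ((1 + ‖x‖ ^ 2) ^ m)⁻¹)
    (F' := fun (t : ℝ) (x : EuclideanSpace ℝ (Fin m)) =>
      fderiv ℝ f (c x + t • d x) (d x) * ((1 + ‖x‖ ^ 2) ^ m)⁻¹)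
    (bound := bound) Filter.univ_mem ?_ (hint t₀) ?_ ?_ hbound ?_).2
  · exact Filter.Eventually.of_forall fun t => (hint t).aestronglyMeasurable
  · exact ((((hf.continuous_fderiv one_ne_zero).comp
      (hc.add (hd.const_smul t₀))).clm_apply hd).mul weight_cont).aestronglyMeasurable
  · refine Filter.Eventually.of_forall fun x t _ => ?_
    rw [Real.norm_eq_abs, abs_mul, abs_of_nonneg (inv_nonneg.mpr (weight_pos x).le)]
    exact hb x t
  · refine Filter.Eventually.of_forall fun x t _ => ?_
    exact (((hf.differentiable one_ne_zero) (c x + t • d x)).hasFDerivAt.comp_hasDerivAt t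
      (path_hasDerivAt (c x) (d x) t)).mul_const _

lemma hasDerivAt_integral2 {f : EuclideanSpace ℝ (Fin m) → ℝ}
    (hf : ContDiff ℝ 2 f)
    (c d e : EuclideanSpace ℝ (Fin m) → EuclideanSpace ℝ (Fin m))
    (hc : Continuous c) (hd : Continuous d) (he : Continuous e)
    {bound : EuclideanSpace ℝ (Fin m) → ℝ} (hbound : Integrable bound)
    (hb : ∀ (x : EuclideanSpace ℝ (Fin m)) (t : ℝ),
      |fderiv ℝ (fderiv ℝ f) (c x + t • d x) (d x) (e x)| * ((1 + ‖x‖ ^ 2) ^ m)⁻¹ ≤ bound x)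
    (hint : ∀ t : ℝ, Integrable (fun x : EuclideanSpace ℝ (Fin m) =>
      fderiv ℝ f (c x + t • d x) (e x) * ((1 + ‖x‖ ^ 2) ^ m)⁻¹))
    (t₀ : ℝ) :
    HasDerivAt (fun t : ℝ => ∫ x : EuclideanSpace ℝ (Fin m),
        fderiv ℝ f (c x + t • d x) (e x) * ((1 + ‖x‖ ^ 2) ^ m)⁻¹)
      (∫ x : EuclideanSpace ℝ (Fin m),
        fderiv ℝ (fderiv ℝ f) (c x + t₀ • d x) (d x) (e x) * ((1 + ‖x‖ ^ 2) ^ m)⁻¹) t₀ := by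
  have hf1 : ContDiff ℝ 1 (fderiv ℝ f) := hf.fderiv_right (by norm_num)
  refine (hasDerivAt_integral_of_dominated_loc_of_deriv_le (μ := volume)
    (F := fun (t : ℝ) (x : EuclideanSpace ℝ (Fin m)) =>
      fderiv ℝ f (c x + t • d x) (e x) * ((1 + ‖x‖ ^ 2) ^ m)⁻¹)
    (F' := fun (t : ℝ) (x : EuclideanSpace ℝ (Fin m)) =>
      fderiv ℝ (fderiv ℝ f) (c x + t • d x) (d x) (e x) * ((1 + ‖x‖ ^ 2) ^ m)⁻¹)
    (bound := bound) Filter.univ_mem ?_ (hint t₀) ?_ ?_ hbound ?_).2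
  · exact Filter.Eventually.of_forall fun t => (hint t).aestronglyMeasurable
  · exact (((((hf.fderiv_right (by norm_num)).continuous_fderiv one_ne_zero).comp (hc.add (hd.const_smul t₀))).clm_apply hd).clm_apply he).mul weight_cont |>.aestronglyMeasurable
  · refine Filter.Eventually.of_forall fun x t _ => ?_
    rw [Real.norm_eq_abs, abs_mul, abs_of_nonneg (inv_nonneg.mpr (weight_pos x).le)]
    exact hb x t
  · refine Filter.Eventually.of_forall fun x t _ => ?_
    have h1 : HasDerivAt (fun t : ℝ => fderiv ℝ f (c x + t • d x))
        (fderiv ℝ (fderiv ℝ f) (c x + t • d x) (d x)) t :=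
      ((hf1.differentiable one_ne_zero) (c x + t • d x)).hasFDerivAt.comp_hasDerivAt t
        (path_hasDerivAt (c x) (d x) t)
    have h2 := ((ContinuousLinearMap.apply ℝ ℝ (e x)).hasFDerivAt.comp_hasDerivAt t h1)
    exact (h2.mul_const _)


noncomputable def reflect (j : Fin m) :
    EuclideanSpace ℝ (Fin m) ≃ₗᵢ[ℝ] EuclideanSpace ℝ (Fin m) :=
  LinearIsometryEquiv.piLpCongrRight 2
    (fun i => if i = j then LinearIsometryEquiv.neg ℝ else LinearIsometryEquiv.refl ℝ ℝ)

lemma reflect_apply (j : Fin m) (x : EuclideanSpace ℝ (Fin m)) (i : Fin m) :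
    reflect j x i = if i = j then -(x i) else x i := by
  simp only [reflect, LinearIsometryEquiv.piLpCongrRight_apply]
  split_ifs <;> simp

/-- substitution along a linear isometry equivalence -/
lemma integral_comp_lie (e : EuclideanSpace ℝ (Fin m) ≃ₗᵢ[ℝ] EuclideanSpace ℝ (Fin m))
    (g : EuclideanSpace ℝ (Fin m) → ℝ) :
    ∫ x, g (e x) = ∫ x, g x :=
  e.measurePreserving.integral_comp e.toHomeomorph.measurableEmbedding g

lemma integral_coord_weight (j : Fin m) :
    ∫ x : EuclideanSpace ℝ (Fin m), x j * ((1 + ‖x‖ ^ 2) ^ m)⁻¹ = 0 := by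
  have h := integral_comp_lie (reflect j)
    (fun x : EuclideanSpace ℝ (Fin m) => x j * ((1 + ‖x‖ ^ 2) ^ m)⁻¹)
  have h2 : (fun x : EuclideanSpace ℝ (Fin m) => reflect j x j *
      ((1 + ‖reflect j x‖ ^ 2) ^ m)⁻¹)
      = fun x : EuclideanSpace ℝ (Fin m) => -(x j * ((1 + ‖x‖ ^ 2) ^ m)⁻¹) := by
    funext x
    rw [reflect_apply, (reflect j).norm_map]
    simp
  rw [h2] at h
  rw [integral_neg] at h
  linarith

lemma integral_coord_mul_weight {i j : Fin m} (hij : i ≠ j) :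
    ∫ x : EuclideanSpace ℝ (Fin m), x i * x j * ((1 + ‖x‖ ^ 2) ^ m)⁻¹ = 0 := by
  have h := integral_comp_lie (reflect j)
    (fun x : EuclideanSpace ℝ (Fin m) => x i * x j * ((1 + ‖x‖ ^ 2) ^ m)⁻¹)
  have h2 : (fun x : EuclideanSpace ℝ (Fin m) => reflect j x i * reflect j x j *
      ((1 + ‖reflect j x‖ ^ 2) ^ m)⁻¹)
      = fun x : EuclideanSpace ℝ (Fin m) => -(x i * x j * ((1 + ‖x‖ ^ 2) ^ m)⁻¹) := by
    funext x
    rw [reflect_apply, reflect_apply, (reflect j).norm_map, if_neg hij, if_pos rfl]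
    ring
  rw [h2] at h
  rw [integral_neg] at h
  linarith

lemma integral_sq_coord_weight (i j : Fin m) :
    ∫ x : EuclideanSpace ℝ (Fin m), (x i) ^ 2 * ((1 + ‖x‖ ^ 2) ^ m)⁻¹
      = ∫ x : EuclideanSpace ℝ (Fin m), (x j) ^ 2 * ((1 + ‖x‖ ^ 2) ^ m)⁻¹ := by
  have h := integral_comp_lie (LinearIsometryEquiv.piLpCongrLeft 2 ℝ ℝ (Equiv.swap i j))
    (fun x : EuclideanSpace ℝ (Fin m) => (x i) ^ 2 * ((1 + ‖x‖ ^ 2) ^ m)⁻¹)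
  rw [← h]
  congr 1
  funext x
  rw [(LinearIsometryEquiv.piLpCongrLeft 2 ℝ ℝ (Equiv.swap i j)).norm_map]
  congr 2
  rw [show (LinearIsometryEquiv.piLpCongrLeft 2 ℝ ℝ (Equiv.swap i j) x) i
      = x ((Equiv.swap i j).symm i) from rfl]
  rw [Equiv.symm_swap, Equiv.swap_apply_left]

lemma sum_sq_coord (x : EuclideanSpace ℝ (Fin m)) :
    ∑ j, (x j) ^ 2 = ‖x‖ ^ 2 := by
  rw [EuclideanSpace.norm_eq, Real.sq_sqrt (by positivity)]
  simp [Real.norm_eq_abs, sq_abs]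

end Stmt4Aux

open Stmt4Aux

set_option maxHeartbeats 4000000 in
/-- For `m ≥ 3` and `a` bounded and `C²` with the stated decay of its
first and second partial derivatives, the second derivatives of `Ψ` have the limits
`∂²_λΨ → C₂ Δa(ξ)`, `∂_{ξᵢ}∂_{ξⱼ}Ψ → C₁ ∂ᵢ∂ⱼa(ξ)` and `∂_{ξᵢ}∂_λΨ → 0` as `λ → 0⁺`. -/
theorem stmt4 (m : ℕ) (hm : 3 ≤ m) (a : EuclideanSpace ℝ (Fin m) → ℝ)
    (hbd : ∃ M : ℝ, ∀ x, |a x| ≤ M) (hC2 : ContDiff ℝ 2 a)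
    (C : ℝ) (hC : 0 < C)
    (hgrad : ∀ (x : EuclideanSpace ℝ (Fin m)) (i : Fin m),
      |fderiv ℝ a x (EuclideanSpace.single i 1)| ≤ C * (1 + ‖x‖ ^ 2)⁻¹)
    (hhess : ∀ (x : EuclideanSpace ℝ (Fin m)) (i j : Fin m),
      |fderiv ℝ (fun y => fderiv ℝ a y (EuclideanSpace.single j 1)) x
          (EuclideanSpace.single i 1)| ≤ C * (1 + ‖x‖ ^ 2) ^ (-(3 : ℝ) / 2))
    (C₁ C₂ : ℝ)
    (hC₁ : C₁ = (m : ℝ) ^ m * ∫ x : EuclideanSpace ℝ (Fin m), 1 / (1 + ‖x‖ ^ 2) ^ m)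
    (hC₂ : C₂ = (m : ℝ) ^ (m - 1) *
      ∫ x : EuclideanSpace ℝ (Fin m), ‖x‖ ^ 2 / (1 + ‖x‖ ^ 2) ^ m)
    (ξ : EuclideanSpace ℝ (Fin m)) :
    Filter.Tendsto
      (fun l : ℝ => deriv (fun t : ℝ => deriv (fun s : ℝ => PsiFun m a s ξ) t) l)
      (𝓝[>] 0)
      (𝓝 (C₂ * ∑ i : Fin m,
        fderiv ℝ (fun y => fderiv ℝ a y (EuclideanSpace.single i 1)) ξ
          (EuclideanSpace.single i 1))) ∧
    (∀ i j : Fin m,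
      Filter.Tendsto
        (fun l : ℝ =>
          deriv (fun t : ℝ =>
            deriv (fun s : ℝ =>
              PsiFun m a l (ξ + t • EuclideanSpace.single i 1 + s • EuclideanSpace.single j 1)) 0) 0)
        (𝓝[>] 0)
        (𝓝 (C₁ * fderiv ℝ (fun y => fderiv ℝ a y (EuclideanSpace.single j 1)) ξ
          (EuclideanSpace.single i 1)))) ∧
    ∀ i : Fin m,
      Filter.Tendsto
        (fun l : ℝ =>
          deriv (fun t : ℝ =>
            deriv (fun s : ℝ => PsiFun m a s (ξ + t • EuclideanSpace.single i 1)) l) 0)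
        (𝓝[>] 0) (𝓝 0) := by
  classical
  obtain ⟨M, hM⟩ := hbd
  have hm0 : 0 < m := by omega
  have ha1 : ContDiff ℝ 1 a := hC2.of_le (by norm_num)
  have hf1 : ContDiff ℝ 1 (fderiv ℝ a) := hC2.fderiv_right (by norm_num)
  have hfdiff : Differentiable ℝ (fderiv ℝ a) := hf1.differentiable one_ne_zero
  have hBcont : Continuous (fun y : EuclideanSpace ℝ (Fin m) => fderiv ℝ (fderiv ℝ a) y) :=
    hf1.continuous_fderiv one_ne_zero
  have hBp : ∀ (y v w : EuclideanSpace ℝ (Fin m)),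
      fderiv ℝ (fun z => fderiv ℝ a z w) y v = fderiv ℝ (fderiv ℝ a) y v w := by
    intro y v w
    have h2 := fderiv_clm_apply (𝕜 := ℝ) (c := fderiv ℝ a)
      (u := fun _ : EuclideanSpace ℝ (Fin m) => w) (x := y) (hfdiff y) (differentiableAt_const w)
    simp only [fderiv_fun_const, Pi.zero_apply, ContinuousLinearMap.comp_zero, add_zero] at h2
    rw [h2]
    simp
  have hwpos : ∀ x : EuclideanSpace ℝ (Fin m), (0:ℝ) < ((1 + ‖x‖ ^ 2) ^ m)⁻¹ :=
    fun x => inv_pos.mpr (Stmt4Aux.weight_pos x)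
  have hgradC : ∀ (y : EuclideanSpace ℝ (Fin m)) (i : Fin m),
      |fderiv ℝ a y (EuclideanSpace.single i 1)| ≤ C := by
    intro y i
    refine (hgrad y i).trans ?_
    have h1 : (1:ℝ) ≤ 1 + ‖y‖ ^ 2 := by nlinarith [sq_nonneg ‖y‖]
    calc C * (1 + ‖y‖ ^ 2)⁻¹ ≤ C * 1 := mul_le_mul_of_nonneg_left (inv_le_one_of_one_le₀ h1) hC.le
      _ = C := mul_one C
  have hhessC : ∀ (y : EuclideanSpace ℝ (Fin m)) (i j : Fin m),
      |fderiv ℝ (fun z => fderiv ℝ a z (EuclideanSpace.single j 1)) y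
        (EuclideanSpace.single i 1)| ≤ C := by
    intro y i j
    refine (hhess y i j).trans ?_
    have h1 : (1:ℝ) ≤ 1 + ‖y‖ ^ 2 := by nlinarith [sq_nonneg ‖y‖]
    calc C * (1 + ‖y‖ ^ 2) ^ (-(3:ℝ)/2) ≤ C * 1 :=
        mul_le_mul_of_nonneg_left (Real.rpow_le_one_of_one_le_of_nonpos h1 (by norm_num)) hC.le
      _ = C := mul_one C
  have hgradnorm : ∀ (y v : EuclideanSpace ℝ (Fin m)), |fderiv ℝ a y v| ≤ m * C * ‖v‖ :=
    fun y v => Stmt4Aux.opbound _ (fun i => hgradC y i) v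
  have hhessnorm : ∀ (y v w : EuclideanSpace ℝ (Fin m)),
      |fderiv ℝ (fderiv ℝ a) y v w| ≤ m * (m * C) * ‖v‖ * ‖w‖ := by
    intro y v w
    have hentry : ∀ j, |(fderiv ℝ (fderiv ℝ a) y v) (EuclideanSpace.single j 1)| ≤ m * C * ‖v‖ := by
      intro j
      rw [← hBp y v (EuclideanSpace.single j 1)]
      exact Stmt4Aux.opbound _ (fun i => hhessC y i j) v
    calc |fderiv ℝ (fderiv ℝ a) y v w| ≤ m * (m * C * ‖v‖) * ‖w‖ :=
        Stmt4Aux.opbound (fderiv ℝ (fderiv ℝ a) y v) hentry w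
      _ = m * (m * C) * ‖v‖ * ‖w‖ := by ring
  have hint0 : Integrable (fun x : EuclideanSpace ℝ (Fin m) => ((1 + ‖x‖ ^ 2) ^ m)⁻¹) := by
    simpa using Stmt4Aux.integrable_pow_weight (m := m) (p := 0) hm0
  have hint1 : Integrable (fun x : EuclideanSpace ℝ (Fin m) => ‖x‖ * ((1 + ‖x‖ ^ 2) ^ m)⁻¹) := by
    simpa using Stmt4Aux.integrable_pow_weight (m := m) (p := 1) (by omega)
  have hint2 : Integrable
      (fun x : EuclideanSpace ℝ (Fin m) => ‖x‖ ^ 2 * ((1 + ‖x‖ ^ 2) ^ m)⁻¹) :=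
    Stmt4Aux.integrable_pow_weight (p := 2) (by omega)
  have hdom : ∀ (g G : EuclideanSpace ℝ (Fin m) → ℝ), Continuous g → Integrable G →
      (∀ x, |g x| ≤ G x) → Integrable g := by
    intro g G hg hG hle
    refine hG.mono' hg.aestronglyMeasurable (Filter.Eventually.of_forall fun x => ?_)
    rw [Real.norm_eq_abs]; exact hle x
  have haint : ∀ g : EuclideanSpace ℝ (Fin m) → EuclideanSpace ℝ (Fin m), Continuous g →
      Integrable (fun x => a (g x) * ((1 + ‖x‖ ^ 2) ^ m)⁻¹) := by
    intro g hg
    refine hdom _ (fun x => M * ((1 + ‖x‖ ^ 2) ^ m)⁻¹)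
      ((ha1.continuous.comp hg).mul Stmt4Aux.weight_cont) (hint0.const_mul M) fun x => ?_
    rw [abs_mul, abs_of_nonneg (hwpos x).le]
    exact mul_le_mul_of_nonneg_right (hM _) (hwpos x).le
  have hgint_id : ∀ g : EuclideanSpace ℝ (Fin m) → EuclideanSpace ℝ (Fin m), Continuous g →
      Integrable (fun x => fderiv ℝ a (g x) x * ((1 + ‖x‖ ^ 2) ^ m)⁻¹) := by
    intro g hg
    refine hdom _ (fun x => m * C * (‖x‖ * ((1 + ‖x‖ ^ 2) ^ m)⁻¹))
      (((hf1.continuous.comp hg).clm_apply continuous_id).mul Stmt4Aux.weight_cont)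
      (hint1.const_mul (m * C)) fun x => ?_
    rw [abs_mul, abs_of_nonneg (hwpos x).le, ← mul_assoc]
    exact mul_le_mul_of_nonneg_right (hgradnorm _ _) (hwpos x).le
  have hgint_const : ∀ (g : EuclideanSpace ℝ (Fin m) → EuclideanSpace ℝ (Fin m))
      (w : EuclideanSpace ℝ (Fin m)), Continuous g →
      Integrable (fun x => fderiv ℝ a (g x) w * ((1 + ‖x‖ ^ 2) ^ m)⁻¹) := by
    intro g w hg
    refine hdom _ (fun x => m * C * ‖w‖ * ((1 + ‖x‖ ^ 2) ^ m)⁻¹)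
      (((hf1.continuous.comp hg).clm_apply continuous_const).mul Stmt4Aux.weight_cont)
      (hint0.const_mul (m * C * ‖w‖)) fun x => ?_
    rw [abs_mul, abs_of_nonneg (hwpos x).le]
    exact mul_le_mul_of_nonneg_right (hgradnorm _ _) (hwpos x).le
  have hij_int : ∀ i j : Fin m, Integrable
      (fun x : EuclideanSpace ℝ (Fin m) => x i * x j * ((1 + ‖x‖ ^ 2) ^ m)⁻¹) := by
    intro i j
    refine hdom _ (fun x => ‖x‖ ^ 2 * ((1 + ‖x‖ ^ 2) ^ m)⁻¹)
      (((EuclideanSpace.proj (𝕜 := ℝ) i).continuous.mul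
        (EuclideanSpace.proj (𝕜 := ℝ) j).continuous).mul Stmt4Aux.weight_cont) hint2 fun x => ?_
    dsimp only
    rw [abs_mul, abs_of_nonneg (hwpos x).le, abs_mul]
    refine mul_le_mul_of_nonneg_right ?_ (hwpos x).le
    calc |x i| * |x j| ≤ ‖x‖ * ‖x‖ :=
        mul_le_mul (Stmt4Aux.abs_coord x i) (Stmt4Aux.abs_coord x j) (abs_nonneg _) (norm_nonneg x)
      _ = ‖x‖ ^ 2 := (pow_two ‖x‖).symm
  have hj_int : ∀ j : Fin m, Integrable
      (fun x : EuclideanSpace ℝ (Fin m) => x j * ((1 + ‖x‖ ^ 2) ^ m)⁻¹) := by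
    intro j
    refine hdom _ (fun x => ‖x‖ * ((1 + ‖x‖ ^ 2) ^ m)⁻¹)
      ((EuclideanSpace.proj (𝕜 := ℝ) j).continuous.mul Stmt4Aux.weight_cont) hint1 fun x => ?_
    dsimp only
    rw [abs_mul, abs_of_nonneg (hwpos x).le]
    exact mul_le_mul_of_nonneg_right (Stmt4Aux.abs_coord x j) (hwpos x).le
  have hPsi : ∀ (l : ℝ) (ζ : EuclideanSpace ℝ (Fin m)), PsiFun m a l ζ
      = (m:ℝ) ^ m * ∫ x : EuclideanSpace ℝ (Fin m),
          a (ζ + l • x) * ((1 + ‖x‖ ^ 2) ^ m)⁻¹ := by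
    intro l ζ
    simp only [PsiFun]
    congr 1
    congr 1
    funext x
    rw [div_eq_mul_inv, add_comm (l • x) ζ]
  have hD1' : ∀ (ζ : EuclideanSpace ℝ (Fin m)) (t : ℝ),
      HasDerivAt (fun s : ℝ => PsiFun m a s ζ)
        ((m:ℝ) ^ m * ∫ x : EuclideanSpace ℝ (Fin m),
          fderiv ℝ a (ζ + t • x) x * ((1 + ‖x‖ ^ 2) ^ m)⁻¹) t := by
    intro ζ t
    have h := Stmt4Aux.hasDerivAt_integral (m := m) ha1 (fun _ => ζ) (fun x => x)
      continuous_const continuous_id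
      (bound := fun x => m * C * (‖x‖ * ((1 + ‖x‖ ^ 2) ^ m)⁻¹))
      (hint1.const_mul (m * C))
      (fun x s => by
        rw [← mul_assoc]
        exact mul_le_mul_of_nonneg_right (hgradnorm _ _) (hwpos x).le)
      (fun s => haint (fun x => ζ + s • x) (continuous_const.add (continuous_id.const_smul s))) t
    have hfun : (fun s : ℝ => PsiFun m a s ζ)
        = fun s : ℝ => (m:ℝ) ^ m * ∫ x : EuclideanSpace ℝ (Fin m),
            a (ζ + s • x) * ((1 + ‖x‖ ^ 2) ^ m)⁻¹ := funext fun s => hPsi s ζ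
    rw [hfun]
    exact h.const_mul ((m:ℝ) ^ m)
  have hD2 : ∀ l : ℝ, HasDerivAt
      (fun t : ℝ => (m:ℝ) ^ m * ∫ x : EuclideanSpace ℝ (Fin m),
        fderiv ℝ a (ξ + t • x) x * ((1 + ‖x‖ ^ 2) ^ m)⁻¹)
      ((m:ℝ) ^ m * ∫ x : EuclideanSpace ℝ (Fin m),
        fderiv ℝ (fderiv ℝ a) (ξ + l • x) x x * ((1 + ‖x‖ ^ 2) ^ m)⁻¹) l := by
    intro l
    have h := Stmt4Aux.hasDerivAt_integral2 (m := m) hC2 (fun _ => ξ) (fun x => x) (fun x => x)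
      continuous_const continuous_id continuous_id
      (bound := fun x => m * (m * C) * (‖x‖ ^ 2 * ((1 + ‖x‖ ^ 2) ^ m)⁻¹))
      (hint2.const_mul (m * (m * C)))
      (fun x t => by
        calc |fderiv ℝ (fderiv ℝ a) (ξ + t • x) x x| * ((1 + ‖x‖ ^ 2) ^ m)⁻¹
            ≤ m * (m * C) * ‖x‖ * ‖x‖ * ((1 + ‖x‖ ^ 2) ^ m)⁻¹ :=
              mul_le_mul_of_nonneg_right (hhessnorm (ξ + t • x) x x) (hwpos x).le
          _ = m * (m * C) * (‖x‖ ^ 2 * ((1 + ‖x‖ ^ 2) ^ m)⁻¹) := by ring)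
      (fun t => hgint_id (fun x => ξ + t • x) (continuous_const.add (continuous_id.const_smul t))) l
    exact h.const_mul ((m:ℝ) ^ m)
  have hTend : ∀ u v : EuclideanSpace ℝ (Fin m) → EuclideanSpace ℝ (Fin m),
      Continuous u → Continuous v →
      Integrable (fun x : EuclideanSpace ℝ (Fin m) =>
        m * (m * C) * ‖u x‖ * ‖v x‖ * ((1 + ‖x‖ ^ 2) ^ m)⁻¹) →
      Filter.Tendsto
        (fun l : ℝ => ∫ x : EuclideanSpace ℝ (Fin m),
          fderiv ℝ (fderiv ℝ a) (ξ + l • x) (u x) (v x) * ((1 + ‖x‖ ^ 2) ^ m)⁻¹)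
        (𝓝[>] (0:ℝ))
        (𝓝 (∫ x : EuclideanSpace ℝ (Fin m),
          fderiv ℝ (fderiv ℝ a) ξ (u x) (v x) * ((1 + ‖x‖ ^ 2) ^ m)⁻¹)) := by
    intro u v hu hv hib
    refine MeasureTheory.tendsto_integral_filter_of_dominated_convergence _ ?_ ?_ hib ?_
    · refine Filter.Eventually.of_forall fun l => ?_
      exact ((((hBcont.comp (continuous_const.add (continuous_id.const_smul l))).clm_apply
        hu).clm_apply hv).mul Stmt4Aux.weight_cont).aestronglyMeasurable
    · refine Filter.Eventually.of_forall fun l => Filter.Eventually.of_forall fun x => ?_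
      rw [Real.norm_eq_abs, abs_mul, abs_of_nonneg (hwpos x).le]
      exact mul_le_mul_of_nonneg_right (hhessnorm _ _ _) (hwpos x).le
    · refine Filter.Eventually.of_forall fun x => ?_
      have h1 : Filter.Tendsto (fun l : ℝ => ξ + l • x) (𝓝[>] (0:ℝ)) (𝓝 ξ) := by
        have h2 : Filter.Tendsto (fun l : ℝ => ξ + l • x) (𝓝 (0:ℝ)) (𝓝 (ξ + (0:ℝ) • x)) :=
          (continuous_const.add (continuous_id.smul continuous_const)).tendsto 0
        simpa using h2.mono_left nhdsWithin_le_nhds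
      have h3 : Continuous (fun A : EuclideanSpace ℝ (Fin m) →L[ℝ]
          EuclideanSpace ℝ (Fin m) →L[ℝ] ℝ =>
          A (u x) (v x) * ((1 + ‖x‖ ^ 2) ^ m)⁻¹) :=
        ((continuous_id.clm_apply continuous_const).clm_apply continuous_const).mul continuous_const
      exact (h3.tendsto _).comp ((hBcont.tendsto ξ).comp h1)
  refine ⟨?_, ?_, ?_⟩
  · -- part 1
    have heq1 : (fun l : ℝ => deriv (fun t : ℝ => deriv (fun s : ℝ => PsiFun m a s ξ) t) l)
        = fun l : ℝ => (m:ℝ) ^ m * ∫ x : EuclideanSpace ℝ (Fin m),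
            fderiv ℝ (fderiv ℝ a) (ξ + l • x) x x * ((1 + ‖x‖ ^ 2) ^ m)⁻¹ := by
      funext l
      have hin : (fun t : ℝ => deriv (fun s : ℝ => PsiFun m a s ξ) t)
          = fun t : ℝ => (m:ℝ) ^ m * ∫ x : EuclideanSpace ℝ (Fin m),
              fderiv ℝ a (ξ + t • x) x * ((1 + ‖x‖ ^ 2) ^ m)⁻¹ :=
        funext fun t => (hD1' ξ t).deriv
      rw [hin]
      exact (hD2 l).deriv
    have hib : Integrable (fun x : EuclideanSpace ℝ (Fin m) =>
        m * (m * C) * ‖x‖ * ‖x‖ * ((1 + ‖x‖ ^ 2) ^ m)⁻¹) := by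
      simpa [pow_two, mul_assoc] using hint2.const_mul (m * (m * C))
    have hT := (hTend (fun x => x) (fun x => x) continuous_id continuous_id hib).const_mul
      ((m:ℝ) ^ m)
    have hval1 : (m:ℝ) ^ m * ∫ x : EuclideanSpace ℝ (Fin m),
        fderiv ℝ (fderiv ℝ a) ξ x x * ((1 + ‖x‖ ^ 2) ^ m)⁻¹
        = C₂ * ∑ i, fderiv ℝ (fun y => fderiv ℝ a y (EuclideanSpace.single i 1)) ξ
            (EuclideanSpace.single i 1) := by
      have hexp : ∀ x : EuclideanSpace ℝ (Fin m),
          fderiv ℝ (fderiv ℝ a) ξ x x * ((1 + ‖x‖ ^ 2) ^ m)⁻¹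
          = ∑ i, ∑ j, fderiv ℝ (fderiv ℝ a) ξ (EuclideanSpace.single i 1)
              (EuclideanSpace.single j 1) * (x i * x j * ((1 + ‖x‖ ^ 2) ^ m)⁻¹) := by
        intro x
        conv_lhs => rw [Stmt4Aux.clm_expand (fderiv ℝ (fderiv ℝ a) ξ) x]
        rw [ContinuousLinearMap.sum_apply, Finset.sum_mul]
        refine Finset.sum_congr rfl fun i _ => ?_
        rw [ContinuousLinearMap.smul_apply,
          Stmt4Aux.clm_expand (fderiv ℝ (fderiv ℝ a) ξ (EuclideanSpace.single i 1)) x,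
          Finset.smul_sum, Finset.sum_mul]
        refine Finset.sum_congr rfl fun j _ => ?_
        simp only [smul_eq_mul]
        ring
      have hI : ∫ x : EuclideanSpace ℝ (Fin m),
          fderiv ℝ (fderiv ℝ a) ξ x x * ((1 + ‖x‖ ^ 2) ^ m)⁻¹
          = ∑ i, ∑ j, fderiv ℝ (fderiv ℝ a) ξ (EuclideanSpace.single i 1)
              (EuclideanSpace.single j 1) *
              ∫ x : EuclideanSpace ℝ (Fin m), x i * x j * ((1 + ‖x‖ ^ 2) ^ m)⁻¹ := by
        rw [show (fun x : EuclideanSpace ℝ (Fin m) =>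
            fderiv ℝ (fderiv ℝ a) ξ x x * ((1 + ‖x‖ ^ 2) ^ m)⁻¹)
            = fun x => ∑ i, ∑ j, fderiv ℝ (fderiv ℝ a) ξ (EuclideanSpace.single i 1)
              (EuclideanSpace.single j 1) * (x i * x j * ((1 + ‖x‖ ^ 2) ^ m)⁻¹)
            from funext hexp]
        rw [integral_finset_sum _ (fun i _ =>
          integrable_finset_sum _ (fun j _ => (hij_int i j).const_mul _))]
        refine Finset.sum_congr rfl fun i _ => ?_
        rw [integral_finset_sum _ (fun j _ => (hij_int i j).const_mul _)]
        exact Finset.sum_congr rfl fun j _ => integral_const_mul _ _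
      have hm' : ((m:ℝ)) ≠ 0 := by exact_mod_cast hm0.ne'
      have hsum : ∀ i : Fin m, (m:ℝ) * ∫ x : EuclideanSpace ℝ (Fin m),
          x i * x i * ((1 + ‖x‖ ^ 2) ^ m)⁻¹
          = ∫ x : EuclideanSpace ℝ (Fin m), ‖x‖ ^ 2 * ((1 + ‖x‖ ^ 2) ^ m)⁻¹ := by
        intro i
        have h1 : ∑ j : Fin m, ∫ x : EuclideanSpace ℝ (Fin m),
            x j * x j * ((1 + ‖x‖ ^ 2) ^ m)⁻¹
            = ∫ x : EuclideanSpace ℝ (Fin m), ‖x‖ ^ 2 * ((1 + ‖x‖ ^ 2) ^ m)⁻¹ := by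
          rw [← integral_finset_sum _ (fun j _ => hij_int j j)]
          congr 1
          funext x
          rw [← Finset.sum_mul]
          congr 1
          rw [← Stmt4Aux.sum_sq_coord x]
          exact Finset.sum_congr rfl fun j _ => (pow_two (x j)).symm
        have h2 : ∀ j : Fin m, ∫ x : EuclideanSpace ℝ (Fin m),
            x j * x j * ((1 + ‖x‖ ^ 2) ^ m)⁻¹
            = ∫ x : EuclideanSpace ℝ (Fin m), x i * x i * ((1 + ‖x‖ ^ 2) ^ m)⁻¹ := by
          intro j
          have h3 := Stmt4Aux.integral_sq_coord_weight (m := m) j i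
          simpa [pow_two] using h3
        rw [Finset.sum_congr rfl (fun j _ => h2 j), Finset.sum_const, Finset.card_univ,
          Fintype.card_fin, nsmul_eq_mul] at h1
        exact h1
      have hdiag : ∀ i : Fin m, ∫ x : EuclideanSpace ℝ (Fin m),
          x i * x i * ((1 + ‖x‖ ^ 2) ^ m)⁻¹
          = (m:ℝ)⁻¹ * ∫ x : EuclideanSpace ℝ (Fin m), ‖x‖ ^ 2 * ((1 + ‖x‖ ^ 2) ^ m)⁻¹ := by
        intro i
        rw [eq_inv_mul_iff_mul_eq₀ hm']
        exact hsum i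
      have hterm : ∀ i : Fin m, (∑ j, fderiv ℝ (fderiv ℝ a) ξ (EuclideanSpace.single i 1)
          (EuclideanSpace.single j 1) *
          ∫ x : EuclideanSpace ℝ (Fin m), x i * x j * ((1 + ‖x‖ ^ 2) ^ m)⁻¹)
          = fderiv ℝ (fderiv ℝ a) ξ (EuclideanSpace.single i 1) (EuclideanSpace.single i 1) *
            ((m:ℝ)⁻¹ * ∫ x : EuclideanSpace ℝ (Fin m), ‖x‖ ^ 2 * ((1 + ‖x‖ ^ 2) ^ m)⁻¹) := by
        intro i
        rw [Finset.sum_eq_single i]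
        · rw [hdiag i]
        · intro j _ hj
          rw [Stmt4Aux.integral_coord_mul_weight (Ne.symm hj), mul_zero]
        · intro h
          exact absurd (Finset.mem_univ i) h
      rw [hI, Finset.sum_congr rfl (fun i _ => hterm i), ← Finset.sum_mul]
      have hsumB : ∑ i, fderiv ℝ (fun y => fderiv ℝ a y (EuclideanSpace.single i 1)) ξ
          (EuclideanSpace.single i 1)
          = ∑ i, fderiv ℝ (fderiv ℝ a) ξ (EuclideanSpace.single i 1) (EuclideanSpace.single i 1) :=
        Finset.sum_congr rfl fun i _ => hBp ξ _ _
      rw [hC₂, hsumB]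
      have hden : (fun x : EuclideanSpace ℝ (Fin m) => ‖x‖ ^ 2 / (1 + ‖x‖ ^ 2) ^ m)
          = fun x : EuclideanSpace ℝ (Fin m) => ‖x‖ ^ 2 * ((1 + ‖x‖ ^ 2) ^ m)⁻¹ := by
        funext x
        rw [div_eq_mul_inv]
      rw [hden]
      have hpow : (m:ℝ) ^ m = (m:ℝ) ^ (m - 1) * m := by
        rw [← pow_succ]
        congr 1
        omega
      rw [hpow]
      field_simp
    rw [heq1, ← hval1]
    exact hT
  · -- part 2
    intro i j
    have hD3 : ∀ l t : ℝ, HasDerivAt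
        (fun s : ℝ => PsiFun m a l
          (ξ + t • EuclideanSpace.single i 1 + s • EuclideanSpace.single j 1))
        ((m:ℝ) ^ m * ∫ x : EuclideanSpace ℝ (Fin m),
          fderiv ℝ a (ξ + t • EuclideanSpace.single i 1 + l • x) (EuclideanSpace.single j 1) *
            ((1 + ‖x‖ ^ 2) ^ m)⁻¹) 0 := by
      intro l t
      have h := Stmt4Aux.hasDerivAt_integral (m := m) ha1
        (fun x => ξ + t • EuclideanSpace.single i 1 + l • x)
        (fun _ => EuclideanSpace.single j 1)
        (continuous_const.add (continuous_id.const_smul l)) continuous_const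
        (bound := fun x => m * C * ‖(EuclideanSpace.single j 1 : EuclideanSpace ℝ (Fin m))‖ *
          ((1 + ‖x‖ ^ 2) ^ m)⁻¹)
        (hint0.const_mul _)
        (fun x s => mul_le_mul_of_nonneg_right (hgradnorm _ _) (hwpos x).le)
        (fun s => haint
          (fun x => ξ + t • EuclideanSpace.single i 1 + l • x + s • EuclideanSpace.single j 1)
          ((continuous_const.add (continuous_id.const_smul l)).add continuous_const)) 0
      have h2 := h.const_mul ((m:ℝ) ^ m)
      have hfun : (fun s : ℝ => PsiFun m a l
          (ξ + t • EuclideanSpace.single i 1 + s • EuclideanSpace.single j 1))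
          = fun s : ℝ => (m:ℝ) ^ m * ∫ x : EuclideanSpace ℝ (Fin m),
              a ((ξ + t • EuclideanSpace.single i 1 + l • x) + s • EuclideanSpace.single j 1) *
                ((1 + ‖x‖ ^ 2) ^ m)⁻¹ := by
        funext s
        rw [hPsi]
        congr 1
        congr 1
        funext x
        rw [show ξ + t • EuclideanSpace.single i 1 + s • EuclideanSpace.single j 1 + l • x
          = (ξ + t • EuclideanSpace.single i 1 + l • x) + s • EuclideanSpace.single j 1 from
          by abel]
      rw [hfun]
      simpa using h2
    have hD4 : ∀ l : ℝ, HasDerivAt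
        (fun t : ℝ => (m:ℝ) ^ m * ∫ x : EuclideanSpace ℝ (Fin m),
          fderiv ℝ a (ξ + t • EuclideanSpace.single i 1 + l • x) (EuclideanSpace.single j 1) *
            ((1 + ‖x‖ ^ 2) ^ m)⁻¹)
        ((m:ℝ) ^ m * ∫ x : EuclideanSpace ℝ (Fin m),
          fderiv ℝ (fderiv ℝ a) (ξ + l • x) (EuclideanSpace.single i 1)
            (EuclideanSpace.single j 1) * ((1 + ‖x‖ ^ 2) ^ m)⁻¹) 0 := by
      intro l
      have h := Stmt4Aux.hasDerivAt_integral2 (m := m) hC2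
        (fun x => ξ + l • x) (fun _ => EuclideanSpace.single i 1)
        (fun _ => EuclideanSpace.single j 1)
        (continuous_const.add (continuous_id.const_smul l)) continuous_const continuous_const
        (bound := fun x => m * (m * C) *
          ‖(EuclideanSpace.single i 1 : EuclideanSpace ℝ (Fin m))‖ *
          ‖(EuclideanSpace.single j 1 : EuclideanSpace ℝ (Fin m))‖ * ((1 + ‖x‖ ^ 2) ^ m)⁻¹)
        (hint0.const_mul _)
        (fun x t => mul_le_mul_of_nonneg_right (hhessnorm _ _ _) (hwpos x).le)
        (fun t => hgint_const
          (fun x => ξ + l • x + t • EuclideanSpace.single i 1) (EuclideanSpace.single j 1)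
          ((continuous_const.add (continuous_id.const_smul l)).add continuous_const)) 0
      have h2 := h.const_mul ((m:ℝ) ^ m)
      have hfun : (fun t : ℝ => (m:ℝ) ^ m * ∫ x : EuclideanSpace ℝ (Fin m),
          fderiv ℝ a (ξ + t • EuclideanSpace.single i 1 + l • x) (EuclideanSpace.single j 1) *
            ((1 + ‖x‖ ^ 2) ^ m)⁻¹)
          = fun t : ℝ => (m:ℝ) ^ m * ∫ x : EuclideanSpace ℝ (Fin m),
              fderiv ℝ a ((ξ + l • x) + t • EuclideanSpace.single i 1)
                (EuclideanSpace.single j 1) * ((1 + ‖x‖ ^ 2) ^ m)⁻¹ := by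
        funext t
        congr 1
        congr 1
        funext x
        rw [show ξ + t • EuclideanSpace.single i 1 + l • x
          = (ξ + l • x) + t • EuclideanSpace.single i 1 from by abel]
      rw [hfun]
      simpa using h2
    have heq2 : (fun l : ℝ => deriv (fun t : ℝ => deriv (fun s : ℝ => PsiFun m a l
        (ξ + t • EuclideanSpace.single i 1 + s • EuclideanSpace.single j 1)) 0) 0)
        = fun l : ℝ => (m:ℝ) ^ m * ∫ x : EuclideanSpace ℝ (Fin m),
            fderiv ℝ (fderiv ℝ a) (ξ + l • x) (EuclideanSpace.single i 1)
              (EuclideanSpace.single j 1) * ((1 + ‖x‖ ^ 2) ^ m)⁻¹ := by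
      funext l
      have hin : (fun t : ℝ => deriv (fun s : ℝ => PsiFun m a l
          (ξ + t • EuclideanSpace.single i 1 + s • EuclideanSpace.single j 1)) 0)
          = fun t : ℝ => (m:ℝ) ^ m * ∫ x : EuclideanSpace ℝ (Fin m),
              fderiv ℝ a (ξ + t • EuclideanSpace.single i 1 + l • x)
                (EuclideanSpace.single j 1) * ((1 + ‖x‖ ^ 2) ^ m)⁻¹ :=
        funext fun t => (hD3 l t).deriv
      rw [hin]
      exact (hD4 l).deriv
    have hib : Integrable (fun x : EuclideanSpace ℝ (Fin m) => m * (m * C) *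
        ‖(EuclideanSpace.single i 1 : EuclideanSpace ℝ (Fin m))‖ *
        ‖(EuclideanSpace.single j 1 : EuclideanSpace ℝ (Fin m))‖ *
        ((1 + ‖x‖ ^ 2) ^ m)⁻¹) := by
      simpa [EuclideanSpace.norm_single] using hint0.const_mul (m * (m * C))
    have hT := (hTend (fun _ => EuclideanSpace.single i 1) (fun _ => EuclideanSpace.single j 1)
      continuous_const continuous_const hib).const_mul ((m:ℝ) ^ m)
    have hval : (m:ℝ) ^ m * ∫ x : EuclideanSpace ℝ (Fin m),
        fderiv ℝ (fderiv ℝ a) ξ (EuclideanSpace.single i 1) (EuclideanSpace.single j 1) *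
          ((1 + ‖x‖ ^ 2) ^ m)⁻¹
        = C₁ * fderiv ℝ (fun y => fderiv ℝ a y (EuclideanSpace.single j 1)) ξ
            (EuclideanSpace.single i 1) := by
      rw [integral_const_mul, ← hBp ξ (EuclideanSpace.single i 1) (EuclideanSpace.single j 1), hC₁]
      have hden : (fun x : EuclideanSpace ℝ (Fin m) => 1 / (1 + ‖x‖ ^ 2) ^ m)
          = fun x : EuclideanSpace ℝ (Fin m) => ((1 + ‖x‖ ^ 2) ^ m)⁻¹ := by
        funext x
        rw [one_div]
      rw [hden]
      ring
    rw [heq2, ← hval]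
    exact hT
  · -- part 3
    intro i
    have hD5 : ∀ l : ℝ, HasDerivAt
        (fun t : ℝ => (m:ℝ) ^ m * ∫ x : EuclideanSpace ℝ (Fin m),
          fderiv ℝ a (ξ + t • EuclideanSpace.single i 1 + l • x) x * ((1 + ‖x‖ ^ 2) ^ m)⁻¹)
        ((m:ℝ) ^ m * ∫ x : EuclideanSpace ℝ (Fin m),
          fderiv ℝ (fderiv ℝ a) (ξ + l • x) (EuclideanSpace.single i 1) x *
            ((1 + ‖x‖ ^ 2) ^ m)⁻¹) 0 := by
      intro l
      have h := Stmt4Aux.hasDerivAt_integral2 (m := m) hC2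
        (fun x => ξ + l • x) (fun _ => EuclideanSpace.single i 1) (fun x => x)
        (continuous_const.add (continuous_id.const_smul l)) continuous_const continuous_id
        (bound := fun x => m * (m * C) *
          ‖(EuclideanSpace.single i 1 : EuclideanSpace ℝ (Fin m))‖ * ‖x‖ *
          ((1 + ‖x‖ ^ 2) ^ m)⁻¹)
        (by simpa [EuclideanSpace.norm_single, mul_assoc] using
          hint1.const_mul (m * (m * C)))
        (fun x t => mul_le_mul_of_nonneg_right (hhessnorm _ _ _) (hwpos x).le)
        (fun t => hgint_id (fun x => ξ + l • x + t • EuclideanSpace.single i 1)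
          ((continuous_const.add (continuous_id.const_smul l)).add continuous_const)) 0
      have h2 := h.const_mul ((m:ℝ) ^ m)
      have hfun : (fun t : ℝ => (m:ℝ) ^ m * ∫ x : EuclideanSpace ℝ (Fin m),
          fderiv ℝ a (ξ + t • EuclideanSpace.single i 1 + l • x) x * ((1 + ‖x‖ ^ 2) ^ m)⁻¹)
          = fun t : ℝ => (m:ℝ) ^ m * ∫ x : EuclideanSpace ℝ (Fin m),
              fderiv ℝ a ((ξ + l • x) + t • EuclideanSpace.single i 1) x *
                ((1 + ‖x‖ ^ 2) ^ m)⁻¹ := by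
        funext t
        congr 1
        congr 1
        funext x
        rw [show ξ + t • EuclideanSpace.single i 1 + l • x
          = (ξ + l • x) + t • EuclideanSpace.single i 1 from by abel]
      rw [hfun]
      simpa using h2
    have heq3 : (fun l : ℝ => deriv (fun t : ℝ => deriv (fun s : ℝ => PsiFun m a s
        (ξ + t • EuclideanSpace.single i 1)) l) 0)
        = fun l : ℝ => (m:ℝ) ^ m * ∫ x : EuclideanSpace ℝ (Fin m),
            fderiv ℝ (fderiv ℝ a) (ξ + l • x) (EuclideanSpace.single i 1) x *
              ((1 + ‖x‖ ^ 2) ^ m)⁻¹ := by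
      funext l
      have hin : (fun t : ℝ => deriv (fun s : ℝ => PsiFun m a s
          (ξ + t • EuclideanSpace.single i 1)) l)
          = fun t : ℝ => (m:ℝ) ^ m * ∫ x : EuclideanSpace ℝ (Fin m),
              fderiv ℝ a (ξ + t • EuclideanSpace.single i 1 + l • x) x *
                ((1 + ‖x‖ ^ 2) ^ m)⁻¹ :=
        funext fun t => (hD1' (ξ + t • EuclideanSpace.single i 1) l).deriv
      rw [hin]
      exact (hD5 l).deriv
    have hib : Integrable (fun x : EuclideanSpace ℝ (Fin m) => m * (m * C) *
        ‖(EuclideanSpace.single i 1 : EuclideanSpace ℝ (Fin m))‖ * ‖x‖ *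
        ((1 + ‖x‖ ^ 2) ^ m)⁻¹) := by
      simpa [EuclideanSpace.norm_single, mul_assoc] using hint1.const_mul (m * (m * C))
    have hT := (hTend (fun _ => EuclideanSpace.single i 1) (fun x => x)
      continuous_const continuous_id hib).const_mul ((m:ℝ) ^ m)
    have hzero : ∫ x : EuclideanSpace ℝ (Fin m),
        fderiv ℝ (fderiv ℝ a) ξ (EuclideanSpace.single i 1) x * ((1 + ‖x‖ ^ 2) ^ m)⁻¹ = 0 := by
      have hexp1 : (fun x : EuclideanSpace ℝ (Fin m) =>
          fderiv ℝ (fderiv ℝ a) ξ (EuclideanSpace.single i 1) x * ((1 + ‖x‖ ^ 2) ^ m)⁻¹)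
          = fun x : EuclideanSpace ℝ (Fin m) => ∑ j, fderiv ℝ (fderiv ℝ a) ξ
              (EuclideanSpace.single i 1) (EuclideanSpace.single j 1) *
              (x j * ((1 + ‖x‖ ^ 2) ^ m)⁻¹) := by
        funext x
        rw [Stmt4Aux.clm_expand (fderiv ℝ (fderiv ℝ a) ξ (EuclideanSpace.single i 1)) x,
          Finset.sum_mul]
        refine Finset.sum_congr rfl fun j _ => ?_
        simp only [smul_eq_mul]
        ring
      rw [hexp1, integral_finset_sum _ (fun j _ => (hj_int j).const_mul _)]
      refine Finset.sum_eq_zero fun j _ => ?_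
      rw [integral_const_mul, Stmt4Aux.integral_coord_weight, mul_zero]
    rw [heq3]
    rw [hzero] at hT
    simpa using hT
end

section
/- Let m ≥ 2 and let a : ℝᵐ → ℝ be continuously differentiable with |∇a(x)| ≤ C (1+|x|²)⁻¹ for some C > 0 and all x. Assume there exists R₀ > 0 such that ∇a(x)·x < 0 for all |x| ≥ R₀ and ∫_{B_R} ∇a(x)·x dx < 0 for every R > R₀. Then there exists R > 0 such that for all λ > 0 and ξ ∈ ℝᵐ with λ² + |ξ|² ≥ R², one has ∫_{ℝᵐ} (∇a(λx+ξ)·(λx+ξ))/(1+|x|²)ᵐ dx < 0; equivalently, λ ∂_λΨ(λ,ξ) + ξ·∇_ξΨ(λ,ξ) < 0 on this region. -/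
open MeasureTheory
open scoped RealInnerProductSpace Topology

theorem aux_pow_sub (K : ℝ) : ∀ (n : ℕ) (A B : ℝ), 0 ≤ A → 0 ≤ B → A ≤ K → B ≤ K →
    |A^n - B^n| ≤ n * K^(n-1) * |A - B| := by
  intro n
  induction n with
  | zero => intro A B _ _ _ _; simp
  | succ k ih =>
    intro A B hA hB hAK hBK
    have hK : 0 ≤ K := le_trans hA hAK
    have key : A^(k+1) - B^(k+1) = A * (A^k - B^k) + B^k * (A - B) := by ring
    have h1 : |A^(k+1) - B^(k+1)| ≤ A * |A^k - B^k| + B^k * |A - B| := by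
      rw [key]
      refine (abs_add_le _ _).trans ?_
      rw [abs_mul, abs_mul, abs_of_nonneg hA, abs_of_nonneg (pow_nonneg hB k)]
    have h2 : A * |A^k - B^k| ≤ K * (k * K^(k-1) * |A - B|) :=
      mul_le_mul hAK (ih A B hA hB hAK hBK) (abs_nonneg _)
        (le_trans hA hAK) |>.trans_eq rfl
    have h3 : B^k * |A - B| ≤ K^k * |A - B| :=
      mul_le_mul_of_nonneg_right (pow_le_pow_left₀ hB hBK k) (abs_nonneg _)
    have h4 : K * (k * K^(k-1) * |A - B|) + K^k * |A - B| ≤ (k+1) * K^k * |A - B| := by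
      rcases Nat.eq_zero_or_pos k with rfl | hk
      · simp
      · obtain ⟨j, rfl⟩ : ∃ j, k = j + 1 := ⟨k-1, by omega⟩
        have : K * ((j+1 : ℕ) * K^(j+1-1) * |A - B|) = (j+1 : ℕ) * K^(j+1) * |A - B| := by
          rw [show (j+1)-1 = j by omega, pow_succ]; ring
        rw [this]
        nlinarith [abs_nonneg (A - B), pow_nonneg hK (j+1)]
    calc |A^(k+1) - B^(k+1)| ≤ K * (k * K^(k-1) * |A - B|) + K^k * |A - B| :=
          h1.trans (add_le_add h2 h3)
      _ ≤ (k+1) * K^k * |A - B| := h4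
      _ = (↑(k+1)) * K^((k+1)-1) * |A - B| := by norm_num

theorem aux_weight (m : ℕ) (hm : 1 ≤ m) (A B ε : ℝ) (hA : 1 ≤ A) (hB : 1 ≤ B)
    (hε : 0 ≤ ε) (hεh : ε ≤ 1/2) (hAB : |A - B| ≤ ε * B) :
    |(A^m)⁻¹ - (B^m)⁻¹| ≤ ε * (m * 3^m) * (B^m)⁻¹ := by
  obtain ⟨k, rfl⟩ : ∃ k, m = k + 1 := ⟨m-1, by omega⟩
  have hB0 : (0:ℝ) < B := by linarith
  have hA0 : (0:ℝ) < A := by linarith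
  have habs := abs_le.mp hAB
  have hAle : A ≤ (3/2) * B := by nlinarith
  have hAge : B/2 ≤ A := by nlinarith
  have hKB : B ≤ (3/2) * B := by nlinarith
  have h1 : |A^(k+1) - B^(k+1)| ≤ (k+1) * ((3/2)*B)^k * (ε * B) := by
    have := aux_pow_sub ((3/2)*B) (k+1) A B hA0.le hB0.le hAle hKB
    rw [show (k+1)-1 = k by omega] at this
    refine this.trans ?_
    have h0 : (0:ℝ) ≤ (k+1 : ℕ) * ((3/2)*B)^k := by positivity
    calc ((k+1:ℕ) : ℝ) * ((3/2)*B)^k * |A - B| ≤ (k+1:ℕ) * ((3/2)*B)^k * (ε * B) := by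
          exact mul_le_mul_of_nonneg_left hAB h0
      _ = (k+1) * ((3/2)*B)^k * (ε * B) := by push_cast; ring
  have h2 : (B/2)^(k+1) ≤ A^(k+1) := pow_le_pow_left₀ (by positivity) hAge _
  have hAm : (0:ℝ) < A^(k+1) := by positivity
  have hBm : (0:ℝ) < B^(k+1) := by positivity
  rw [inv_sub_inv hAm.ne' hBm.ne', abs_div, abs_of_pos (by positivity : (0:ℝ) < A^(k+1)*B^(k+1))]
  have hden : (0:ℝ) < (B/2)^(k+1) * B^(k+1) := by positivity
  calc |B^(k+1) - A^(k+1)| / (A^(k+1) * B^(k+1))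
      ≤ ((k+1) * ((3/2)*B)^k * (ε * B)) / ((B/2)^(k+1) * B^(k+1)) := by
        apply div_le_div₀ (by positivity) (by rw [abs_sub_comm]; exact h1) hden
        exact mul_le_mul_of_nonneg_right h2 hBm.le
    _ = ε * ((k+1) * (2 * 3^k)) * (B^(k+1))⁻¹ := by
        rw [mul_pow, div_pow (3:ℝ) 2 k, div_pow B 2 (k+1)]
        have h2k : (2:ℝ)^k ≠ 0 := by positivity
        have h2k1 : (2:ℝ)^(k+1) ≠ 0 := by positivity
        field_simp
        ring
    _ ≤ ε * ((k+1) * 3^(k+1)) * (B^(k+1))⁻¹ := by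
        have h3 : (2:ℝ) * 3^k ≤ 3^(k+1) := by
          rw [pow_succ]; nlinarith [pow_pos (show (0:ℝ) < 3 by norm_num) k]
        gcongr
    _ = ε * (↑(k+1) * 3^(k+1)) * (B^(k+1))⁻¹ := by push_cast; ring

theorem aux_cov (m : ℕ) (F : EuclideanSpace ℝ (Fin m) → ℝ) (l : ℝ) (hl : 0 < l)
    (ξ : EuclideanSpace ℝ (Fin m)) :
    ∫ x, F (l • x + ξ) = (l ^ m)⁻¹ * ∫ x, F x := by
  have h1 : ∀ x : EuclideanSpace ℝ (Fin m), l • x + ξ = l • (x + l⁻¹ • ξ) := by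
    intro x
    rw [smul_add, smul_smul, mul_inv_cancel₀ hl.ne', one_smul]
  calc ∫ x, F (l • x + ξ) = ∫ x, (fun y => F (l • y)) (x + l⁻¹ • ξ) := by
        simp_rw [h1]
    _ = ∫ x, F (l • x) := integral_add_right_eq_self (fun y => F (l • y)) (l⁻¹ • ξ)
    _ = (l ^ m)⁻¹ * ∫ x, F x := by
        rw [MeasureTheory.Measure.integral_comp_smul volume F l, finrank_euclideanSpace_fin,
          abs_of_nonneg (by positivity), smul_eq_mul]

set_option maxHeartbeats 2000000 in
theorem stmt6 (m : ℕ) (hm : 2 ≤ m) (a : EuclideanSpace ℝ (Fin m) → ℝ)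
    (hC1 : ContDiff ℝ 1 a) (C : ℝ) (hC : 0 < C)
    (hgrad : ∀ x, ‖gradient a x‖ ≤ C * (1 + ‖x‖ ^ 2)⁻¹)
    (R₀ : ℝ) (hR₀ : 0 < R₀)
    (hneg : ∀ x : EuclideanSpace ℝ (Fin m), R₀ ≤ ‖x‖ → ⟪gradient a x, x⟫ < 0)
    (hint : ∀ R : ℝ, R₀ < R →
      (∫ x in Metric.ball (0 : EuclideanSpace ℝ (Fin m)) R, ⟪gradient a x, x⟫) < 0) :
    ∃ R > (0 : ℝ), ∀ (l : ℝ), 0 < l → ∀ ξ : EuclideanSpace ℝ (Fin m),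
      R ^ 2 ≤ l ^ 2 + ‖ξ‖ ^ 2 →
        (∫ x : EuclideanSpace ℝ (Fin m),
          ⟪gradient a (l • x + ξ), l • x + ξ⟫ / (1 + ‖x‖ ^ 2) ^ m) < 0 := by
  classical
  haveI hne : Nonempty (Fin m) := ⟨⟨0, by omega⟩⟩
  set g : EuclideanSpace ℝ (Fin m) → ℝ := fun y => ⟪gradient a y, y⟫ with hg_def
  set w : EuclideanSpace ℝ (Fin m) → ℝ := fun x => ((1 + ‖x‖^2)^m)⁻¹ with hw_def
  have hg_cont : Continuous g := by
    have h1 : Continuous fun y : EuclideanSpace ℝ (Fin m) => gradient a y :=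
      ((InnerProductSpace.toDual ℝ _).symm.continuous).comp (hC1.continuous_fderiv one_ne_zero)
    exact h1.inner continuous_id
  have hg_bound : ∀ y, |g y| ≤ C/2 := by
    intro y
    have h0 : (0:ℝ) < 1 + ‖y‖^2 := by positivity
    calc |g y| ≤ ‖gradient a y‖ * ‖y‖ := abs_real_inner_le_norm _ _
      _ ≤ (C * (1+‖y‖^2)⁻¹) * ‖y‖ := mul_le_mul_of_nonneg_right (hgrad y) (norm_nonneg y)
      _ ≤ C/2 := by
          rw [show C * (1+‖y‖^2)⁻¹ * ‖y‖ = C * ‖y‖ / (1+‖y‖^2) by ring, div_le_iff₀ h0]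
          nlinarith [sq_nonneg (‖y‖ - 1), norm_nonneg y, hC.le]
  have hw_pos : ∀ x, 0 < w x := fun x => by positivity
  have hw_cont : Continuous w := by
    have h1 : Continuous fun x : EuclideanSpace ℝ (Fin m) => (1+‖x‖^2)^m := by continuity
    exact h1.inv₀ (fun x => by positivity)
  have hw_int : Integrable w := by
    have h1 : Integrable (fun x : EuclideanSpace ℝ (Fin m) => ((1:ℝ) + ‖x‖^2) ^ (-(2*m : ℝ)/2))
        volume := by
      apply integrable_rpow_neg_one_add_norm_sq
      rw [finrank_euclideanSpace_fin]
      have : (0:ℝ) < m := by exact_mod_cast (by omega : 0 < m)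
      push_cast
      linarith
    have h2 : ∀ x : EuclideanSpace ℝ (Fin m), ((1:ℝ)+‖x‖^2) ^ (-(2*m:ℝ)/2) = ((1+‖x‖^2)^m)⁻¹ := by
      intro x
      have hb : (0:ℝ) < 1 + ‖x‖^2 := by positivity
      rw [show (-(2*(m:ℝ))/2) = -(m:ℝ) by ring, Real.rpow_neg hb.le, Real.rpow_natCast]
    simpa only [h2] using h1
  set R₁ : ℝ := 2*R₀ with hR₁_def
  have hR₁ : 0 < R₁ := by positivity
  set I : ℝ := ∫ y in Metric.ball (0 : EuclideanSpace ℝ (Fin m)) R₁, g y with hI_def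
  have hI : I < 0 := hint R₁ (by simp only [hR₁_def]; linarith)
  set V : ℝ := (volume (Metric.ball (0 : EuclideanSpace ℝ (Fin m)) R₁)).toReal with hV_def
  have hV : 0 < V :=
    ENNReal.toReal_pos (Metric.measure_ball_pos volume _ hR₁).ne' measure_ball_lt_top.ne
  set M : ℝ := C/2 with hM_def
  have hM : 0 < M := by positivity
  set D : ℝ := (m:ℝ) * 3^m with hD_def
  have hD : 0 < D := by
    have : (0:ℝ) < m := by exact_mod_cast (by omega : 0 < m)
    positivity
  set ε₀ : ℝ := min (1/2 : ℝ) ((-I) / (2*(M*V*D))) with hε₀_def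
  have hε₀_pos : 0 < ε₀ := lt_min (by norm_num) (div_pos (by linarith) (by positivity))
  have hε₀_half : ε₀ ≤ 1/2 := min_le_left _ _
  have hε₀_key : ε₀ * (M*V*D) ≤ -I/2 := by
    have h := min_le_right (1/2 : ℝ) ((-I) / (2*(M*V*D)))
    have hXpos : (0:ℝ) < M*V*D := by positivity
    calc ε₀ * (M*V*D) ≤ ((-I) / (2*(M*V*D))) * (M*V*D) :=
          mul_le_mul_of_nonneg_right h hXpos.le
      _ = -I/2 := by field_simp
  refine ⟨max R₁ (3*R₁/ε₀), lt_of_lt_of_le hR₁ (le_max_left _ _), ?_⟩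
  intro l hl ξ hlξ
  set ρ : ℝ := Real.sqrt (l^2 + ‖ξ‖^2) with hρ_def
  have hρ_sq : ρ^2 = l^2+‖ξ‖^2 := Real.sq_sqrt (by positivity)
  have hRρ : max R₁ (3*R₁/ε₀) ≤ ρ := by
    have h0 : 0 ≤ max R₁ (3*R₁/ε₀) := le_trans hR₁.le (le_max_left _ _)
    rw [hρ_def]
    exact (Real.le_sqrt h0 (by positivity)).mpr hlξ
  have hρ_pos : 0 < ρ := lt_of_lt_of_le (lt_of_lt_of_le hR₁ (le_max_left _ _)) hRρ
  have hξρ : ‖ξ‖ ≤ ρ := by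
    rw [show ‖ξ‖ = Real.sqrt (‖ξ‖^2) from (Real.sqrt_sq (norm_nonneg ξ)).symm, hρ_def]
    exact Real.sqrt_le_sqrt (by nlinarith [sq_nonneg l])
  have hden_pos : 0 < l^2+‖ξ‖^2 := by positivity
  set ε : ℝ := (2*R₁*‖ξ‖ + R₁^2) / (l^2 + ‖ξ‖^2) with hε_def
  have hε_nonneg : 0 ≤ ε := by positivity
  have hε_le : ε ≤ ε₀ := by
    rw [hε_def, div_le_iff₀ hden_pos]
    have h1 : R₁ ≤ ρ := le_trans (le_max_left _ _) hRρ
    have h2 : 3*R₁/ε₀ ≤ ρ := le_trans (le_max_right _ _) hRρ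
    have h3 : 3*R₁ ≤ ε₀*ρ := by
      rw [div_le_iff₀ hε₀_pos] at h2; linarith [mul_comm ε₀ ρ]
    have h4 : 2*R₁*‖ξ‖ + R₁^2 ≤ 3*R₁*ρ := by nlinarith
    calc 2*R₁*‖ξ‖ + R₁^2 ≤ 3*R₁*ρ := h4
      _ ≤ (ε₀*ρ)*ρ := by nlinarith
      _ = ε₀ * (l^2+‖ξ‖^2) := by rw [← hρ_sq]; ring
  set c : EuclideanSpace ℝ (Fin m) := (-(l⁻¹)) • ξ with hc_def
  have hlc : l • c = -ξ := by
    rw [hc_def, smul_smul, mul_neg, mul_inv_cancel₀ hl.ne', neg_smul, one_smul]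
  have haff : ∀ x : EuclideanSpace ℝ (Fin m), l • x + ξ = l • (x - c) := by
    intro x; rw [smul_sub, hlc, sub_neg_eq_add]
  have hnorm_aff : ∀ x : EuclideanSpace ℝ (Fin m), ‖l • x + ξ‖ = l * ‖x - c‖ := by
    intro x; rw [haff, norm_smul, Real.norm_eq_abs, abs_of_pos hl]
  have hc_norm : ‖c‖ = ‖ξ‖ / l := by
    rw [hc_def, norm_smul, Real.norm_eq_abs, abs_neg, abs_inv, abs_of_pos hl]
    ring
  set r : ℝ := R₁ / l with hr_def
  have hr_pos : 0 < r := by positivity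
  have hmem : ∀ x : EuclideanSpace ℝ (Fin m),
      (l • x + ξ ∈ Metric.ball (0 : EuclideanSpace ℝ (Fin m)) R₁) ↔ x ∈ Metric.ball c r := by
    intro x
    rw [mem_ball_zero_iff, Metric.mem_ball, dist_eq_norm, hnorm_aff, hr_def,
      lt_div_iff₀ hl, mul_comm]
  -- weight estimate on the ball
  have hw_est : ∀ x ∈ Metric.ball c r, |w x - w c| ≤ ε₀ * D * w c := by
    intro x hx
    have hxc : ‖x - c‖ < r := by rwa [Metric.mem_ball, dist_eq_norm] at hx
    have hA1 : (1:ℝ) ≤ 1 + ‖x‖^2 := by nlinarith [sq_nonneg ‖x‖]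
    have hB1 : (1:ℝ) ≤ 1 + ‖c‖^2 := by nlinarith [sq_nonneg ‖c‖]
    have hABd : |(1+‖x‖^2) - (1+‖c‖^2)| ≤ ε * (1+‖c‖^2) := by
      have h1 : |‖x‖ - ‖c‖| ≤ ‖x - c‖ := abs_norm_sub_norm_le x c
      have h1' : |‖x‖ - ‖c‖| ≤ r := h1.trans hxc.le
      have h2 := abs_le.mp h1'
      have h3 : |(1+‖x‖^2) - (1+‖c‖^2)| = |‖x‖ - ‖c‖| * (‖x‖ + ‖c‖) := by
        rw [show (1+‖x‖^2) - (1+‖c‖^2) = (‖x‖ - ‖c‖) * (‖x‖ + ‖c‖) by ring, abs_mul,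
          abs_of_nonneg (by positivity : (0:ℝ) ≤ ‖x‖ + ‖c‖)]
      have h4 : |‖x‖ - ‖c‖| * (‖x‖ + ‖c‖) ≤ r * (2*‖c‖ + r) := by
        apply mul_le_mul h1' (by linarith) (by positivity) hr_pos.le
      have h5 : ε * (1 + ‖c‖^2) = r * (2*‖c‖ + r) := by
        rw [hε_def, hc_norm, hr_def]
        field_simp
      rw [h3, h5]
      exact h4
    have key := aux_weight m (by omega) (1+‖x‖^2) (1+‖c‖^2) ε hA1 hB1 hε_nonneg
      (hε_le.trans hε₀_half) hABd
    have hwc : w c = ((1+‖c‖^2)^m)⁻¹ := rfl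
    have hwx : w x = ((1+‖x‖^2)^m)⁻¹ := rfl
    rw [hwx, hwc]
    refine key.trans ?_
    rw [← hD_def]
    have : (0:ℝ) ≤ ((1+‖c‖^2)^m)⁻¹ := by positivity
    exact mul_le_mul_of_nonneg_right (mul_le_mul_of_nonneg_right hε_le hD.le) this
  -- integrability of the full integrand
  have hgl_cont : Continuous (fun x : EuclideanSpace ℝ (Fin m) => g (l • x + ξ)) :=
    hg_cont.comp ((continuous_const_smul l).add continuous_const)
  have hh_cont : Continuous (fun x : EuclideanSpace ℝ (Fin m) => g (l • x + ξ) * w x) :=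
    hgl_cont.mul hw_cont
  have hh_int : Integrable (fun x : EuclideanSpace ℝ (Fin m) => g (l • x + ξ) * w x) := by
    refine (hw_int.const_mul M).mono' hh_cont.aestronglyMeasurable
      (Filter.Eventually.of_forall fun x => ?_)
    have h1 : ‖g (l • x + ξ) * w x‖ = |g (l • x + ξ)| * w x := by
      rw [norm_mul, Real.norm_eq_abs, Real.norm_eq_abs, abs_of_pos (hw_pos x)]
    rw [h1]
    exact mul_le_mul_of_nonneg_right (hg_bound _) (hw_pos x).le
  -- split integral
  have hsplit :
      (∫ x in Metric.ball c r, g (l • x + ξ) * w x)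
        + ∫ x in (Metric.ball c r)ᶜ, g (l • x + ξ) * w x
      = ∫ x : EuclideanSpace ℝ (Fin m), g (l • x + ξ) * w x :=
    integral_add_compl Metric.isOpen_ball.measurableSet hh_int
  have hcompl : (∫ x in (Metric.ball c r)ᶜ, g (l • x + ξ) * w x) ≤ 0 := by
    apply setIntegral_nonpos_ae Metric.isOpen_ball.measurableSet.compl
    refine Filter.Eventually.of_forall fun x hx => ?_
    have hnot : l • x + ξ ∉ Metric.ball (0 : EuclideanSpace ℝ (Fin m)) R₁ := fun h =>
      hx ((hmem x).mp h)
    rw [mem_ball_zero_iff, not_lt] at hnot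
    have hneg' : g (l • x + ξ) < 0 := hneg _ (by simp only [hR₁_def] at hnot; linarith)
    exact mul_nonpos_of_nonpos_of_nonneg hneg'.le (hw_pos x).le
  -- integrability on ball of pieces
  have hi1 : IntegrableOn (fun x : EuclideanSpace ℝ (Fin m) => g (l • x + ξ) * w c)
      (Metric.ball c r) := by
    refine ((hgl_cont.mul continuous_const).continuousOn.integrableOn_compact
      (isCompact_closedBall c r)).mono_set Metric.ball_subset_closedBall
  have hi2 : IntegrableOn (fun x : EuclideanSpace ℝ (Fin m) => g (l • x + ξ) * (w x - w c))
      (Metric.ball c r) := by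
    refine ((hgl_cont.mul (hw_cont.sub continuous_const)).continuousOn.integrableOn_compact
      (isCompact_closedBall c r)).mono_set Metric.ball_subset_closedBall
  have hdecomp : (∫ x in Metric.ball c r, g (l • x + ξ) * w x)
      = (∫ x in Metric.ball c r, g (l • x + ξ) * w c)
        + ∫ x in Metric.ball c r, g (l • x + ξ) * (w x - w c) := by
    rw [← integral_add hi1 hi2]
    congr 1
    funext x
    ring
  -- main term
  have hmain : (∫ x in Metric.ball c r, g (l • x + ξ) * w c) = w c * ((l^m)⁻¹ * I) := by
    rw [integral_mul_const]
    have e1 : (∫ x in Metric.ball c r, g (l • x + ξ))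
        = ∫ x : EuclideanSpace ℝ (Fin m),
            Set.indicator (Metric.ball (0 : EuclideanSpace ℝ (Fin m)) R₁) g (l • x + ξ) := by
      rw [← integral_indicator Metric.isOpen_ball.measurableSet]
      congr 1
      funext x
      by_cases hx : x ∈ Metric.ball c r
      · rw [Set.indicator_of_mem hx, Set.indicator_of_mem ((hmem x).mpr hx)]
      · rw [Set.indicator_of_notMem hx, Set.indicator_of_notMem (fun h => hx ((hmem x).mp h))]
    rw [e1, aux_cov m _ l hl ξ, integral_indicator Metric.isOpen_ball.measurableSet, ← hI_def]
    ring
  -- volume of the ball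
  have hvol : (volume (Metric.ball c r)).toReal = (l^m)⁻¹ * V := by
    have hu : V = R₁^m * (volume (Metric.ball (0 : EuclideanSpace ℝ (Fin m)) 1)).toReal := by
      rw [hV_def, Measure.addHaar_ball volume _ hR₁.le, finrank_euclideanSpace_fin,
        ENNReal.toReal_mul, ENNReal.toReal_ofReal (by positivity)]
    rw [Measure.addHaar_ball volume _ hr_pos.le, finrank_euclideanSpace_fin,
      ENNReal.toReal_mul, ENNReal.toReal_ofReal (by positivity), hu, hr_def, div_pow]
    field_simp
  -- error term
  have herr : |∫ x in Metric.ball c r, g (l • x + ξ) * (w x - w c)|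
      ≤ M * (ε₀ * D * w c) * ((l^m)⁻¹ * V) := by
    have hb : ∀ x ∈ Metric.ball c r, ‖g (l • x + ξ) * (w x - w c)‖ ≤ M * (ε₀ * D * w c) := by
      intro x hx
      rw [norm_mul, Real.norm_eq_abs, Real.norm_eq_abs]
      exact mul_le_mul (hg_bound _) (hw_est x hx) (abs_nonneg _) hM.le
    have := norm_setIntegral_le_of_norm_le_const
      (measure_ball_lt_top : volume (Metric.ball c r) < ⊤) hb
    rw [Real.norm_eq_abs] at this
    calc |∫ x in Metric.ball c r, g (l • x + ξ) * (w x - w c)|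
        ≤ M * (ε₀ * D * w c) * (volume (Metric.ball c r)).toReal := this
      _ = M * (ε₀ * D * w c) * ((l^m)⁻¹ * V) := by rw [hvol]
  -- combine
  have hwc : 0 < w c := hw_pos c
  have hball : (∫ x in Metric.ball c r, g (l • x + ξ) * w x) ≤ (l^m)⁻¹ * w c * (I/2) := by
    rw [hdecomp, hmain]
    have h2 : (∫ x in Metric.ball c r, g (l • x + ξ) * (w x - w c))
        ≤ M * (ε₀ * D * w c) * ((l^m)⁻¹ * V) := (le_abs_self _).trans herr
    have h3 : M * (ε₀ * D * w c) * ((l^m)⁻¹ * V) ≤ (l^m)⁻¹ * w c * (-I/2) := by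
      calc M * (ε₀ * D * w c) * ((l^m)⁻¹ * V) = (ε₀ * (M*V*D)) * ((l^m)⁻¹ * w c) := by ring
        _ ≤ (-I/2) * ((l^m)⁻¹ * w c) := mul_le_mul_of_nonneg_right hε₀_key (by positivity)
        _ = (l^m)⁻¹ * w c * (-I/2) := by ring
    have h4 : w c * ((l^m)⁻¹ * I) + (l^m)⁻¹ * w c * (-I/2) = (l^m)⁻¹ * w c * (I/2) := by ring
    linarith
  have hfin : (l^m)⁻¹ * w c * (I/2) < 0 := by
    apply mul_neg_of_pos_of_neg (by positivity) (by linarith)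
  have hgoal_eq : (∫ x : EuclideanSpace ℝ (Fin m),
      ⟪gradient a (l • x + ξ), l • x + ξ⟫ / (1 + ‖x‖ ^ 2) ^ m)
      = ∫ x : EuclideanSpace ℝ (Fin m), g (l • x + ξ) * w x := by
    rfl
  rw [hgoal_eq, ← hsplit]
  linarith
end

section
/- Let m ≥ 2 and let a : ℝᵐ → ℝ be bounded and continuously differentiable with |∇a(x)| ≤ C (1+|x|²)⁻¹ for some C > 0 and all x. Then the full gradient of Ψ tends to zero at infinity: ∂_λΨ(λ,ξ) → 0 and ∂_{ξᵢ}Ψ(λ,ξ) → 0 for each i, as λ + |ξ| → ∞ with λ > 0. -/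
open MeasureTheory
open scoped RealInnerProductSpace Topology


lemma g_cont (m : ℕ) : Continuous
    (fun x : EuclideanSpace ℝ (Fin m) => (1 + ‖x‖) * ((1 + ‖x‖ ^ 2) ^ m)⁻¹) := by
  have hne : ∀ y : EuclideanSpace ℝ (Fin m), (1 + ‖y‖ ^ 2) ^ m ≠ 0 := by
    intro y; positivity
  exact (continuous_const.add continuous_norm).mul
    (((continuous_const.add (continuous_norm.pow 2)).pow m).inv₀ hne)

lemma g_integrable (m : ℕ) (hm : 2 ≤ m) :
    Integrable (fun x : EuclideanSpace ℝ (Fin m) => (1 + ‖x‖) * ((1 + ‖x‖ ^ 2) ^ m)⁻¹) := by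
  have hr : (Module.finrank ℝ (EuclideanSpace ℝ (Fin m)) : ℝ) < (2 * m - 1 : ℝ) := by
    rw [finrank_euclideanSpace_fin]
    have : (2:ℝ) ≤ m := by exact_mod_cast hm
    nlinarith
  have hInt := integrable_rpow_neg_one_add_norm_sq (E := EuclideanSpace ℝ (Fin m))
    (μ := volume) (r := 2 * m - 1) hr
  refine (hInt.const_mul 2).mono' (g_cont m).aestronglyMeasurable
    (Filter.Eventually.of_forall fun x => ?_)
  set s : ℝ := 1 + ‖x‖ ^ 2 with hsdef
  have hs : (0:ℝ) < s := by positivity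
  have key : s ^ (-(2 * (m:ℝ) - 1) / 2) = s ^ ((1:ℝ)/2) * ((s:ℝ) ^ m)⁻¹ := by
    rw [← Real.rpow_natCast s m, ← Real.rpow_neg hs.le, ← Real.rpow_add hs]
    ring_nf
  have h1 : 1 + ‖x‖ ≤ 2 * s ^ ((1:ℝ)/2) := by
    rw [← Real.sqrt_eq_rpow]
    have e1 : (1 + ‖x‖) = 2 * Real.sqrt (((1 + ‖x‖)/2)^2) := by
      rw [Real.sqrt_sq (by positivity)]; ring
    rw [e1]
    have : ((1 + ‖x‖)/2)^2 ≤ s := by rw [hsdef]; nlinarith [norm_nonneg x]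
    nlinarith [Real.sqrt_le_sqrt this, Real.sqrt_nonneg (((1 + ‖x‖)/2)^2)]
  have hnn : (0:ℝ) ≤ (s ^ m)⁻¹ := by positivity
  calc ‖(1 + ‖x‖) * ((1 + ‖x‖ ^ 2) ^ m)⁻¹‖ = (1 + ‖x‖) * (s ^ m)⁻¹ := by
        rw [Real.norm_eq_abs, abs_of_nonneg (by positivity)]
    _ ≤ (2 * s ^ ((1:ℝ)/2)) * (s ^ m)⁻¹ := by
        exact mul_le_mul_of_nonneg_right h1 hnn
    _ = 2 * (s ^ (-(2 * (m:ℝ) - 1) / 2)) := by rw [key]; ring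


lemma h_cont (m : ℕ) (l : ℝ) (ξ : EuclideanSpace ℝ (Fin m)) : Continuous
    (fun x : EuclideanSpace ℝ (Fin m) => (1 + ‖l • x + ξ‖ ^ 2)⁻¹) := by
  have hne : ∀ y : EuclideanSpace ℝ (Fin m), (1 + ‖l • y + ξ‖ ^ 2) ≠ 0 := by
    intro y; positivity
  exact (continuous_const.add
    (((by fun_prop : Continuous fun y : EuclideanSpace ℝ (Fin m) => l • y + ξ).norm).pow 2)).inv₀ hne

lemma aux_le_one (m : ℕ) (l : ℝ) (ξ x : EuclideanSpace ℝ (Fin m)) :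
    (1 + ‖l • x + ξ‖ ^ 2)⁻¹ ≤ 1 := by
  rw [inv_le_one_iff₀]; right; nlinarith [sq_nonneg ‖l • x + ξ‖]

lemma g_le_two (m : ℕ) (hm : 2 ≤ m) (x : EuclideanSpace ℝ (Fin m)) :
    (1 + ‖x‖) * ((1 + ‖x‖ ^ 2) ^ m)⁻¹ ≤ 2 := by
  have h1 : (1:ℝ) + ‖x‖ ^ 2 ≤ (1 + ‖x‖ ^ 2) ^ m :=
    le_self_pow₀ (by nlinarith [sq_nonneg ‖x‖]) (by omega)
  have h2 : (1:ℝ) + ‖x‖ ≤ 2 * (1 + ‖x‖ ^ 2) ^ m := by nlinarith [norm_nonneg x, sq_nonneg (‖x‖ - 1)]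
  rw [mul_inv_le_iff₀ (by positivity)]
  linarith

lemma h_integrable (m : ℕ) (hm : 2 ≤ m) (l : ℝ) (ξ : EuclideanSpace ℝ (Fin m)) :
    Integrable (fun x : EuclideanSpace ℝ (Fin m) =>
      (1 + ‖x‖) * ((1 + ‖x‖ ^ 2) ^ m)⁻¹ * (1 + ‖l • x + ξ‖ ^ 2)⁻¹) := by
  refine (g_integrable m hm).mono' ((g_cont m).mul (h_cont m l ξ)).aestronglyMeasurable
    (Filter.Eventually.of_forall fun x => ?_)
  rw [Real.norm_eq_abs, abs_of_nonneg (by positivity)]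
  calc (1 + ‖x‖) * ((1 + ‖x‖ ^ 2) ^ m)⁻¹ * (1 + ‖l • x + ξ‖ ^ 2)⁻¹
      ≤ (1 + ‖x‖) * ((1 + ‖x‖ ^ 2) ^ m)⁻¹ * 1 :=
        mul_le_mul_of_nonneg_left (aux_le_one m l ξ x) (by positivity)
    _ = (1 + ‖x‖) * ((1 + ‖x‖ ^ 2) ^ m)⁻¹ := mul_one _

set_option maxHeartbeats 1000000 in
lemma key (m : ℕ) (hm : 2 ≤ m) {ε : ℝ} (hε : 0 < ε) :
    ∃ M : ℝ, ∀ l : ℝ, 0 < l → ∀ ξ : EuclideanSpace ℝ (Fin m), M ≤ l + ‖ξ‖ →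
      (∫ x : EuclideanSpace ℝ (Fin m),
        (1 + ‖x‖) * ((1 + ‖x‖ ^ 2) ^ m)⁻¹ * (1 + ‖l • x + ξ‖ ^ 2)⁻¹) ≤ ε := by
  classical
  set g : EuclideanSpace ℝ (Fin m) → ℝ := fun x => (1 + ‖x‖) * ((1 + ‖x‖ ^ 2) ^ m)⁻¹ with hgdef
  have hg : Integrable g := g_integrable m hm
  have hgnn : ∀ x, 0 ≤ g x := fun x => by rw [hgdef]; positivity
  set I : ℝ := ∫ x : EuclideanSpace ℝ (Fin m), g x with hIdef
  have hI0 : 0 ≤ I := integral_nonneg hgnn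
  -- choice of K
  obtain ⟨K, hK0, hKb⟩ : ∃ K : ℝ, 0 < K ∧ I * (1 + K ^ 2)⁻¹ ≤ ε / 2 := by
    refine ⟨1 + Real.sqrt (2 * I / ε), by positivity, ?_⟩
    have h1 : Real.sqrt (2 * I / ε) ^ 2 = 2 * I / ε := Real.sq_sqrt (by positivity)
    have h2 : 2 * I / ε ≤ (1 + Real.sqrt (2 * I / ε)) ^ 2 := by
      nlinarith [Real.sqrt_nonneg (2 * I / ε)]
    rw [mul_inv_le_iff₀ (by positivity)]
    rw [div_le_iff₀ hε] at h2
    nlinarith [h2, hε]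
  -- choice of R : tail bound
  obtain ⟨R, hR⟩ : ∃ R : ℕ, (∫ x in (Metric.closedBall (0:EuclideanSpace ℝ (Fin m)) R)ᶜ, g x) ≤ ε / 2 := by
    have hU : (⋃ n : ℕ, Metric.closedBall (0:EuclideanSpace ℝ (Fin m)) n) = Set.univ := by
      ext x
      simp only [Set.mem_iUnion, Metric.mem_closedBall, dist_zero_right, Set.mem_univ, iff_true]
      exact ⟨⌈‖x‖⌉₊, Nat.le_ceil _⟩
    have htd : Filter.Tendsto (fun n : ℕ => ∫ x in Metric.closedBall (0:EuclideanSpace ℝ (Fin m)) n, g x)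
        Filter.atTop (nhds I) := by
      have := tendsto_setIntegral_of_monotone (μ := volume)
        (s := fun n : ℕ => Metric.closedBall (0:EuclideanSpace ℝ (Fin m)) n)
        (fun n => measurableSet_closedBall)
        (fun i j hij => Metric.closedBall_subset_closedBall (by exact_mod_cast hij))
        hg.integrableOn
      rwa [hU, setIntegral_univ] at this
    have htd2 : Filter.Tendsto (fun n : ℕ => ∫ x in (Metric.closedBall (0:EuclideanSpace ℝ (Fin m)) n)ᶜ, g x)
        Filter.atTop (nhds 0) := by
      have heq : ∀ n : ℕ, (∫ x in (Metric.closedBall (0:EuclideanSpace ℝ (Fin m)) n)ᶜ, g x)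
          = I - ∫ x in Metric.closedBall (0:EuclideanSpace ℝ (Fin m)) n, g x := by
        intro n
        have := integral_add_compl (μ := volume)
          (s := Metric.closedBall (0:EuclideanSpace ℝ (Fin m)) n)
          measurableSet_closedBall hg
        rw [hIdef]; linarith [this]
      simp only [heq]
      have := (tendsto_const_nhds (x := I) (f := Filter.atTop (α := ℕ))).sub htd
      simpa using this
    have := (htd2.eventually (eventually_le_nhds (by linarith : (0:ℝ) < ε/2))).exists
    exact this
  set κ : ℝ := (volume (Metric.ball (0:EuclideanSpace ℝ (Fin m)) 1)).toReal with hκdef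
  have hκ0 : 0 ≤ κ := ENNReal.toReal_nonneg
  obtain ⟨L, hL0, hKL, hLε⟩ : ∃ L : ℝ, 0 < L ∧ K + 1 ≤ L ∧ K * (4 * κ + 1) ≤ ε * L := by
    refine ⟨(K + 1) * (1 + (4 * κ + 1) / ε), by positivity, ?_, ?_⟩
    · nlinarith [div_nonneg (by linarith : (0:ℝ) ≤ 4 * κ + 1) hε.le]
    · have he : ε * ((K + 1) * (1 + (4 * κ + 1) / ε)) = (K + 1) * (ε + (4 * κ + 1)) := by
        field_simp
      rw [he]; nlinarith [hK0, hκ0, hε]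
  refine ⟨L * (1 + R) + K, fun l hl ξ hM => ?_⟩
  set S : Set (EuclideanSpace ℝ (Fin m)) := {x | ‖l • x + ξ‖ < K} with hSdef
  have hSopen : IsOpen S :=
    isOpen_lt ((by fun_prop : Continuous fun y : EuclideanSpace ℝ (Fin m) => l • y + ξ).norm)
      continuous_const
  have hSm : MeasurableSet S := hSopen.measurableSet
  set h : EuclideanSpace ℝ (Fin m) → ℝ := fun x => g x * (1 + ‖l • x + ξ‖ ^ 2)⁻¹ with hhdef
  have hh : Integrable h := h_integrable m hm l ξ
  have hhnn : ∀ x, 0 ≤ h x := fun x => by rw [hhdef, hgdef]; positivity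
  have hhg : ∀ x, h x ≤ g x := by
    intro x
    calc h x ≤ g x * 1 := mul_le_mul_of_nonneg_left (aux_le_one m l ξ x) (hgnn x)
      _ = g x := mul_one _
  have hsplit : (∫ x, h x) = (∫ x in S, h x) + ∫ x in Sᶜ, h x :=
    (integral_add_compl hSm hh).symm
  -- complement bound
  have hcompl : (∫ x in Sᶜ, h x) ≤ ε / 2 := by
    have hmono : (∫ x in Sᶜ, h x) ≤ ∫ x in Sᶜ, g x * (1 + K^2)⁻¹ := by
      refine setIntegral_mono_on hh.integrableOn ((hg.mul_const _).integrableOn) hSm.compl ?_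
      intro x hx
      have hxK : K ≤ ‖l • x + ξ‖ := not_lt.mp hx
      have : (1 + ‖l • x + ξ‖ ^ 2)⁻¹ ≤ (1 + K ^ 2)⁻¹ := by
        apply inv_anti₀ (by positivity)
        nlinarith
      exact mul_le_mul_of_nonneg_left this (hgnn x)
    have heq : (∫ x in Sᶜ, g x * (1 + K^2)⁻¹) = (∫ x in Sᶜ, g x) * (1 + K^2)⁻¹ :=
      integral_mul_const _ _
    have hle : (∫ x in Sᶜ, g x) ≤ I := setIntegral_le_integral hg
      (Filter.Eventually.of_forall hgnn)
    calc (∫ x in Sᶜ, h x) ≤ (∫ x in Sᶜ, g x) * (1 + K^2)⁻¹ := heq ▸ hmono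
      _ ≤ I * (1 + K^2)⁻¹ := mul_le_mul_of_nonneg_right hle (by positivity)
      _ ≤ ε / 2 := hKb
  -- S bound
  have hS : (∫ x in S, h x) ≤ ε / 2 := by
    by_cases hcase : L ≤ l
    · -- l large : small ball
      have hsub : S ⊆ Metric.ball (-(l⁻¹ • ξ)) (K / l) := by
        intro x hx
        rw [Metric.mem_ball, dist_eq_norm]
        have he : x - -(l⁻¹ • ξ) = l⁻¹ • (l • x + ξ) := by
          rw [smul_add, smul_smul, inv_mul_cancel₀ hl.ne', one_smul, sub_neg_eq_add]
        rw [he, norm_smul, norm_inv, Real.norm_eq_abs, abs_of_pos hl]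
        rw [div_eq_inv_mul]
        exact mul_lt_mul_of_pos_left hx (by positivity)
      have hq0 : 0 < K / l := by positivity
      have hvol : volume (Metric.ball (-(l⁻¹ • ξ)) (K / l))
          = ENNReal.ofReal ((K / l) ^ m) * volume (Metric.ball (0:EuclideanSpace ℝ (Fin m)) 1) := by
        rw [Measure.addHaar_ball_of_pos _ _ hq0, finrank_euclideanSpace_fin]
      have hvolS : (volume S).toReal ≤ (K / l) ^ m * κ := by
        have hfin : volume (Metric.ball (-(l⁻¹ • ξ)) (K / l)) ≠ ⊤ :=
          measure_ball_lt_top.ne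
        have h1 : volume S ≤ volume (Metric.ball (-(l⁻¹ • ξ)) (K / l)) :=
          measure_mono hsub
        have h2 := ENNReal.toReal_mono hfin h1
        rwa [hvol, ENNReal.toReal_mul, ENNReal.toReal_ofReal (by positivity)] at h2
      have hSfin : volume S < ⊤ := lt_of_le_of_lt (measure_mono hsub) measure_ball_lt_top
      have hb : ∀ x ∈ S, ‖h x‖ ≤ 2 := by
        intro x _
        rw [Real.norm_eq_abs, abs_of_nonneg (hhnn x)]
        exact le_trans (hhg x) (g_le_two m hm x)
      have := norm_setIntegral_le_of_norm_le_const hSfin hb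
      rw [Real.norm_eq_abs] at this
      have h3 : (∫ x in S, h x) ≤ 2 * (volume S).toReal := le_trans (le_abs_self _) this
      -- now numeric estimate
      set q : ℝ := K / l with hqdef
      have hq1 : q ≤ 1 := by
        rw [hqdef, div_le_one hl]
        linarith
      have hqε : q * (4 * κ + 1) ≤ ε := by
        have hεl : K * (4 * κ + 1) ≤ ε * l := le_trans hLε (mul_le_mul_of_nonneg_left hcase hε.le)
        rw [hqdef, div_mul_eq_mul_div, div_le_iff₀ hl]
        linarith [hεl]
      have hqm : q ^ m ≤ q := pow_le_of_le_one hq0.le hq1 (by omega)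
      calc (∫ x in S, h x) ≤ 2 * (volume S).toReal := h3
        _ ≤ 2 * (q ^ m * κ) := by linarith [hvolS]
        _ ≤ ε / 2 := by
            have h4 : q ^ m * κ ≤ q * κ := mul_le_mul_of_nonneg_right hqm hκ0
            nlinarith [hqε, hq0.le, hκ0]
    · -- l small : ξ large, S far away
      have hcase' : l < L := not_le.mp hcase
      have hξ : l * R + K ≤ ‖ξ‖ := by
        have : L * (1 + R) + K ≤ l + ‖ξ‖ := hM
        have hR0 : (0:ℝ) ≤ R := Nat.cast_nonneg R
        nlinarith [hcase', hL0, hR0]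
      have hsub2 : S ⊆ (Metric.closedBall (0:EuclideanSpace ℝ (Fin m)) R)ᶜ := by
        intro x hx
        simp only [Set.mem_compl_iff, Metric.mem_closedBall, dist_zero_right, not_le]
        have h0 : l • x + ξ - l • x = ξ := by abel
        have h1 : ‖ξ‖ ≤ ‖l • x + ξ‖ + ‖l • x‖ := by
          calc ‖ξ‖ = ‖l • x + ξ - l • x‖ := by rw [h0]
            _ ≤ ‖l • x + ξ‖ + ‖l • x‖ := norm_sub_le _ _
        have h2 : ‖l • x‖ = l * ‖x‖ := by
          rw [norm_smul, Real.norm_eq_abs, abs_of_pos hl]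
        have hx' : ‖l • x + ξ‖ < K := hx
        have : l * R < l * ‖x‖ := by nlinarith
        exact lt_of_mul_lt_mul_left this hl.le
      calc (∫ x in S, h x) ≤ ∫ x in S, g x :=
            setIntegral_mono_on hh.integrableOn hg.integrableOn hSm (fun x _ => hhg x)
        _ ≤ ∫ x in (Metric.closedBall (0:EuclideanSpace ℝ (Fin m)) R)ᶜ, g x :=
            setIntegral_mono_set hg.integrableOn (Filter.Eventually.of_forall hgnn)
              (Filter.Eventually.of_forall hsub2)
        _ ≤ ε / 2 := hR
  linarith [hsplit, hS, hcompl]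


/-- For `a` bounded, `C¹`, with `|∇a(x)| ≤ C(1+|x|²)⁻¹`, the partial
derivatives `∂_λΨ(λ,ξ) = mᵐ ∫ (∇a(λx+ξ)·x)/(1+|x|²)ᵐ dx` and
`∂_{ξᵢ}Ψ(λ,ξ) = mᵐ ∫ ∂ᵢa(λx+ξ)/(1+|x|²)ᵐ dx` tend to `0` as `λ + |ξ| → ∞`, `λ > 0`. -/
theorem stmt7 (m : ℕ) (hm : 2 ≤ m) (a : EuclideanSpace ℝ (Fin m) → ℝ)
    (hbd : ∃ M : ℝ, ∀ x, |a x| ≤ M) (hC1 : ContDiff ℝ 1 a)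
    (C : ℝ) (hC : 0 < C)
    (hgrad : ∀ x, ‖gradient a x‖ ≤ C * (1 + ‖x‖ ^ 2)⁻¹) :
    ∀ ε > (0 : ℝ), ∃ M : ℝ, ∀ (l : ℝ), 0 < l → ∀ ξ : EuclideanSpace ℝ (Fin m),
      M ≤ l + ‖ξ‖ →
        |(m : ℝ) ^ m * ∫ x : EuclideanSpace ℝ (Fin m),
            ⟪gradient a (l • x + ξ), x⟫ / (1 + ‖x‖ ^ 2) ^ m| < ε ∧
        ∀ i : Fin m,
          |(m : ℝ) ^ m * ∫ x : EuclideanSpace ℝ (Fin m),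
              fderiv ℝ a (l • x + ξ) (EuclideanSpace.single i 1) / (1 + ‖x‖ ^ 2) ^ m| < ε := by
  intro ε hε
  have hCm : (0:ℝ) < (m:ℝ) ^ m := by positivity
  have hε' : (0:ℝ) < ε / (2 * (m:ℝ) ^ m * C) := by positivity
  obtain ⟨M, hMkey⟩ := key m hm hε'
  refine ⟨M, fun l hl ξ hM => ?_⟩
  -- common facts
  have hgradcont : Continuous (gradient a) := by
    have hd : gradient a = fun x =>
        (InnerProductSpace.toDual ℝ (EuclideanSpace ℝ (Fin m))).symm (fderiv ℝ a x) := rfl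
    rw [hd]
    exact (LinearIsometryEquiv.continuous _).comp (hC1.continuous_fderiv one_ne_zero)
  have hmapcont : Continuous (fun x : EuclideanSpace ℝ (Fin m) => l • x + ξ) := by
    fun_prop
  have hdenne : ∀ x : EuclideanSpace ℝ (Fin m), ((1:ℝ) + ‖x‖ ^ 2) ^ m ≠ 0 := by
    intro x; positivity
  have hdencont : Continuous (fun x : EuclideanSpace ℝ (Fin m) => ((1:ℝ) + ‖x‖ ^ 2) ^ m) :=
    (continuous_const.add (continuous_norm.pow 2)).pow m
  have hgnorm : ∀ x : EuclideanSpace ℝ (Fin m),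
      ‖gradient a (l • x + ξ)‖ ≤ C * (1 + ‖l • x + ξ‖ ^ 2)⁻¹ := fun x => hgrad _
  set g : EuclideanSpace ℝ (Fin m) → ℝ :=
    fun x => (1 + ‖x‖) * ((1 + ‖x‖ ^ 2) ^ m)⁻¹ with hgdef
  set h : EuclideanSpace ℝ (Fin m) → ℝ :=
    fun x => g x * (1 + ‖l • x + ξ‖ ^ 2)⁻¹ with hhdef
  have hh : Integrable h := h_integrable m hm l ξ
  have hhC : Integrable (fun x => C * h x) := hh.const_mul C
  have hkeyval : (∫ x, h x) ≤ ε / (2 * (m:ℝ) ^ m * C) := hMkey l hl ξ hM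
  -- generic estimation lemma
  have main : ∀ f : EuclideanSpace ℝ (Fin m) → ℝ, Continuous f →
      (∀ x, |f x| ≤ C * h x) →
      |(m : ℝ) ^ m * ∫ x, f x| < ε := by
    intro f hf hfb
    have hint : Integrable f := by
      refine hhC.mono' hf.aestronglyMeasurable (Filter.Eventually.of_forall fun x => ?_)
      rw [Real.norm_eq_abs]; exact hfb x
    have h1 : |∫ x, f x| ≤ ∫ x, |f x| := by
      have := norm_integral_le_integral_norm (μ := volume) f
      simpa [Real.norm_eq_abs] using this
    have h2 : (∫ x, |f x|) ≤ ∫ x, C * h x :=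
      integral_mono hint.abs hhC (fun x => hfb x)
    have h3 : (∫ x, C * h x) = C * ∫ x, h x := integral_const_mul C h
    have h4 : C * (∫ x, h x) ≤ C * (ε / (2 * (m:ℝ) ^ m * C)) :=
      mul_le_mul_of_nonneg_left hkeyval hC.le
    have h5 : (m:ℝ) ^ m * (C * (ε / (2 * (m:ℝ) ^ m * C))) = ε / 2 := by
      field_simp
    have h6 : |(m : ℝ) ^ m * ∫ x, f x| = (m:ℝ) ^ m * |∫ x, f x| := by
      rw [abs_mul, abs_of_pos hCm]
    rw [h6]
    have : (m:ℝ) ^ m * |∫ x, f x| ≤ ε / 2 := by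
      rw [← h5]
      apply mul_le_mul_of_nonneg_left _ hCm.le
      exact le_trans h1 (le_trans h2 (le_trans (le_of_eq h3) h4))
    linarith
  constructor
  · apply main
    · have hnum : Continuous (fun x : EuclideanSpace ℝ (Fin m) =>
          ⟪gradient a (l • x + ξ), x⟫) :=
        (hgradcont.comp hmapcont).inner continuous_id
      exact hnum.div hdencont hdenne
    · intro x
      rw [div_eq_mul_inv, abs_mul, abs_of_nonneg (by positivity :
        (0:ℝ) ≤ (((1:ℝ) + ‖x‖ ^ 2) ^ m)⁻¹)]
      have hb1 : |⟪gradient a (l • x + ξ), x⟫| ≤ (C * (1 + ‖l • x + ξ‖ ^ 2)⁻¹) * (1 + ‖x‖) := by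
        calc |⟪gradient a (l • x + ξ), x⟫| ≤ ‖gradient a (l • x + ξ)‖ * ‖x‖ :=
              abs_real_inner_le_norm _ _
          _ ≤ (C * (1 + ‖l • x + ξ‖ ^ 2)⁻¹) * (1 + ‖x‖) := by
              apply mul_le_mul (hgnorm x) (by linarith [norm_nonneg x]) (norm_nonneg x)
              positivity
      calc |⟪gradient a (l • x + ξ), x⟫| * (((1:ℝ) + ‖x‖ ^ 2) ^ m)⁻¹
          ≤ ((C * (1 + ‖l • x + ξ‖ ^ 2)⁻¹) * (1 + ‖x‖)) * (((1:ℝ) + ‖x‖ ^ 2) ^ m)⁻¹ :=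
            mul_le_mul_of_nonneg_right hb1 (by positivity)
        _ = C * h x := by rw [hhdef, hgdef]; ring
  · intro i
    apply main
    · have hfc : Continuous (fun x : EuclideanSpace ℝ (Fin m) => fderiv ℝ a x) :=
        hC1.continuous_fderiv one_ne_zero
      have hnum : Continuous (fun x : EuclideanSpace ℝ (Fin m) =>
          fderiv ℝ a (l • x + ξ) (EuclideanSpace.single i 1)) :=
        (ContinuousLinearMap.apply ℝ ℝ (EuclideanSpace.single i (1:ℝ))).continuous.comp
          (hfc.comp hmapcont)
      exact hnum.div hdencont hdenne
    · intro x
      rw [div_eq_mul_inv, abs_mul, abs_of_nonneg (by positivity :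
        (0:ℝ) ≤ (((1:ℝ) + ‖x‖ ^ 2) ^ m)⁻¹)]
      have hb0 : ‖fderiv ℝ a (l • x + ξ)‖ = ‖gradient a (l • x + ξ)‖ := by
        have : gradient a (l • x + ξ) =
            (InnerProductSpace.toDual ℝ (EuclideanSpace ℝ (Fin m))).symm
              (fderiv ℝ a (l • x + ξ)) := rfl
        rw [this, LinearIsometryEquiv.norm_map]
      have hb1 : |fderiv ℝ a (l • x + ξ) (EuclideanSpace.single i 1)|
          ≤ (C * (1 + ‖l • x + ξ‖ ^ 2)⁻¹) * (1 + ‖x‖) := by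
        calc |fderiv ℝ a (l • x + ξ) (EuclideanSpace.single i 1)|
            ≤ ‖fderiv ℝ a (l • x + ξ)‖ * ‖EuclideanSpace.single i (1:ℝ)‖ :=
              (fderiv ℝ a (l • x + ξ)).le_opNorm _
          _ = ‖gradient a (l • x + ξ)‖ := by
              rw [EuclideanSpace.norm_single, norm_one, mul_one, hb0]
          _ ≤ C * (1 + ‖l • x + ξ‖ ^ 2)⁻¹ := hgnorm x
          _ ≤ (C * (1 + ‖l • x + ξ‖ ^ 2)⁻¹) * (1 + ‖x‖) := by
              nlinarith [norm_nonneg x, mul_pos hC (by positivity :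
                (0:ℝ) < (1 + ‖l • x + ξ‖ ^ 2)⁻¹)]
      calc |fderiv ℝ a (l • x + ξ) (EuclideanSpace.single i 1)| * (((1:ℝ) + ‖x‖ ^ 2) ^ m)⁻¹
          ≤ ((C * (1 + ‖l • x + ξ‖ ^ 2)⁻¹) * (1 + ‖x‖)) * (((1:ℝ) + ‖x‖ ^ 2) ^ m)⁻¹ :=
            mul_le_mul_of_nonneg_right hb1 (by positivity)
        _ = C * h x := by rw [hhdef, hgdef]; ring
end

section
/- Let m ≥ 2. Define b_i : ℝᵐ → ℝ by b_i(x) := 2xᵢ/(1+|x|²) for 1 ≤ i ≤ m and b_{m+1}(x) := (|x|²−1)/(1+|x|²). If (λ₀, ξ₀) ∈ ℝ × ℝᵐ satisfies ∫_{ℝᵐ} (∇b_i(x)·(λ₀ x + ξ₀))/(1+|x|²)ᵐ dx = 0 for every i = 1, …, m+1, then λ₀ = 0 and ξ₀ = 0. -/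
open MeasureTheory
open scoped RealInnerProductSpace Topology

section Stmt8Aux

variable {m : ℕ}

private lemma sq_deriv' (x : EuclideanSpace ℝ (Fin m)) :
    HasFDerivAt (fun y : EuclideanSpace ℝ (Fin m) => 1 + ‖y‖ ^ 2) (2 • (innerSL ℝ x)) x := by
  simpa using ((hasFDerivAt_id x).norm_sq).const_add 1

private lemma inv_deriv' (x : EuclideanSpace ℝ (Fin m)) :
    HasFDerivAt (fun y : EuclideanSpace ℝ (Fin m) => (1 + ‖y‖ ^ 2)⁻¹)
      ((-(((1:ℝ) + ‖x‖ ^ 2) ^ 2)⁻¹) • (2 • (innerSL ℝ x))) x := by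
  have hd : (1 : ℝ) + ‖x‖ ^ 2 ≠ 0 := by positivity
  exact (hasDerivAt_inv hd).comp_hasFDerivAt x (sq_deriv' x)

private lemma inner_grad1 (i : Fin m) (x v : EuclideanSpace ℝ (Fin m)) :
    ⟪gradient (fun y : EuclideanSpace ℝ (Fin m) => 2 * y i / (1 + ‖y‖ ^ 2)) x, v⟫ =
      (2 * v i * (1 + ‖x‖ ^ 2) - 4 * x i * ⟪x, v⟫) / ((1 + ‖x‖ ^ 2) ^ 2) := by
  have hd : (0:ℝ) < 1 + ‖x‖ ^ 2 := by positivity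
  have hu : HasFDerivAt (fun y : EuclideanSpace ℝ (Fin m) => 2 * y i)
      ((2:ℝ) • (EuclideanSpace.proj i : EuclideanSpace ℝ (Fin m) →L[ℝ] ℝ)) x :=
    ((EuclideanSpace.proj i : EuclideanSpace ℝ (Fin m) →L[ℝ] ℝ).hasFDerivAt).const_mul 2
  have hf := hu.mul (inv_deriv' x)
  have h0 : (fun y : EuclideanSpace ℝ (Fin m) => 2 * y i / (1 + ‖y‖ ^ 2))
      = fun y : EuclideanSpace ℝ (Fin m) => 2 * y i * (1 + ‖y‖ ^ 2)⁻¹ := by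
    funext y; rw [div_eq_mul_inv]
  rw [h0]
  rw [show gradient (fun y : EuclideanSpace ℝ (Fin m) => 2 * y i * (1 + ‖y‖ ^ 2)⁻¹) x
      = (InnerProductSpace.toDual ℝ (EuclideanSpace ℝ (Fin m))).symm
          (fderiv ℝ (fun y : EuclideanSpace ℝ (Fin m) => 2 * y i * (1 + ‖y‖ ^ 2)⁻¹) x) from rfl]
  rw [InnerProductSpace.toDual_symm_apply,
    HasFDerivAt.fderiv (f := fun y : EuclideanSpace ℝ (Fin m) => 2 * y i * (1 + ‖y‖ ^ 2)⁻¹) hf]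
  simp only [ContinuousLinearMap.add_apply, ContinuousLinearMap.smul_apply, smul_eq_mul,
    innerSL_apply_apply, PiLp.proj_apply, real_inner_comm x v]
  field_simp
  ring

private lemma inner_grad2 (x v : EuclideanSpace ℝ (Fin m)) :
    ⟪gradient (fun y : EuclideanSpace ℝ (Fin m) => (‖y‖ ^ 2 - 1) / (1 + ‖y‖ ^ 2)) x, v⟫ =
      4 * ⟪x, v⟫ / ((1 + ‖x‖ ^ 2) ^ 2) := by
  have hd : (0:ℝ) < 1 + ‖x‖ ^ 2 := by positivity
  have hu : HasFDerivAt (fun y : EuclideanSpace ℝ (Fin m) => ‖y‖ ^ 2 - 1)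
      (2 • (innerSL ℝ x)) x := by
    simpa using ((hasFDerivAt_id x).norm_sq).sub_const 1
  have hf := hu.mul (inv_deriv' x)
  have h0 : (fun y : EuclideanSpace ℝ (Fin m) => (‖y‖ ^ 2 - 1) / (1 + ‖y‖ ^ 2))
      = fun y : EuclideanSpace ℝ (Fin m) => (‖y‖ ^ 2 - 1) * (1 + ‖y‖ ^ 2)⁻¹ := by
    funext y; rw [div_eq_mul_inv]
  rw [h0]
  rw [show gradient (fun y : EuclideanSpace ℝ (Fin m) => (‖y‖ ^ 2 - 1) * (1 + ‖y‖ ^ 2)⁻¹) x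
      = (InnerProductSpace.toDual ℝ (EuclideanSpace ℝ (Fin m))).symm
          (fderiv ℝ (fun y : EuclideanSpace ℝ (Fin m) => (‖y‖ ^ 2 - 1) * (1 + ‖y‖ ^ 2)⁻¹) x)
      from rfl]
  rw [InnerProductSpace.toDual_symm_apply,
    HasFDerivAt.fderiv (f := fun y : EuclideanSpace ℝ (Fin m) => (‖y‖ ^ 2 - 1) * (1 + ‖y‖ ^ 2)⁻¹) hf]
  simp only [ContinuousLinearMap.add_apply, ContinuousLinearMap.smul_apply, smul_eq_mul,
    innerSL_apply_apply, real_inner_comm x v]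
  field_simp
  ring

private lemma integral_isometry (T : EuclideanSpace ℝ (Fin m) ≃ₗᵢ[ℝ] EuclideanSpace ℝ (Fin m))
    (f : EuclideanSpace ℝ (Fin m) → ℝ) : ∫ x, f (T x) = ∫ x, f x :=
  T.measurePreserving.integral_comp T.toHomeomorph.measurableEmbedding f

private lemma integral_zero_of_odd
    (T : EuclideanSpace ℝ (Fin m) ≃ₗᵢ[ℝ] EuclideanSpace ℝ (Fin m))
    (f : EuclideanSpace ℝ (Fin m) → ℝ) (hT : ∀ x, f (T x) = - f x) : ∫ x, f x = 0 := by
  have h := integral_isometry T f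
  simp only [hT, integral_neg] at h
  linarith

private noncomputable def reflIso (j : Fin m) :
    EuclideanSpace ℝ (Fin m) ≃ₗᵢ[ℝ] EuclideanSpace ℝ (Fin m) :=
  LinearIsometryEquiv.piLpCongrRight 2
    (fun k => if k = j then LinearIsometryEquiv.neg ℝ else LinearIsometryEquiv.refl ℝ ℝ)

private lemma reflIso_apply (j k : Fin m) (x : EuclideanSpace ℝ (Fin m)) :
    reflIso j x k = if k = j then -x k else x k := by
  rcases eq_or_ne k j with h | h
  · subst h; simp [reflIso, LinearIsometryEquiv.piLpCongrRight_apply]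
  · simp [reflIso, LinearIsometryEquiv.piLpCongrRight_apply, h]

private noncomputable def swapIso (i j : Fin m) :
    EuclideanSpace ℝ (Fin m) ≃ₗᵢ[ℝ] EuclideanSpace ℝ (Fin m) :=
  LinearIsometryEquiv.piLpCongrLeft 2 ℝ ℝ (Equiv.swap i j)

private lemma swapIso_apply (i j k : Fin m) (x : EuclideanSpace ℝ (Fin m)) :
    swapIso i j x k = x (Equiv.swap i j k) := by
  simp [swapIso, LinearIsometryEquiv.piLpCongrLeft_apply, Equiv.piCongrLeft'_apply]

private lemma refl_inner (j : Fin m) (x ξ : EuclideanSpace ℝ (Fin m)) :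
    ⟪reflIso j x, ξ⟫ = ⟪x, ξ⟫ - 2 * x j * ξ j := by
  simp only [PiLp.inner_apply, RCLike.inner_apply, conj_trivial]
  have hterm : ∀ k : Fin m, reflIso j x k * ξ k
      = x k * ξ k - (if k = j then 2 * x j * ξ j else 0) := by
    intro k
    rcases eq_or_ne k j with h | h
    · subst h; rw [reflIso_apply, if_pos rfl, if_pos rfl]; ring
    · rw [reflIso_apply, if_neg h, if_neg h]; ring
  simp_rw [mul_comm (ξ _) (_ : ℝ)]
  rw [Finset.sum_congr rfl fun k _ => hterm k, Finset.sum_sub_distrib,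
    Finset.sum_ite_eq' Finset.univ j (fun _ => 2 * x j * ξ j), if_pos (Finset.mem_univ j)]

private lemma base_int (p : ℕ) (hp : m < 2 * p) :
    Integrable (fun x : EuclideanSpace ℝ (Fin m) => ((1 + ‖x‖ ^ 2) ^ p)⁻¹) := by
  have h := integrable_rpow_neg_one_add_norm_sq (E := EuclideanSpace ℝ (Fin m)) (μ := volume)
    (r := 2 * p) (by rw [finrank_euclideanSpace_fin]; exact_mod_cast hp)
  refine h.congr (Filter.Eventually.of_forall fun x => ?_)
  have h1 : (0:ℝ) < 1 + ‖x‖ ^ 2 := by positivity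
  show (1 + ‖x‖ ^ 2 : ℝ) ^ (-(2 * (p:ℝ)) / 2) = ((1 + ‖x‖ ^ 2) ^ p)⁻¹
  rw [show -(2 * (p:ℝ)) / 2 = -(p:ℝ) by ring, Real.rpow_neg h1.le, Real.rpow_natCast]

private lemma cont_den (p : ℕ) :
    Continuous (fun x : EuclideanSpace ℝ (Fin m) => ((1 + ‖x‖ ^ 2) ^ p)⁻¹) := by
  have h : ∀ x : EuclideanSpace ℝ (Fin m), (1 + ‖x‖ ^ 2) ^ p ≠ 0 := fun x => by positivity
  exact ((continuous_const.add (continuous_norm.pow 2)).pow p).inv₀ h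

private lemma dom_int {f : EuclideanSpace ℝ (Fin m) → ℝ} (p : ℕ) (hp : m < 2 * p) (C : ℝ)
    (hmeas : AEStronglyMeasurable f volume)
    (hb : ∀ x, |f x| ≤ C * ((1 + ‖x‖ ^ 2) ^ p)⁻¹) : Integrable f :=
  ((base_int p hp).const_mul C).mono' hmeas
    (Filter.Eventually.of_forall fun x => by simpa [Real.norm_eq_abs] using hb x)

private lemma coord_sq_le (x : EuclideanSpace ℝ (Fin m)) (i : Fin m) : x i ^ 2 ≤ ‖x‖ ^ 2 := by
  rw [PiLp.norm_sq_eq_of_L2]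
  calc x i ^ 2 = ‖x i‖ ^ 2 := by rw [Real.norm_eq_abs, sq_abs]
  _ ≤ ∑ j, ‖x j‖ ^ 2 := Finset.single_le_sum (f := fun j => ‖x j‖ ^ 2)
      (fun j _ => by positivity) (Finset.mem_univ i)

private lemma abs_coord_le (x : EuclideanSpace ℝ (Fin m)) (i : Fin m) : |x i| ≤ ‖x‖ := by
  have h := coord_sq_le x i
  have h2 := abs_nonneg (x i)
  have h3 := norm_nonneg x
  nlinarith [sq_abs (x i)]

private lemma den_mul (x : EuclideanSpace ℝ (Fin m)) :
    (1 + ‖x‖ ^ 2) * ((1 + ‖x‖ ^ 2) ^ (m + 2))⁻¹ = ((1 + ‖x‖ ^ 2) ^ (m + 1))⁻¹ := by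
  have hd : (0:ℝ) < 1 + ‖x‖ ^ 2 := by positivity
  field_simp
  ring

private lemma intK (i : Fin m) :
    Integrable (fun x : EuclideanSpace ℝ (Fin m) => x i ^ 2 * ((1 + ‖x‖ ^ 2) ^ (m + 2))⁻¹) := by
  refine dom_int (m + 1) (by omega) 1 ?_ fun x => ?_
  · exact (((EuclideanSpace.proj i).continuous.pow 2).mul (cont_den (m + 2))).aestronglyMeasurable
  · have hd : (0:ℝ) < 1 + ‖x‖ ^ 2 := by positivity
    have hinv : (0:ℝ) < ((1 + ‖x‖ ^ 2) ^ (m + 2))⁻¹ := by positivity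
    have h1 : x i ^ 2 ≤ 1 + ‖x‖ ^ 2 := by nlinarith [coord_sq_le x i, sq_nonneg ‖x‖]
    rw [abs_of_nonneg (by positivity), one_mul, ← den_mul x]
    exact mul_le_mul_of_nonneg_right h1 hinv.le

private lemma intNormSq :
    Integrable (fun x : EuclideanSpace ℝ (Fin m) => ‖x‖ ^ 2 * ((1 + ‖x‖ ^ 2) ^ (m + 2))⁻¹) := by
  refine dom_int (m + 1) (by omega) 1 ?_ fun x => ?_
  · exact ((continuous_norm.pow 2).mul (cont_den (m + 2))).aestronglyMeasurable
  · have hinv : (0:ℝ) < ((1 + ‖x‖ ^ 2) ^ (m + 2))⁻¹ := by positivity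
    rw [abs_of_nonneg (by positivity), one_mul, ← den_mul x]
    exact mul_le_mul_of_nonneg_right (by nlinarith [sq_nonneg ‖x‖]) hinv.le

private lemma intInner (ξ : EuclideanSpace ℝ (Fin m)) :
    Integrable (fun x : EuclideanSpace ℝ (Fin m) => ⟪x, ξ⟫ * ((1 + ‖x‖ ^ 2) ^ (m + 2))⁻¹) := by
  refine dom_int (m + 1) (by omega) ‖ξ‖ ?_ fun x => ?_
  · exact ((continuous_id.inner continuous_const).mul (cont_den (m + 2))).aestronglyMeasurable
  · have hinv : (0:ℝ) < ((1 + ‖x‖ ^ 2) ^ (m + 2))⁻¹ := by positivity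
    rw [abs_mul, abs_of_nonneg hinv.le, mul_comm ‖ξ‖, ← den_mul x, mul_assoc, mul_comm _ ‖ξ‖,
      ← mul_assoc]
    refine mul_le_mul_of_nonneg_right ?_ hinv.le
    calc |⟪x, ξ⟫| ≤ ‖x‖ * ‖ξ‖ := abs_real_inner_le_norm x ξ
    _ ≤ (1 + ‖x‖ ^ 2) * ‖ξ‖ := by nlinarith [norm_nonneg x, norm_nonneg ξ, sq_nonneg (1 - ‖x‖)]

private lemma intCross (i : Fin m) (ξ : EuclideanSpace ℝ (Fin m)) :
    Integrable (fun x : EuclideanSpace ℝ (Fin m) =>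
      x i * ⟪x, ξ⟫ * ((1 + ‖x‖ ^ 2) ^ (m + 2))⁻¹) := by
  refine dom_int (m + 1) (by omega) ‖ξ‖ ?_ fun x => ?_
  · exact (((EuclideanSpace.proj i).continuous.mul
      (continuous_id.inner continuous_const)).mul (cont_den (m + 2))).aestronglyMeasurable
  · have hinv : (0:ℝ) < ((1 + ‖x‖ ^ 2) ^ (m + 2))⁻¹ := by positivity
    rw [abs_mul, abs_of_nonneg hinv.le, mul_comm ‖ξ‖, ← den_mul x, mul_assoc, mul_comm _ ‖ξ‖,
      ← mul_assoc]
    refine mul_le_mul_of_nonneg_right ?_ hinv.le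
    rw [abs_mul]
    calc |x i| * |⟪x, ξ⟫| ≤ ‖x‖ * (‖x‖ * ‖ξ‖) :=
      mul_le_mul (abs_coord_le x i) (abs_real_inner_le_norm x ξ) (abs_nonneg _) (norm_nonneg x)
    _ ≤ (1 + ‖x‖ ^ 2) * ‖ξ‖ := by nlinarith [norm_nonneg x, norm_nonneg ξ, sq_nonneg ‖x‖]

private lemma K_swap (i j : Fin m) :
    (∫ x : EuclideanSpace ℝ (Fin m), x i ^ 2 * ((1 + ‖x‖ ^ 2) ^ (m + 2))⁻¹)
      = ∫ x : EuclideanSpace ℝ (Fin m), x j ^ 2 * ((1 + ‖x‖ ^ 2) ^ (m + 2))⁻¹ := by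
  have h := integral_isometry (swapIso i j)
      (fun x : EuclideanSpace ℝ (Fin m) => x i ^ 2 * ((1 + ‖x‖ ^ 2) ^ (m + 2))⁻¹)
  rw [← h]
  congr 1
  funext x
  rw [swapIso_apply, Equiv.swap_apply_left, LinearIsometryEquiv.norm_map]

private lemma K_val (i : Fin m) :
    (m : ℝ) * ∫ x : EuclideanSpace ℝ (Fin m), x i ^ 2 * ((1 + ‖x‖ ^ 2) ^ (m + 2))⁻¹
      = (∫ x : EuclideanSpace ℝ (Fin m), ((1 + ‖x‖ ^ 2) ^ (m + 1))⁻¹)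
        - ∫ x : EuclideanSpace ℝ (Fin m), ((1 + ‖x‖ ^ 2) ^ (m + 2))⁻¹ := by
  have hsum : ∑ j : Fin m,
      (∫ x : EuclideanSpace ℝ (Fin m), x j ^ 2 * ((1 + ‖x‖ ^ 2) ^ (m + 2))⁻¹)
      = ∫ x : EuclideanSpace ℝ (Fin m), ‖x‖ ^ 2 * ((1 + ‖x‖ ^ 2) ^ (m + 2))⁻¹ := by
    rw [← integral_finset_sum _ (fun j _ => intK j)]
    congr 1
    funext x
    rw [← Finset.sum_mul, PiLp.norm_sq_eq_of_L2]
    congr 1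
    refine Finset.sum_congr rfl fun j _ => ?_
    rw [Real.norm_eq_abs, sq_abs]
  have hswap : ∀ j : Fin m,
      (∫ x : EuclideanSpace ℝ (Fin m), x j ^ 2 * ((1 + ‖x‖ ^ 2) ^ (m + 2))⁻¹)
      = ∫ x : EuclideanSpace ℝ (Fin m), x i ^ 2 * ((1 + ‖x‖ ^ 2) ^ (m + 2))⁻¹ :=
    fun j => K_swap j i
  rw [Finset.sum_congr rfl (fun j _ => hswap j), Finset.sum_const, Finset.card_univ,
    Fintype.card_fin, nsmul_eq_mul] at hsum
  rw [hsum]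
  have hsplit : (fun x : EuclideanSpace ℝ (Fin m) => ‖x‖ ^ 2 * ((1 + ‖x‖ ^ 2) ^ (m + 2))⁻¹)
      = fun x : EuclideanSpace ℝ (Fin m) =>
          ((1 + ‖x‖ ^ 2) ^ (m + 1))⁻¹ - ((1 + ‖x‖ ^ 2) ^ (m + 2))⁻¹ := by
    funext x
    have hd : (0:ℝ) < 1 + ‖x‖ ^ 2 := by positivity
    field_simp
    ring
  rw [hsplit, integral_sub (base_int (m + 1) (by omega)) (base_int (m + 2) (by omega))]

private lemma I2_pos (hm : 1 ≤ m) :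
    0 < ∫ x : EuclideanSpace ℝ (Fin m), ((1 + ‖x‖ ^ 2) ^ (m + 2))⁻¹ := by
  rw [integral_pos_iff_support_of_nonneg (fun x => by positivity) (base_int (m + 2) (by omega))]
  have hs : Function.support
      (fun x : EuclideanSpace ℝ (Fin m) => ((1 + ‖x‖ ^ 2) ^ (m + 2))⁻¹) = Set.univ := by
    ext x
    simp only [Function.mem_support, Set.mem_univ, iff_true]
    positivity
  rw [hs]
  exact isOpen_univ.measure_pos volume ⟨0, trivial⟩

private lemma P_pos (hm : 1 ≤ m) :
    0 < ∫ x : EuclideanSpace ℝ (Fin m), ‖x‖ ^ 2 * ((1 + ‖x‖ ^ 2) ^ (m + 2))⁻¹ := by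
  rw [integral_pos_iff_support_of_nonneg (fun x => by positivity) intNormSq]
  have hx0 : ‖(EuclideanSpace.single (⟨0, by omega⟩ : Fin m) (1:ℝ))‖ = 1 := by
    rw [EuclideanSpace.norm_single, norm_one]
  have hne : (EuclideanSpace.single (⟨0, by omega⟩ : Fin m) (1:ℝ)) ≠ 0 := by
    intro h
    rw [h, norm_zero] at hx0
    norm_num at hx0
  have hsub : ({(0 : EuclideanSpace ℝ (Fin m))}ᶜ : Set (EuclideanSpace ℝ (Fin m))) ⊆
      Function.support
        (fun x : EuclideanSpace ℝ (Fin m) => ‖x‖ ^ 2 * ((1 + ‖x‖ ^ 2) ^ (m + 2))⁻¹) := by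
    intro x hx
    have hxne : x ≠ 0 := hx
    have hnx : 0 < ‖x‖ := norm_pos_iff.mpr hxne
    have : (0:ℝ) < ‖x‖ ^ 2 * ((1 + ‖x‖ ^ 2) ^ (m + 2))⁻¹ := by positivity
    exact ne_of_gt this
  exact lt_of_lt_of_le (isOpen_compl_singleton.measure_pos volume ⟨_, hne⟩) (measure_mono hsub)

end Stmt8Aux

/-- With `bᵢ(x) = 2xᵢ/(1+|x|²)` for `1 ≤ i ≤ m` and
`b_{m+1}(x) = (|x|²−1)/(1+|x|²)`, if `(λ₀,ξ₀)` annihilates all the integrals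
`∫ (∇bᵢ(x)·(λ₀x+ξ₀))/(1+|x|²)ᵐ dx`, then `λ₀ = 0` and `ξ₀ = 0`. -/
theorem stmt8 (m : ℕ) (hm : 2 ≤ m) (l₀ : ℝ) (ξ₀ : EuclideanSpace ℝ (Fin m))
    (h1 : ∀ i : Fin m,
      (∫ x : EuclideanSpace ℝ (Fin m),
        ⟪gradient (fun y : EuclideanSpace ℝ (Fin m) => 2 * y i / (1 + ‖y‖ ^ 2)) x,
            l₀ • x + ξ₀⟫ / (1 + ‖x‖ ^ 2) ^ m) = 0)
    (h2 : (∫ x : EuclideanSpace ℝ (Fin m),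
        ⟪gradient (fun y : EuclideanSpace ℝ (Fin m) => (‖y‖ ^ 2 - 1) / (1 + ‖y‖ ^ 2)) x,
            l₀ • x + ξ₀⟫ / (1 + ‖x‖ ^ 2) ^ m) = 0) :
    l₀ = 0 ∧ ξ₀ = 0 := by
  have hm1 : 1 ≤ m := le_trans (by norm_num) hm
  -- Step A : l₀ = 0
  have hl : l₀ = 0 := by
    have hA : ∀ x : EuclideanSpace ℝ (Fin m),
        ⟪gradient (fun y : EuclideanSpace ℝ (Fin m) => (‖y‖ ^ 2 - 1) / (1 + ‖y‖ ^ 2)) x,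
            l₀ • x + ξ₀⟫ / (1 + ‖x‖ ^ 2) ^ m
        = 4 * l₀ * (‖x‖ ^ 2 * ((1 + ‖x‖ ^ 2) ^ (m + 2))⁻¹)
          + 4 * (⟪x, ξ₀⟫ * ((1 + ‖x‖ ^ 2) ^ (m + 2))⁻¹) := by
      intro x
      rw [inner_grad2, inner_add_right, real_inner_smul_right, real_inner_self_eq_norm_sq]
      have hd : (0:ℝ) < 1 + ‖x‖ ^ 2 := by positivity
      field_simp
      ring
    simp only [hA] at h2
    rw [integral_add (intNormSq.const_mul (4 * l₀)) ((intInner ξ₀).const_mul 4),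
      integral_const_mul, integral_const_mul] at h2
    have hodd : (∫ x : EuclideanSpace ℝ (Fin m), ⟪x, ξ₀⟫ * ((1 + ‖x‖ ^ 2) ^ (m + 2))⁻¹) = 0 := by
      refine integral_zero_of_odd (LinearIsometryEquiv.neg ℝ) _ fun x => ?_
      have hneg : (LinearIsometryEquiv.neg ℝ) x = -x := rfl
      rw [hneg, inner_neg_left, norm_neg]
      ring
    rw [hodd, mul_zero, add_zero] at h2
    have hP := P_pos (m := m) hm1
    rcases mul_eq_zero.mp h2 with h | h
    · linarith
    · exact absurd h (ne_of_gt hP)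
  subst hl
  refine ⟨rfl, ?_⟩
  -- Step B : ξ₀ = 0
  have hcoord : ∀ i : Fin m, ξ₀ i = 0 := by
    intro i
    have h := h1 i
    simp only [zero_smul, zero_add] at h
    have hB : ∀ x : EuclideanSpace ℝ (Fin m),
        ⟪gradient (fun y : EuclideanSpace ℝ (Fin m) => 2 * y i / (1 + ‖y‖ ^ 2)) x,
            ξ₀⟫ / (1 + ‖x‖ ^ 2) ^ m
        = 2 * ξ₀ i * ((1 + ‖x‖ ^ 2) ^ (m + 1))⁻¹
          - 4 * (x i * ⟪x, ξ₀⟫ * ((1 + ‖x‖ ^ 2) ^ (m + 2))⁻¹) := by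
      intro x
      rw [inner_grad1]
      have hd : (0:ℝ) < 1 + ‖x‖ ^ 2 := by positivity
      field_simp
      ring
    simp only [hB] at h
    rw [integral_sub ((base_int (m + 1) (by omega)).const_mul (2 * ξ₀ i))
      ((intCross i ξ₀).const_mul 4), integral_const_mul, integral_const_mul] at h
    -- the cross integral equals ξ₀ i times the coordinate-square integral
    have hJ : (∫ x : EuclideanSpace ℝ (Fin m), x i * ⟪x, ξ₀⟫ * ((1 + ‖x‖ ^ 2) ^ (m + 2))⁻¹)
        = ξ₀ i * ∫ x : EuclideanSpace ℝ (Fin m), x i ^ 2 * ((1 + ‖x‖ ^ 2) ^ (m + 2))⁻¹ := by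
      have hiso := integral_isometry (reflIso i)
        (fun x : EuclideanSpace ℝ (Fin m) => x i * ⟪x, ξ₀⟫ * ((1 + ‖x‖ ^ 2) ^ (m + 2))⁻¹)
      have hptw : ∀ x : EuclideanSpace ℝ (Fin m),
          (reflIso i x) i * ⟪reflIso i x, ξ₀⟫ * ((1 + ‖reflIso i x‖ ^ 2) ^ (m + 2))⁻¹
          = -(x i * ⟪x, ξ₀⟫ * ((1 + ‖x‖ ^ 2) ^ (m + 2))⁻¹)
            + 2 * ξ₀ i * (x i ^ 2 * ((1 + ‖x‖ ^ 2) ^ (m + 2))⁻¹) := by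
        intro x
        rw [refl_inner, reflIso_apply, if_pos rfl, LinearIsometryEquiv.norm_map]
        ring
      simp only [hptw] at hiso
      have hnegint : Integrable (fun x : EuclideanSpace ℝ (Fin m) =>
          -(x i * ⟪x, ξ₀⟫ * ((1 + ‖x‖ ^ 2) ^ (m + 2))⁻¹)) := (intCross i ξ₀).neg
      rw [integral_add hnegint ((intK i).const_mul (2 * ξ₀ i)),
        integral_neg, integral_const_mul] at hiso
      linarith
    rw [hJ] at h
    set K := ∫ x : EuclideanSpace ℝ (Fin m), x i ^ 2 * ((1 + ‖x‖ ^ 2) ^ (m + 2))⁻¹ with hKdef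
    set I₁ := ∫ x : EuclideanSpace ℝ (Fin m), ((1 + ‖x‖ ^ 2) ^ (m + 1))⁻¹ with hI1def
    set I₂ := ∫ x : EuclideanSpace ℝ (Fin m), ((1 + ‖x‖ ^ 2) ^ (m + 2))⁻¹ with hI2def
    have hKval : (m : ℝ) * K = I₁ - I₂ := K_val i
    have hI2 := I2_pos (m := m) hm1
    have hKnn : 0 ≤ K := integral_nonneg fun x => by positivity
    have hmr : (2:ℝ) ≤ (m:ℝ) := by exact_mod_cast hm
    have hpos : 0 < 2 * I₁ - 4 * K := by nlinarith
    have hzero : ξ₀ i * (2 * I₁ - 4 * K) = 0 := by linear_combination h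
    rcases mul_eq_zero.mp hzero with h' | h'
    · exact h'
    · exact absurd h' (ne_of_gt hpos)
  ext i
  exact hcoord i
end
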